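/- arXiv:2106.15018 — 8 statements merged into one kernel-verified Lean document; each statement's English description precedes it below -/
import Mathlib

section
/- Let P be a finite poset and d : P → ℤ be a function such that for all F₁ ≤ F₂ in P, the sum over all F with F₁ ≤ F ≤ F₂ of (-1)^{d(F)} is 0 (Euler's relation). Then the Möbius function of P satisfies μ(F₁, F₂) = (-1)^{d(F₂) - d(F₁)} for all F₁ ≤ F₂. -/
open Classical in
/-- If a finite poset `P` carries a rank-type function `d : P → ℤ` satisfying
Euler's relation (the alternating sum of `(-1)^{d F}` over any nontrivial closed
interval vanishes), then the Möbius function of `P` satisfies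
`μ(F₁,F₂) = (-1)^{d F₂ - d F₁}` for all `F₁ ≤ F₂`. -/
theorem stmt1 (P : Type) [Fintype P] [PartialOrder P] (d : P → ℤ)
    (heuler : ∀ F₁ F₂ : P, F₁ < F₂ →
      ∑ F ∈ Finset.univ.filter (fun F => F₁ ≤ F ∧ F ≤ F₂), ((-1 : ℝ) ^ d F) = 0)
    (μ : P → P → ℝ)
    (hμ₁ : ∀ s : P, μ s s = 1)
    (hμ₂ : ∀ u v : P, u < v →
      ∑ s ∈ Finset.univ.filter (fun s => u ≤ s ∧ s ≤ v), μ u s = 0) :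
    ∀ F₁ F₂ : P, F₁ ≤ F₂ → μ F₁ F₂ = (-1 : ℝ) ^ (d F₂ - d F₁) := by
  have hne : (-1:ℝ) ≠ 0 := by norm_num
  suffices key : ∀ F₂ F₁ : P, F₁ ≤ F₂ → μ F₁ F₂ = (-1 : ℝ) ^ (d F₂ - d F₁) by
    intro F₁ F₂ h; exact key F₂ F₁ h
  intro F₂
  induction F₂ using WellFoundedLT.induction with
  | _ F₂ ih =>
    intro F₁ hle
    rcases eq_or_lt_of_le hle with rfl | hlt
    · simp [hμ₁]
    · have hS := hμ₂ F₁ F₂ hlt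
      set S := Finset.univ.filter (fun s => F₁ ≤ s ∧ s ≤ F₂) with hSdef
      have hF₂ : F₂ ∈ S := by simp [hSdef, hle]
      have h1 : μ F₁ F₂ + ∑ s ∈ S.erase F₂, μ F₁ s = 0 := by
        rw [Finset.add_sum_erase S _ hF₂]; exact hS
      have h2 : (-1:ℝ) ^ (d F₂) + ∑ s ∈ S.erase F₂, (-1:ℝ) ^ (d s) = 0 := by
        rw [Finset.add_sum_erase S (fun s => (-1:ℝ) ^ (d s)) hF₂]; exact heuler F₁ F₂ hlt
      have hih : ∀ s ∈ S.erase F₂, μ F₁ s = (-1:ℝ) ^ (d s - d F₁) := by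
        intro s hs
        obtain ⟨hne', hmem⟩ := Finset.mem_erase.mp hs
        simp only [hSdef, Finset.mem_filter] at hmem
        exact ih s (lt_of_le_of_ne hmem.2.2 hne') F₁ hmem.2.1
      have hz : (-1:ℝ) ^ (d F₁) ≠ 0 := zpow_ne_zero _ hne
      have h3 : ∑ s ∈ S.erase F₂, μ F₁ s
          = (∑ s ∈ S.erase F₂, (-1:ℝ) ^ (d s)) / (-1:ℝ) ^ (d F₁) := by
        rw [Finset.sum_congr rfl hih, Finset.sum_div]
        exact Finset.sum_congr rfl (fun s _ => zpow_sub₀ hne _ _)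
      have h4 : ∑ s ∈ S.erase F₂, (-1:ℝ) ^ (d s) = -(-1:ℝ) ^ (d F₂) := by linarith
      rw [h3, h4, neg_div] at h1
      rw [zpow_sub₀ hne]
      linarith
end

section
/- Let f : {0,1}ⁿ → {0,1} be a monotone Boolean function, not identically 1, with prime implicant set P_f, and let μ be the Möbius function of the lattice U(P_f) of unions of prime implicants ordered by inclusion. Then for every x ∈ {0,1}ⁿ, f(x) = ∑_{S ∈ U(P_f), S ≠ ∅} (−μ(∅, S)) · ∏_{i ∈ S} x_i. -/
/-- `I` is an implicant of the Boolean function `f`. -/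
def IsImplicant (n : ℕ) (f : (Fin n → Bool) → Bool) (I : Finset (Fin n)) : Prop :=
  ∀ x : Fin n → Bool, (∀ i ∈ I, x i = true) → f x = true

/-- `I` is a prime implicant of `f`. -/
def IsPrimeImplicant (n : ℕ) (f : (Fin n → Bool) → Bool) (I : Finset (Fin n)) : Prop :=
  IsImplicant n f I ∧ ∀ J ⊂ I, ¬ IsImplicant n f J

open Classical in
/-- The set of prime implicants of `f`. -/
noncomputable def primeImplicants (n : ℕ) (f : (Fin n → Bool) → Bool) :
    Finset (Finset (Fin n)) :=
  Finset.univ.filter (fun I => IsPrimeImplicant n f I)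

/-- All unions of subfamilies of `A`. -/
def unionsOf (n : ℕ) (A : Finset (Finset (Fin n))) : Finset (Finset (Fin n)) :=
  A.powerset.image (fun B => B.sup id)

lemma exists_prime (n : ℕ) (f : (Fin n → Bool) → Bool) :
    ∀ (X : Finset (Fin n)), IsImplicant n f X →
    ∃ I ⊆ X, IsPrimeImplicant n f I := by
  intro X
  induction X using Finset.strongInductionOn with
  | _ X ih =>
    intro hX
    by_cases h : ∀ J ⊂ X, ¬ IsImplicant n f J
    · exact ⟨X, subset_rfl, hX, h⟩
    · push_neg at h
      obtain ⟨J, hJX, hJ⟩ := h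
      obtain ⟨I, hIJ, hI⟩ := ih J hJX hJ
      exact ⟨I, hIJ.trans hJX.subset, hI⟩

lemma mem_unionsOf {n : ℕ} {A : Finset (Finset (Fin n))} {S : Finset (Fin n)} :
    S ∈ unionsOf n A ↔ ∃ B ⊆ A, S = B.sup id := by
  simp [unionsOf, eq_comm]

lemma empty_mem_unionsOf {n : ℕ} (A : Finset (Finset (Fin n))) :
    ∅ ∈ unionsOf n A :=
  mem_unionsOf.2 ⟨∅, Finset.empty_subset _, rfl⟩

open Classical in
/-- Representation theorem: a monotone Boolean function `f`, not identically `1`,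
is represented by the polynomial whose monomials are indexed by the nonempty
unions of prime implicants, with coefficients `-μ(∅, S)` given by the Möbius
function of the lattice `U(P_f)`. -/
theorem stmt4 (n : ℕ) (f : (Fin n → Bool) → Bool) (hf : Monotone f)
    (hne : ∃ x, f x = false)
    (μ : Finset (Fin n) → Finset (Fin n) → ℝ)
    (hμ₁ : ∀ S ∈ unionsOf n (primeImplicants n f), μ S S = 1)
    (hμ₂ : ∀ S ∈ unionsOf n (primeImplicants n f),
      ∀ T ∈ unionsOf n (primeImplicants n f), S ⊂ T →
        ∑ W ∈ (unionsOf n (primeImplicants n f)).filter (fun W => S ⊆ W ∧ W ⊆ T),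
          μ S W = 0) :
    ∀ x : Fin n → Bool,
      (if f x = true then (1 : ℝ) else 0) =
        ∑ S ∈ (unionsOf n (primeImplicants n f)).erase ∅,
          (-μ ∅ S) * ∏ i ∈ S, (if x i = true then (1 : ℝ) else 0) := by
  classical
  set P := primeImplicants n f with hP
  set U := unionsOf n P with hU
  -- prime implicants are nonempty
  have hprime_ne : ∀ I ∈ P, I ≠ ∅ := by
    intro I hI hIe
    obtain ⟨y, hy⟩ := hne
    have := (Finset.mem_filter.1 hI).2.1 y (by simp [hIe])
    simp [this] at hy
  intro x
  set X : Finset (Fin n) := Finset.univ.filter (fun i => x i = true) with hX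
  have hXmem : ∀ i, i ∈ X ↔ x i = true := by intro i; simp [hX]
  -- rewrite product
  have hprod : ∀ S : Finset (Fin n),
      (∏ i ∈ S, (if x i = true then (1 : ℝ) else 0)) = if S ⊆ X then 1 else 0 := by
    intro S
    by_cases h : S ⊆ X
    · rw [if_pos h, Finset.prod_eq_one]
      intro i hi
      simp [(hXmem i).1 (h hi)]
    · rw [if_neg h]
      obtain ⟨i, hiS, hiX⟩ := Finset.not_subset.1 h
      refine Finset.prod_eq_zero hiS ?_
      have : x i ≠ true := fun hc => hiX ((hXmem i).2 hc)
      simp [this]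
  have hsum : ∑ S ∈ U.erase ∅, (-μ ∅ S) * ∏ i ∈ S, (if x i = true then (1 : ℝ) else 0)
      = ∑ S ∈ (U.erase ∅).filter (fun S => S ⊆ X), (-μ ∅ S) := by
    rw [Finset.sum_filter]
    refine Finset.sum_congr rfl fun S _ => ?_
    rw [hprod S]
    by_cases h : S ⊆ X <;> simp [h]
  rw [hsum]
  by_cases hfx : f x = true
  · -- there is a prime implicant inside X
    have hXimp : IsImplicant n f X := by
      intro y hy
      have hxy : x ≤ y := by
        intro i
        by_cases hxi : x i = true
        · simp [hxi, hy i ((hXmem i).2 hxi)]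
        · simp [Bool.not_eq_true] at hxi; simp [hxi]
      exact Bool.le_iff_imp.1 (hf hxy) hfx
    obtain ⟨I, hIX, hIprime⟩ := exists_prime n f X hXimp
    have hIP : I ∈ P := by simp [hP, primeImplicants, hIprime]
    have hIne : I ≠ ∅ := hprime_ne I hIP
    -- the top element
    set T : Finset (Fin n) := (P.filter (fun J => J ⊆ X)).sup id with hT
    have hTU : T ∈ U := by rw [hT]; exact mem_unionsOf.2 ⟨P.filter (fun J => J ⊆ X), Finset.filter_subset _ _, rfl⟩
    have hTX : T ⊆ X := by
      rw [hT]
      show (P.filter (fun J => J ⊆ X)).sup id ≤ X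
      exact Finset.sup_le fun J hJ => (Finset.mem_filter.1 hJ).2
    have hIT : I ⊆ T := by
      rw [hT]
      show id I ≤ (P.filter (fun J => J ⊆ X)).sup id
      exact Finset.le_sup (Finset.mem_filter.2 ⟨hIP, hIX⟩)
    have hTne : T ≠ ∅ := fun h => hIne (Finset.subset_empty.1 (h ▸ hIT))
    -- for W ∈ U, W ⊆ X ↔ W ⊆ T
    have hWiff : ∀ W ∈ U, (W ⊆ X ↔ W ⊆ T) := by
      intro W hW
      constructor
      · intro hWX
        obtain ⟨B, hBP, rfl⟩ := mem_unionsOf.1 hW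
        rw [hT]
        show B.sup id ≤ (P.filter (fun J => J ⊆ X)).sup id
        refine Finset.sup_le fun J hJ => ?_
        have hJX : J ⊆ X := le_trans (Finset.le_sup (f := id) hJ) hWX
        exact Finset.le_sup (f := id) (Finset.mem_filter.2 ⟨hBP hJ, hJX⟩)
      · intro h; exact h.trans hTX
    have hμ := hμ₂ ∅ (empty_mem_unionsOf P) T hTU
      (Finset.ssubset_iff_of_subset (Finset.empty_subset T) |>.2
        (by obtain ⟨i, hi⟩ := Finset.nonempty_iff_ne_empty.2 hTne; exact ⟨i, hi, by simp⟩))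
    have hfilter : U.filter (fun W => ∅ ⊆ W ∧ W ⊆ T) = U.filter (fun S => S ⊆ X) := by
      refine Finset.filter_congr fun W hW => ?_
      simp [hWiff W hW]
    rw [hfilter] at hμ
    have hmem : ∅ ∈ U.filter (fun S => S ⊆ X) :=
      Finset.mem_filter.2 ⟨empty_mem_unionsOf P, Finset.empty_subset X⟩
    rw [← Finset.add_sum_erase _ _ hmem, hμ₁ ∅ (empty_mem_unionsOf P)] at hμ
    have h2 : ∑ S ∈ (U.filter (fun S => S ⊆ X)).erase ∅, μ ∅ S = -1 := by linarith
    rw [if_pos hfx, Finset.filter_erase, Finset.sum_neg_distrib, h2]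
    norm_num
  · -- f x = false: each nonempty union is not inside X
    rw [if_neg hfx]
    symm
    refine Finset.sum_eq_zero fun S hS => ?_
    rw [Finset.mem_filter, Finset.mem_erase] at hS
    obtain ⟨⟨hSne, hSU⟩, hSX⟩ := hS
    obtain ⟨B, hBP, rfl⟩ := mem_unionsOf.1 hSU
    obtain ⟨J, hJB⟩ : B.Nonempty := by
      by_contra h
      exact hSne (by simp [Finset.not_nonempty_iff_eq_empty.1 h])
    have hJimp : IsImplicant n f J := ((Finset.mem_filter.1 (hBP hJB)).2).1
    have : f x = true := hJimp x fun i hi =>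
      (hXmem i).1 (((Finset.le_sup (f := id) hJB).trans hSX) hi)
    exact absurd this hfx
end

section
/- Let B = H₁⁺ ∩ H₂⁺ ∩ … ∩ H_m⁺ ⊆ ℝⁿ be a bounded intersection of halfspaces (a convex polytope). A nonempty set F ⊆ ℝⁿ is a face of B if and only if F = ⋂_{i∈M} Hᵢ ∩ ⋂_{i∉M} Hᵢ⁺ for some M ⊆ [m]. -/
open Matrix

private lemma sum_dot {ι : Type*} {n : ℕ} (s : Finset ι) (a : ι → Fin n → ℝ)
    (x : Fin n → ℝ) : (∑ i ∈ s, a i) ⬝ᵥ x = ∑ i ∈ s, a i ⬝ᵥ x := by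
  simp only [dotProduct, Finset.sum_apply, Finset.sum_mul]
  exact Finset.sum_comm

private lemma dot_sum {ι : Type*} {n : ℕ} (s : Finset ι) (v : Fin n → ℝ)
    (z : ι → Fin n → ℝ) : v ⬝ᵥ (∑ i ∈ s, z i) = ∑ i ∈ s, v ⬝ᵥ z i := by
  simp only [dotProduct, Finset.sum_apply, Finset.mul_sum]
  exact Finset.sum_comm

private lemma dot_linear {n : ℕ} (v : Fin n → ℝ) :
    IsLinearMap ℝ (fun x : Fin n → ℝ => v ⬝ᵥ x) :=
  ⟨fun x y => dotProduct_add v x y, fun r x => dotProduct_smul r v x⟩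

open Matrix in
/-- Faces of a polytope `B = H₁⁺ ∩ … ∩ H_m⁺`: a nonempty `F` is a face of `B`
(i.e. cut out by a hyperplane supporting `B`, including `B` itself) iff it is
obtained from the defining system by turning the inequalities indexed by some
`M ⊆ [m]` into equalities. -/
theorem stmt9 (n m : ℕ) (a : Fin m → (Fin n → ℝ)) (b : Fin m → ℝ)
    (B : Set (Fin n → ℝ)) (hB : B = {x | ∀ i, b i ≤ a i ⬝ᵥ x})
    (hbdd : Bornology.IsBounded B)
    (F : Set (Fin n → ℝ)) (hF : F.Nonempty) :
    (∃ (c : Fin n → ℝ) (d : ℝ), (∀ x ∈ B, d ≤ c ⬝ᵥ x) ∧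
        F = {x ∈ B | c ⬝ᵥ x = d}) ↔
      ∃ M : Finset (Fin m),
        F = {x | (∀ i ∈ M, a i ⬝ᵥ x = b i) ∧ ∀ i ∉ M, b i ≤ a i ⬝ᵥ x} := by
  classical
  have hBconv : Convex ℝ B := by
    rw [hB]
    have : {x : Fin n → ℝ | ∀ i, b i ≤ a i ⬝ᵥ x} = ⋂ i, {x | b i ≤ a i ⬝ᵥ x} := by
      ext x; simp [Set.mem_iInter]
    rw [this]
    exact convex_iInter fun i => convex_halfSpace_ge (dot_linear (a i)) (b i)
  constructor
  · rintro ⟨c, d, hcd, hFe⟩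
    have hFconv : Convex ℝ F := by
      rw [hFe]
      exact hBconv.inter (convex_hyperplane (dot_linear c) d)
    have hFB : F ⊆ B := by rw [hFe]; exact fun x hx => hx.1
    have hFd : ∀ x ∈ F, c ⬝ᵥ x = d := by rw [hFe]; exact fun x hx => hx.2
    have hFBi : ∀ x ∈ F, ∀ i, b i ≤ a i ⬝ᵥ x := by
      intro x hx i
      have := hFB hx; rw [hB] at this; exact this i
    set M : Finset (Fin m) := Finset.univ.filter (fun i => ∀ x ∈ F, a i ⬝ᵥ x = b i)
      with hM
    refine ⟨M, ?_⟩
    -- witnesses with strict inequality off M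
    have hwit : ∀ i : Fin m, ∃ x ∈ F, i ∉ M → b i < a i ⬝ᵥ x := by
      intro i
      by_cases hi : i ∈ M
      · exact ⟨hF.choose, hF.choose_spec, fun h => absurd hi h⟩
      · have : ¬∀ x ∈ F, a i ⬝ᵥ x = b i := by
          intro h
          exact hi (by simp only [hM, Finset.mem_filter]; exact ⟨Finset.mem_univ i, h⟩)
        push_neg at this
        obtain ⟨x, hxF, hne⟩ := this
        exact ⟨x, hxF, fun _ => lt_of_le_of_ne (hFBi x hxF i) (Ne.symm hne)⟩
    choose g hgF hglt using hwit
    -- a point of F with all inequalities off M strict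
    have hx₀ : ∃ x₀ ∈ F, ∀ i ∉ M, b i < a i ⬝ᵥ x₀ := by
      rcases Finset.eq_empty_or_nonempty Mᶜ with hs | hs
      · refine ⟨hF.choose, hF.choose_spec, fun i hi => ?_⟩
        exact absurd (hs ▸ Finset.mem_compl.mpr hi) (Finset.notMem_empty i)
      · set x₀ := Mᶜ.centerMass (fun _ => (1 : ℝ)) g with hx₀def
        have hcard : (0 : ℝ) < ∑ _i ∈ Mᶜ, (1 : ℝ) := by
          simp [Finset.card_pos.mpr hs]
        refine ⟨x₀, hFconv.centerMass_mem (fun _ _ => zero_le_one) hcard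
          (fun i _ => hgF i), ?_⟩
        intro j hj
        have hx₀eq : x₀ = ((Mᶜ.card : ℝ))⁻¹ • ∑ i ∈ Mᶜ, g i := by
          rw [hx₀def, Finset.centerMass]
          simp
        have hdot : a j ⬝ᵥ x₀ = ((Mᶜ.card : ℝ))⁻¹ * ∑ i ∈ Mᶜ, a j ⬝ᵥ g i := by
          rw [hx₀eq, dotProduct_smul, dot_sum, smul_eq_mul]
        have hsum : (Mᶜ.card : ℝ) * b j < ∑ i ∈ Mᶜ, a j ⬝ᵥ g i := by
          have : ∑ _i ∈ Mᶜ, b j < ∑ i ∈ Mᶜ, a j ⬝ᵥ g i := by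
            refine Finset.sum_lt_sum (fun i _ => hFBi (g i) (hgF i) j)
              ⟨j, Finset.mem_compl.mpr hj, hglt j hj⟩
          simpa using this
        have hcpos : (0 : ℝ) < (Mᶜ.card : ℝ) := by
          exact_mod_cast Finset.card_pos.mpr hs
        rw [hdot]
        rw [lt_inv_mul_iff₀ hcpos]
        exact hsum
    obtain ⟨x₀, hx₀F, hx₀strict⟩ := hx₀
    have hx₀eq : ∀ i ∈ M, a i ⬝ᵥ x₀ = b i := by
      intro i hi
      simp only [hM, Finset.mem_filter] at hi
      exact hi.2 x₀ hx₀F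
    ext x
    constructor
    · intro hxF
      refine ⟨fun i hi => ?_, fun i _ => hFBi x hxF i⟩
      simp only [hM, Finset.mem_filter] at hi
      exact hi.2 x hxF
    · rintro ⟨heq, hge⟩
      have hxB : x ∈ B := by
        rw [hB]; intro i
        by_cases hi : i ∈ M
        · exact le_of_eq (heq i hi).symm
        · exact hge i hi
      -- perturbation: z t = (1+t) • x₀ - t • x
      have hdz : ∀ (v : Fin n → ℝ) (t : ℝ),
          v ⬝ᵥ ((1 + t) • x₀ - t • x) = v ⬝ᵥ x₀ + t * (v ⬝ᵥ x₀ - v ⬝ᵥ x) := by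
        intro v t
        rw [dotProduct_sub, dotProduct_smul, dotProduct_smul, smul_eq_mul, smul_eq_mul]
        ring
      have hevB : ∀ᶠ t : ℝ in nhdsWithin 0 (Set.Ioi 0),
          ((1 + t) • x₀ - t • x) ∈ B := by
        have hall : ∀ i : Fin m, ∀ᶠ t : ℝ in nhdsWithin 0 (Set.Ioi 0),
            b i ≤ a i ⬝ᵥ ((1 + t) • x₀ - t • x) := by
          intro i
          by_cases hi : i ∈ M
          · refine Filter.Eventually.of_forall fun t => ?_
            rw [hdz, hx₀eq i hi, heq i hi]
            simp
          · have hcont : Continuous fun t : ℝ =>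
                a i ⬝ᵥ x₀ + t * (a i ⬝ᵥ x₀ - a i ⬝ᵥ x) := by fun_prop
            have h0 : b i < a i ⬝ᵥ x₀ + (0 : ℝ) * (a i ⬝ᵥ x₀ - a i ⬝ᵥ x) := by
              simpa using hx₀strict i hi
            have := (continuousAt_const (y := b i)).eventually_lt
              hcont.continuousAt h0
            filter_upwards [nhdsWithin_le_nhds this] with t ht
            rw [hdz]
            exact le_of_lt ht
        rw [hB]
        have := (Filter.eventually_all_finite (Set.finite_univ (α := Fin m))).mpr
          (fun i _ => hall i)
        filter_upwards [this] with t ht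
        exact fun i => ht i (Set.mem_univ i)
      have hevle : ∀ᶠ t : ℝ in nhdsWithin 0 (Set.Ioi 0),
          d ≤ c ⬝ᵥ ((1 + t) • x₀ - t • x) :=
        hevB.mono fun t ht => hcd _ ht
      have hpos : ∀ᶠ t : ℝ in nhdsWithin 0 (Set.Ioi 0), (0 : ℝ) < t :=
        eventually_mem_nhdsWithin
      obtain ⟨t, htle, htpos⟩ := (hevle.and hpos).exists
      rw [hdz, hFd x₀ hx₀F] at htle
      -- d ≤ d + t * (d - c ⬝ᵥ x)  ⟹  c ⬝ᵥ x ≤ d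
      have hle : c ⬝ᵥ x ≤ d := by nlinarith
      have hge' : d ≤ c ⬝ᵥ x := hcd x hxB
      rw [hFe]
      exact ⟨hxB, le_antisymm hle hge'⟩
  · rintro ⟨M, hFe⟩
    refine ⟨∑ i ∈ M, a i, ∑ i ∈ M, b i, ?_, ?_⟩
    · intro x hx
      rw [sum_dot]
      rw [hB] at hx
      exact Finset.sum_le_sum fun i _ => hx i
    · rw [hFe]
      ext x
      constructor
      · rintro ⟨heq, hge⟩
        refine ⟨?_, ?_⟩
        · rw [hB]; intro i
          by_cases hi : i ∈ M
          · exact le_of_eq (heq i hi).symm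
          · exact hge i hi
        · rw [sum_dot]
          exact Finset.sum_congr rfl fun i hi => heq i hi
      · rintro ⟨hxB, hsum⟩
        rw [hB] at hxB
        rw [sum_dot] at hsum
        have heq : ∀ i ∈ M, a i ⬝ᵥ x = b i := by
          have := (Finset.sum_eq_sum_iff_of_le (fun i (_ : i ∈ M) => hxB i)).mp hsum.symm
          exact fun i hi => (this i hi).symm
        exact ⟨heq, fun i _ => hxB i⟩
end

section
/- Let G be a finite DAG with unique source s and unique sink t, and let H, H' be unions of s-t paths with H ⊆ H' a covering relation in the lattice U(P_G) (i.e., H ⊊ H' and no union of paths lies strictly between them). Then Δ = H' ∖ H is an ear of H': a directed path whose internal vertices have no other adjacent arcs in H'. Consequently D(H') = D(H) + 1, where D(K) = |K| − |internal vertices of K| − 1. -/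
/-- `l` is a directed path from `s` to `t` in the graph with arc set `E`,
source map `src` and target map `tgt`, given as a nonempty list of consecutive arcs. -/
def IsPathFrom {V E : Type} (src tgt : E → V) (s t : V) (l : List E) : Prop :=
  l ≠ [] ∧ (∀ e ∈ l.head?, src e = s) ∧ (∀ e ∈ l.getLast?, tgt e = t) ∧
    l.Chain' (fun e f => tgt e = src f)

/-- The arc sets of directed paths from `s` to `t`. -/
def pathEdgeSets {V E : Type} [DecidableEq E] (src tgt : E → V) (s t : V) :
    Set (Finset E) :=
  {P | ∃ l : List E, IsPathFrom src tgt s t l ∧ l.Nodup ∧ P = l.toFinset}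

/-- The arc sets which are unions of arc sets of `s`-`t` paths. -/
def unionOfPaths {V E : Type} [DecidableEq E] (src tgt : E → V) (s t : V) :
    Set (Finset E) :=
  {H | ∃ Ps : Set (Finset E), Ps ⊆ pathEdgeSets src tgt s t ∧ (H : Set E) = ⋃ p ∈ Ps, (p : Set E)}

/-- The graph is acyclic: no directed cycles. -/
def IsAcyclicDigraph {V E : Type} (src tgt : E → V) : Prop :=
  ∀ v : V, ¬ Relation.TransGen (fun a b => ∃ e, src e = a ∧ tgt e = b) v v

/-- `s` is the unique source: exactly the vertices with no incoming arc are `s`. -/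
def IsUniqueSource {V E : Type} (src tgt : E → V) (s : V) : Prop :=
  ∀ v : V, (¬ ∃ e, tgt e = v) ↔ v = s

/-- `t` is the unique sink: exactly the vertices with no outgoing arc are `t`. -/
def IsUniqueSink {V E : Type} (src tgt : E → V) (t : V) : Prop :=
  ∀ v : V, (¬ ∃ e, src e = v) ↔ v = t

open Classical in
/-- The set of unit `s`-`t` flows supported on `K`. -/
noncomputable def flowSet {V E : Type} [Fintype E] (src tgt : E → V) (s t : V)
    (K : Set E) : Set (E → ℝ) :=
  {f | (∀ e, 0 ≤ f e) ∧ (∀ e, e ∉ K → f e = 0) ∧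
    (∑ e ∈ Finset.univ.filter (fun e => src e = s), f e = 1) ∧
    ∀ v : V, v ≠ s → v ≠ t →
      ∑ e ∈ Finset.univ.filter (fun e => tgt e = v), f e =
        ∑ e ∈ Finset.univ.filter (fun e => src e = v), f e}

open Classical in
/-- `D(K) = |K| - |V(K) \ {s,t}| - 1` where `V(K)` is the set of endpoints of arcs of `K`. -/
noncomputable def Dval {V E : Type} [Fintype V] [DecidableEq E] (src tgt : E → V)
    (s t : V) (K : Finset E) : ℤ :=
  (K.card : ℤ) - ((K.image src ∪ K.image tgt) \ {s, t}).card - 1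

section Aux
variable {V E : Type} {src tgt : E → V}

private lemma chain_step {l : List E} {a : V} (ha : ∀ e ∈ l.head?, src e = a)
    (hc : l.Chain' (fun e f => tgt e = src f)) :
    List.Chain (fun a b => ∃ e, src e = a ∧ tgt e = b) a (l.map tgt) := by
  induction l generalizing a with
  | nil => exact List.IsChain.singleton _
  | cons e l ih =>
    rw [List.Chain', List.isChain_cons] at hc
    simp only [List.Chain, List.map_cons, List.isChain_cons_cons]
    exact ⟨⟨e, ha e rfl, rfl⟩, ih (fun f hf => (hc.1 f hf).symm) hc.2⟩

private lemma nodup_vertex (hacyc : IsAcyclicDigraph src tgt) {l : List E} {a : V}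
    (ha : ∀ e ∈ l.head?, src e = a) (hc : l.Chain' (fun e f => tgt e = src f)) :
    (a :: l.map tgt).Nodup := by
  have h2 : List.Chain (Relation.TransGen (fun a b => ∃ e, src e = a ∧ tgt e = b)) a
      (l.map tgt) := List.IsChain.imp (fun ⦃a b⦄ h => Relation.TransGen.single h) (chain_step ha hc)
  have : IsTrans V (Relation.TransGen (fun a b => ∃ e, src e = a ∧ tgt e = b)) :=
    ⟨fun _ _ _ => Relation.TransGen.trans⟩
  have hp := List.isChain_iff_pairwise.mp h2
  refine hp.imp ?_
  intro x y h hxy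
  exact hacyc x (hxy ▸ h)

private lemma nodup_map_tgt (hacyc : IsAcyclicDigraph src tgt) {l : List E}
    (hc : l.Chain' (fun e f => tgt e = src f)) : (l.map tgt).Nodup := by
  cases l with
  | nil => simp
  | cons e l' =>
    exact (nodup_vertex hacyc (a := src e) (fun f hf => by
      simp only [List.head?_cons, Option.mem_def, Option.some.injEq] at hf
      rw [← hf]) hc).of_cons

private lemma nodup_arcs (hacyc : IsAcyclicDigraph src tgt) {l : List E}
    (hc : l.Chain' (fun e f => tgt e = src f)) : l.Nodup :=
  (nodup_map_tgt hacyc hc).of_map tgt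

private lemma isPath_append {s u t' : V} {p q : List E}
    (hp : IsPathFrom src tgt s u p) (hq : IsPathFrom src tgt u t' q) :
    IsPathFrom src tgt s t' (p ++ q) := by
  obtain ⟨hpne, hph, hpl, hpc⟩ := hp
  obtain ⟨hqne, hqh, hql, hqc⟩ := hq
  refine ⟨by simp [hpne], ?_, ?_, ?_⟩
  · intro e he
    rw [List.head?_append] at he
    obtain ⟨x, p', rfl⟩ := List.exists_cons_of_ne_nil hpne
    exact hph e he
  · intro e he
    rw [List.getLast?_append, List.getLast?_eq_getLast hqne] at he
    have he' : q.getLast hqne = e := by simpa using he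
    apply hql
    rw [List.getLast?_eq_getLast hqne, Option.mem_def, Option.some.injEq]
    exact he'
  · rw [List.Chain', List.isChain_append]
    exact ⟨hpc, hqc, fun x hx y hy => (hpl x hx).trans (hqh y hy).symm⟩

private lemma isPath_prefix {s t' : V} {a b : List E}
    (h : IsPathFrom src tgt s t' (a ++ b)) (ha : a ≠ []) :
    IsPathFrom src tgt s (tgt (a.getLast ha)) a ∧
      ∀ y ∈ b.head?, src y = tgt (a.getLast ha) := by
  obtain ⟨hne, hh, hl, hc⟩ := h
  rw [List.Chain', List.isChain_append] at hc
  refine ⟨⟨ha, ?_, ?_, hc.1⟩, ?_⟩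
  · intro e he
    apply hh
    rw [List.head?_append]
    obtain ⟨x, a', rfl⟩ := List.exists_cons_of_ne_nil ha
    exact he
  · intro e he
    rw [List.getLast?_eq_getLast ha, Option.mem_def, Option.some.injEq] at he
    rw [← he]
  · intro y hy
    exact (hc.2.2 _ (List.getLast?_eq_getLast ha) y hy).symm

private lemma isPath_suffix {s t' : V} {a b : List E}
    (h : IsPathFrom src tgt s t' (a ++ b)) (hb : b ≠ []) :
    IsPathFrom src tgt (src (b.head hb)) t' b ∧
      ∀ x ∈ a.getLast?, tgt x = src (b.head hb) := by
  obtain ⟨hne, hh, hl, hc⟩ := h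
  rw [List.Chain', List.isChain_append] at hc
  have hbh : b.head? = some (b.head hb) := List.head?_eq_head hb
  refine ⟨⟨hb, ?_, ?_, hc.2.1⟩, ?_⟩
  · intro e he
    rw [hbh, Option.mem_def, Option.some.injEq] at he
    rw [← he]
  · intro e he
    rw [List.getLast?_eq_getLast hb, Option.mem_def, Option.some.injEq] at he
    apply hl
    rw [List.getLast?_append, List.getLast?_eq_getLast hb]
    simpa using he
  · intro x hx
    exact hc.2.2 x hx _ hbh

private lemma mem_unionOfPaths_iff [DecidableEq E] {s t' : V} {H : Finset E} :
    H ∈ unionOfPaths src tgt s t' ↔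
      ∀ e ∈ H, ∃ P ∈ pathEdgeSets src tgt s t', e ∈ P ∧ P ⊆ H := by
  constructor
  · rintro ⟨Ps, hPs, hU⟩ e he
    have h1 : (e : E) ∈ (H : Set E) := he
    rw [hU] at h1
    simp only [Set.mem_iUnion, Finset.mem_coe, exists_prop] at h1
    obtain ⟨p, hp, hep⟩ := h1
    refine ⟨p, hPs hp, hep, fun x hx => ?_⟩
    have : (x : E) ∈ (H : Set E) := by
      rw [hU]
      simp only [Set.mem_iUnion, Finset.mem_coe, exists_prop]
      exact ⟨p, hp, hx⟩
    exact this
  · intro h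
    refine ⟨{P | P ∈ pathEdgeSets src tgt s t' ∧ P ⊆ H}, fun P hP => hP.1, ?_⟩
    ext x
    simp only [Set.mem_iUnion, Finset.mem_coe, Set.mem_setOf_eq, exists_prop]
    constructor
    · intro hx
      obtain ⟨P, hP, hxP, hPH⟩ := h x hx
      exact ⟨P, ⟨hP, hPH⟩, hxP⟩
    · rintro ⟨P, ⟨_, hPH⟩, hxP⟩
      exact hPH hxP

private lemma union_path_mem [DecidableEq E] {s t' : V}
    (hacyc : IsAcyclicDigraph src tgt) {H : Finset E} {l : List E}
    (hH : H ∈ unionOfPaths src tgt s t') (hl : IsPathFrom src tgt s t' l) :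
    H ∪ l.toFinset ∈ unionOfPaths src tgt s t' := by
  rw [mem_unionOfPaths_iff] at hH ⊢
  intro e he
  rcases Finset.mem_union.mp he with h | h
  · obtain ⟨P, hP, heP, hPH⟩ := hH e h
    exact ⟨P, hP, heP, hPH.trans Finset.subset_union_left⟩
  · exact ⟨l.toFinset, ⟨l, hl, nodup_arcs hacyc hl.2.2.2, rfl⟩, h, Finset.subset_union_right⟩

private lemma exists_path_through [DecidableEq E] {s t' : V} {H : Finset E}
    (hH : H ∈ unionOfPaths src tgt s t') {e : E} (he : e ∈ H) :
    ∃ l, IsPathFrom src tgt s t' l ∧ e ∈ l ∧ l.toFinset ⊆ H := by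
  rw [mem_unionOfPaths_iff] at hH
  obtain ⟨P, ⟨l, hl, _, rfl⟩, heP, hPH⟩ := hH e he
  exact ⟨l, hl, List.mem_toFinset.mp heP, hPH⟩

private lemma path_to_tgt [DecidableEq E] {s t' : V} {H : Finset E}
    (hH : H ∈ unionOfPaths src tgt s t') {e : E} (he : e ∈ H) :
    ∃ p, IsPathFrom src tgt s (tgt e) p ∧ p.toFinset ⊆ H := by
  obtain ⟨l, hl, hel, hlH⟩ := exists_path_through hH he
  obtain ⟨l1, l2, rfl⟩ := List.append_of_mem hel
  have h2 : l1 ++ e :: l2 = (l1 ++ [e]) ++ l2 := by simp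
  rw [h2] at hl hlH
  have hne : l1 ++ [e] ≠ [] := by simp
  have hp := (isPath_prefix hl hne).1
  have hg : (l1 ++ [e]).getLast hne = e := by
    rw [List.getLast_append]
    simp
  rw [hg] at hp
  refine ⟨l1 ++ [e], hp, fun x hx => hlH ?_⟩
  rw [List.toFinset_append]
  exact Finset.mem_union_left _ hx

private lemma path_from_src [DecidableEq E] {s t' : V} {H : Finset E}
    (hH : H ∈ unionOfPaths src tgt s t') {e : E} (he : e ∈ H) :
    ∃ q, IsPathFrom src tgt (src e) t' q ∧ q.toFinset ⊆ H := by
  obtain ⟨l, hl, hel, hlH⟩ := exists_path_through hH he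
  obtain ⟨l1, l2, rfl⟩ := List.append_of_mem hel
  have hne : e :: l2 ≠ [] := by simp
  have hq := (isPath_suffix hl hne).1
  have hg : (e :: l2).head hne = e := rfl
  rw [hg] at hq
  refine ⟨e :: l2, hq, fun x hx => hlH ?_⟩
  rw [List.toFinset_append]
  exact Finset.mem_union_right _ hx

private lemma dropLast_map_tgt_eq {l : List E}
    (hc : l.Chain' (fun e f => tgt e = src f)) :
    l.dropLast.map tgt = l.tail.map src := by
  induction l with
  | nil => rfl
  | cons e l ih =>
    cases l with
    | nil => rfl
    | cons f l' =>
      rw [List.Chain', List.isChain_cons_cons] at hc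
      simp only [List.dropLast_cons₂, List.map_cons, List.tail_cons]
      rw [hc.1]
      congr 1
      exact ih hc.2

end Aux

/-- If `H ⊆ H'` is a covering relation in the lattice `U(P_G)` of unions of
`s`-`t` paths of a finite DAG with unique source `s` and unique sink `t`, then
`Δ = H' \ H` is an ear of `H'`: a directed path whose internal vertices have no
other adjacent arcs in `H'`; consequently `D(H') = D(H) + 1`. -/
theorem stmt10 (V E : Type) [Fintype V] [Fintype E] [DecidableEq E]
    (src tgt : E → V) (s t : V)
    (hacyc : IsAcyclicDigraph src tgt)
    (hs : IsUniqueSource src tgt s) (ht : IsUniqueSink src tgt t)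
    (H H' : Finset E)
    (hH : H ∈ unionOfPaths src tgt s t) (hH' : H' ∈ unionOfPaths src tgt s t)
    (hsub : H ⊂ H')
    (hcov : ∀ W ∈ unionOfPaths src tgt s t, H ⊂ W → W ⊆ H' → W = H') :
    (∃ l : List E, l ≠ [] ∧ l.Nodup ∧ l.Chain' (fun e f => tgt e = src f) ∧
      l.toFinset = H' \ H ∧
      ∀ e ∈ l.dropLast, ∀ e' ∈ H', (src e' = tgt e ∨ tgt e' = tgt e) → e' ∈ l) ∧
    Dval src tgt s t H' = Dval src tgt s t H + 1 := by
  classical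
  obtain ⟨e0, he0', he0⟩ := Finset.exists_of_ssubset hsub
  obtain ⟨l, hl, he0l, hlH'⟩ := exists_path_through hH' he0'
  have hlc := hl.2.2.2
  have hln : l.Nodup := nodup_arcs hacyc hlc
  -- workhorse: no s-t path inside H' can pick up a new arc while missing one of H'∖H
  have key : ∀ r' : List E, IsPathFrom src tgt s t r' → (∀ x ∈ r', x ∈ H') →
      (∃ g ∈ r', g ∉ H) → ∀ e1 ∈ H', e1 ∉ H → e1 ∉ r' → False := by
    intro r' hr' hsubr hg e1 he1H' he1H he1r
    obtain ⟨g, hgr, hgH⟩ := hg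
    have hcv := hcov (H ∪ r'.toFinset) (union_path_mem hacyc hH hr')
      ((Finset.ssubset_iff_of_subset Finset.subset_union_left).mpr
        ⟨g, Finset.mem_union_right _ (List.mem_toFinset.mpr hgr), hgH⟩)
      (Finset.union_subset hsub.1 (fun x hx => hsubr x (List.mem_toFinset.mp hx)))
    rw [← hcv] at he1H'
    rcases Finset.mem_union.mp he1H' with h | h
    · exact he1H h
    · exact he1r (List.mem_toFinset.mp h)
  have hHeq : H' = H ∪ l.toFinset := by
    refine (hcov _ (union_path_mem hacyc hH hl) ?_ ?_).symm
    · exact (Finset.ssubset_iff_of_subset Finset.subset_union_left).mpr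
        ⟨e0, Finset.mem_union_right _ (List.mem_toFinset.mpr he0l), he0⟩
    · exact Finset.union_subset hsub.1 hlH'
  -- decomposition l = l1 ++ m ++ l2
  set l1 := l.takeWhile (fun x => decide (x ∈ H)) with hl1def
  set r := l.dropWhile (fun x => decide (x ∈ H)) with hrdef
  have hlr : l1 ++ r = l := by
    rw [hl1def, hrdef]; exact List.takeWhile_append_dropWhile
  have hl1mem : ∀ x ∈ l1, x ∈ H := by
    intro x hx
    rw [hl1def] at hx
    have h2 := List.mem_takeWhile_imp hx
    exact of_decide_eq_true h2
  have hrne : r ≠ [] := by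
    intro h
    rw [h, List.append_nil] at hlr
    exact he0 (hl1mem e0 (by rw [hlr]; exact he0l))
  set m := r.takeWhile (fun x => decide (x ∉ H)) with hmdef
  set l2 := r.dropWhile (fun x => decide (x ∉ H)) with hl2def
  have hmr : m ++ l2 = r := by
    rw [hmdef, hl2def]; exact List.takeWhile_append_dropWhile
  have hldec : l = l1 ++ (m ++ l2) := by rw [hmr, hlr]
  have hmmem : ∀ x ∈ m, x ∉ H := by
    intro x hx
    rw [hmdef] at hx
    have h2 := List.mem_takeWhile_imp hx
    exact of_decide_eq_true h2
  have hmne : m ≠ [] := by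
    obtain ⟨x, r', hx⟩ := List.exists_cons_of_ne_nil hrne
    have hxH : x ∉ H := by
      have h := List.head?_dropWhile_not (fun x => decide (x ∈ H)) l
      rw [← hrdef, hx] at h
      simpa using h
    rw [hmdef, hx]
    simp [List.takeWhile_cons, hxH]
  have hln' : (l1 ++ (m ++ l2)).Nodup := by rw [← hldec]; exact hln
  rw [List.nodup_append'] at hln'
  obtain ⟨hl1nd, hml2, hdisj1⟩ := hln'
  rw [List.nodup_append'] at hml2
  obtain ⟨hmnd, hl2nd, hdisjm2⟩ := hml2
  -- the tail part l2 consists of arcs of H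
  have hl2mem : ∀ x ∈ l2, x ∈ H := by
    by_contra hcon
    push_neg at hcon
    obtain ⟨g, hgl2, hgH⟩ := hcon
    obtain ⟨f, b, hfb⟩ := List.exists_cons_of_ne_nil (List.ne_nil_of_mem hgl2)
    have hfH : f ∈ H := by
      have h := List.head?_dropWhile_not (fun x => decide (x ∉ H)) r
      rw [← hl2def, hfb] at h
      simpa using h
    have hgb : g ∈ b := by
      rcases List.mem_cons.mp (by rw [← hfb]; exact hgl2) with h | h
      · exact absurd (h ▸ hfH) hgH
      · exact h
    have hbne : b ≠ [] := List.ne_nil_of_mem hgb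
    have hl' : IsPathFrom src tgt s t ((l1 ++ (m ++ [f])) ++ b) := by
      have heq : (l1 ++ (m ++ [f])) ++ b = l := by rw [hldec, hfb]; simp
      rw [heq]; exact hl
    obtain ⟨hbpath, hjunc⟩ := isPath_suffix hl' hbne
    have hjf : tgt f = src (b.head hbne) := by
      apply hjunc
      have : (l1 ++ (m ++ [f])).getLast? = some f := by
        rw [List.getLast?_append]
        have : (m ++ [f]).getLast? = some f := List.getLast?_concat
        rw [this]; rfl
      rw [this]; rfl
    obtain ⟨p, hp, hpH⟩ := path_to_tgt hH hfH
    rw [hjf] at hp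
    have hpath := isPath_append hp hbpath
    refine key _ hpath ?_ ⟨g, List.mem_append.mpr (Or.inr hgb), hgH⟩
      (m.head hmne) ?_ (hmmem _ (List.head_mem hmne)) ?_
    · intro x hx
      rcases List.mem_append.mp hx with h | h
      · exact hsub.1 (hpH (List.mem_toFinset.mpr h))
      · refine hlH' (List.mem_toFinset.mpr ?_)
        rw [hldec, hfb]
        exact List.mem_append.mpr (Or.inr (List.mem_append.mpr (Or.inr
          (List.mem_cons_of_mem _ h))))
    · refine hlH' (List.mem_toFinset.mpr ?_)
      rw [hldec]
      exact List.mem_append.mpr (Or.inr (List.mem_append.mpr (Or.inl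
        (List.head_mem hmne))))
    · intro hmem
      rcases List.mem_append.mp hmem with h | h
      · exact hmmem _ (List.head_mem hmne) (hpH (List.mem_toFinset.mpr h))
      · exact (List.disjoint_left.mp hdisjm2) (List.head_mem hmne)
          (by rw [hfb]; exact List.mem_cons_of_mem _ h)
  -- m.toFinset = H' \ H
  have hmΔ : m.toFinset = H' \ H := by
    ext x
    rw [List.mem_toFinset, Finset.mem_sdiff, hHeq]
    constructor
    · intro hx
      refine ⟨Finset.mem_union_right _ (List.mem_toFinset.mpr ?_), hmmem x hx⟩
      rw [hldec]
      exact List.mem_append.mpr (Or.inr (List.mem_append.mpr (Or.inl hx)))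
    · rintro ⟨hx', hxH⟩
      rcases Finset.mem_union.mp hx' with h | h
      · exact absurd h hxH
      · have hxl := List.mem_toFinset.mp h
        rw [hldec] at hxl
        rcases List.mem_append.mp hxl with h1 | h1
        · exact absurd (hl1mem x h1) hxH
        · rcases List.mem_append.mp h1 with h2 | h2
          · exact h2
          · exact absurd (hl2mem x h2) hxH
  have hmc : m.Chain' (fun e f => tgt e = src f) := by
    have hcc := hlc
    rw [hldec, List.Chain', List.isChain_append, List.isChain_append] at hcc
    exact hcc.2.1.1
  -- the ear property
  have hear : ∀ e ∈ m.dropLast, ∀ e' ∈ H', (src e' = tgt e ∨ tgt e' = tgt e) → e' ∈ m := by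
    intro e he e' he'H' hadj
    by_contra he'm
    have heM : e ∈ m := (List.dropLast_sublist m).subset he
    have he'H : e' ∈ H := by
      rw [hHeq] at he'H'
      rcases Finset.mem_union.mp he'H' with h | h
      · exact h
      · have hxl := List.mem_toFinset.mp h
        rw [hldec] at hxl
        rcases List.mem_append.mp hxl with h1 | h1
        · exact hl1mem _ h1
        · rcases List.mem_append.mp h1 with h2 | h2
          · exact absurd h2 he'm
          · exact hl2mem _ h2
    obtain ⟨mp, ms0, hms0⟩ := List.append_of_mem he
    have hmdecomp : m = mp ++ e :: (ms0 ++ [m.getLast hmne]) := by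
      conv_lhs => rw [← List.dropLast_append_getLast hmne]
      rw [hms0]
      simp
    set ms := ms0 ++ [m.getLast hmne] with hmsdef
    have hmsne : ms ≠ [] := by simp [hmsdef]
    have hldec2 : l = (l1 ++ (mp ++ [e])) ++ (ms ++ l2) := by
      rw [hldec, hmdecomp]; simp
    have hl'' : IsPathFrom src tgt s t ((l1 ++ (mp ++ [e])) ++ (ms ++ l2)) := by
      rw [← hldec2]; exact hl
    have hane : l1 ++ (mp ++ [e]) ≠ [] := by simp
    have hbne2 : ms ++ l2 ≠ [] := by simp [hmsne]
    have hgl : (l1 ++ (mp ++ [e])).getLast hane = e := by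
      rw [List.getLast_append]; simp
    have hmsm : ∀ x ∈ ms, x ∈ m := fun x hx => by
      rw [hmdecomp]
      exact List.mem_append.mpr (Or.inr (List.mem_cons_of_mem _ hx))
    have hmheadms : ms.head hmsne ∈ m := hmsm _ (List.head_mem hmsne)
    have hmemH' : ∀ x ∈ m, x ∈ H' := fun x hx => hlH' (List.mem_toFinset.mpr (by
      rw [hldec]
      exact List.mem_append.mpr (Or.inr (List.mem_append.mpr (Or.inl hx)))))
    have hmnd2 : (mp ++ e :: ms).Nodup := by rw [← hmdecomp]; exact hmnd
    rw [List.nodup_append'] at hmnd2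
    have hens : e ∉ ms := (List.nodup_cons.mp hmnd2.2.1).1
    have hdmp : ∀ x ∈ mp, x ∉ e :: ms := List.disjoint_left.mp hmnd2.2.2
    rcases hadj with hsrc | htgt
    · -- an arc of H leaves tgt e
      obtain ⟨q, hq, hqH⟩ := path_from_src hH he'H
      rw [hsrc] at hq
      have hpfx := (isPath_prefix hl'' hane).1
      rw [hgl] at hpfx
      have hpath := isPath_append hpfx hq
      refine key _ hpath ?_
        ⟨e, List.mem_append.mpr (Or.inl (List.mem_append.mpr (Or.inr
          (List.mem_append.mpr (Or.inr (List.mem_singleton.mpr rfl)))))), hmmem e heM⟩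
        (ms.head hmsne) (hmemH' _ hmheadms) (hmmem _ hmheadms) ?_
      · intro x hx
        rcases List.mem_append.mp hx with h | h
        · exact hlH' (List.mem_toFinset.mpr (by
            rw [hldec2]; exact List.mem_append.mpr (Or.inl h)))
        · exact hsub.1 (hqH (List.mem_toFinset.mpr h))
      · intro hmem
        rcases List.mem_append.mp hmem with h | h
        · rcases List.mem_append.mp h with h1 | h1
          · exact (List.disjoint_left.mp hdisj1) h1
              (List.mem_append.mpr (Or.inl hmheadms))
          · rcases List.mem_append.mp h1 with h2 | h2
            · exact hdmp _ h2 (List.mem_cons_of_mem _ (List.head_mem hmsne))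
            · exact hens ((List.mem_singleton.mp h2) ▸ (List.head_mem hmsne))
        · exact hmmem _ hmheadms (hqH (List.mem_toFinset.mpr h))
    · -- an arc of H enters tgt e
      obtain ⟨p, hp, hpH⟩ := path_to_tgt hH he'H
      rw [htgt] at hp
      obtain ⟨hsfx, hjunc⟩ := isPath_suffix hl'' hbne2
      have hj : tgt e = src ((ms ++ l2).head hbne2) := by
        apply hjunc
        have : (l1 ++ (mp ++ [e])).getLast? = some e := by
          rw [List.getLast?_append]
          have : (mp ++ [e]).getLast? = some e := List.getLast?_concat
          rw [this]; rfl
        rw [this]; rfl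
      rw [← hj] at hsfx
      have hpath := isPath_append hp hsfx
      refine key _ hpath ?_
        ⟨ms.head hmsne, List.mem_append.mpr (Or.inr (List.mem_append.mpr (Or.inl
          (List.head_mem hmsne)))), hmmem _ hmheadms⟩
        e (hmemH' e heM) (hmmem e heM) ?_
      · intro x hx
        rcases List.mem_append.mp hx with h | h
        · exact hsub.1 (hpH (List.mem_toFinset.mpr h))
        · exact hlH' (List.mem_toFinset.mpr (by
            rw [hldec2]; exact List.mem_append.mpr (Or.inr h)))
      · intro hmem
        rcases List.mem_append.mp hmem with h | h
        · exact hmmem e heM (hpH (List.mem_toFinset.mpr h))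
        · rcases List.mem_append.mp h with h1 | h1
          · exact hens h1
          · exact (List.disjoint_left.mp hdisjm2) heM h1
  -- now the D computation
  have hH'm : H' = H ∪ m.toFinset := by
    rw [hHeq]
    ext x
    simp only [Finset.mem_union, List.mem_toFinset]
    constructor
    · rintro (h | h)
      · exact Or.inl h
      · rw [hldec] at h
        rcases List.mem_append.mp h with h1 | h1
        · exact Or.inl (hl1mem x h1)
        · rcases List.mem_append.mp h1 with h2 | h2
          · exact Or.inr h2
          · exact Or.inl (hl2mem x h2)
    · rintro (h | h)
      · exact Or.inl h
      · refine Or.inr ?_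
        rw [hldec]
        exact List.mem_append.mpr (Or.inr (List.mem_append.mpr (Or.inl h)))
  have hmsubl : List.Sublist m l := by
    have h1 : List.Sublist (m ++ l2) (l1 ++ (m ++ l2)) := List.sublist_append_right _ _
    rw [← hldec] at h1
    exact (List.sublist_append_left m l2).trans h1
  have hmtgt_nd : (m.dropLast.map tgt).Nodup := by
    have hsub2 : List.Sublist (m.dropLast.map tgt) (l.map tgt) :=
      List.Sublist.map tgt ((List.dropLast_sublist m).trans hmsubl)
    exact (nodup_map_tgt hacyc hlc).sublist hsub2
  set I : Finset V := (m.dropLast.map tgt).toFinset with hIdef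
  have hIcard : I.card + 1 = m.length := by
    rw [hIdef, List.toFinset_card_of_nodup hmtgt_nd, List.length_map,
      List.length_dropLast]
    have := List.length_pos_iff.mpr hmne
    omega
  have hmsrc_tail : m.tail.map src = m.dropLast.map tgt := (dropLast_map_tgt_eq hmc).symm
  have hIs : ∀ w ∈ I, w ≠ s := by
    intro w hw
    rw [hIdef, List.mem_toFinset, List.mem_map] at hw
    obtain ⟨e, he, rfl⟩ := hw
    intro h
    exact (hs s).mpr rfl ⟨e, h⟩
  have hIt : ∀ w ∈ I, w ≠ t := by
    intro w hw
    rw [hIdef, List.mem_toFinset, ← hmsrc_tail, List.mem_map] at hw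
    obtain ⟨e, he, rfl⟩ := hw
    intro h
    exact (ht t).mpr rfl ⟨e, h⟩
  have hInotH : ∀ w ∈ I, ∀ f ∈ H, src f ≠ w ∧ tgt f ≠ w := by
    intro w hw f hf
    rw [hIdef, List.mem_toFinset, List.mem_map] at hw
    obtain ⟨e, he, rfl⟩ := hw
    constructor
    · intro h
      exact hmmem f (hear e he f (hsub.1 hf) (Or.inl h)) hf
    · intro h
      exact hmmem f (hear e he f (hsub.1 hf) (Or.inr h)) hf
  have hheadml2 : (m ++ l2).head? = some (m.head hmne) := by
    rw [List.head?_append, List.head?_eq_head hmne]; rfl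
  have hu0 : (src (m.head hmne) ∈ H.image src ∨ src (m.head hmne) ∈ H.image tgt) ∨
      src (m.head hmne) = s ∨ src (m.head hmne) = t := by
    rcases eq_or_ne l1 [] with h | h
    · have hleq : l = m ++ l2 := by rw [hldec, h, List.nil_append]
      refine Or.inr (Or.inl ?_)
      exact hl.2.1 (m.head hmne) (by rw [hleq]; exact hheadml2)
    · have hcc := hlc
      rw [hldec, List.Chain', List.isChain_append] at hcc
      have hjj := hcc.2.2 (l1.getLast h) (List.getLast?_eq_getLast h)
        (m.head hmne) hheadml2
      refine Or.inl (Or.inr ?_)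
      rw [← hjj]
      exact Finset.mem_image_of_mem tgt (hl1mem _ (List.getLast_mem h))
  have hv0 : (tgt (m.getLast hmne) ∈ H.image src ∨ tgt (m.getLast hmne) ∈ H.image tgt) ∨
      tgt (m.getLast hmne) = s ∨ tgt (m.getLast hmne) = t := by
    rcases eq_or_ne l2 [] with h | h
    · have hleq : l = l1 ++ m := by rw [hldec, h, List.append_nil]
      refine Or.inr (Or.inr ?_)
      apply hl.2.2.1
      rw [hleq, List.getLast?_append, List.getLast?_eq_getLast hmne]
      rfl
    · have hcc := hlc
      rw [hldec, List.Chain', List.isChain_append] at hcc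
      have hcc2 := hcc.2.1
      rw [List.isChain_append] at hcc2
      have hjj := hcc2.2.2 (m.getLast hmne) (List.getLast?_eq_getLast hmne)
        (l2.head h) (List.head?_eq_head h)
      refine Or.inl (Or.inl ?_)
      rw [hjj]
      exact Finset.mem_image_of_mem src (hl2mem _ (List.head_mem h))
  have hVm : ∀ w, (w ∈ m.toFinset.image src ∨ w ∈ m.toFinset.image tgt) →
      w = src (m.head hmne) ∨ w = tgt (m.getLast hmne) ∨ w ∈ I := by
    intro w hw
    rcases hw with h | h
    · obtain ⟨f, hf, rfl⟩ := Finset.mem_image.mp h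
      rw [List.mem_toFinset] at hf
      have hcases : f = m.head hmne ∨ f ∈ m.tail := by
        rw [← List.cons_head_tail hmne] at hf
        exact List.mem_cons.mp hf
      rcases hcases with h1 | h1
      · exact Or.inl (by rw [h1])
      · refine Or.inr (Or.inr ?_)
        rw [hIdef, List.mem_toFinset, ← hmsrc_tail, List.mem_map]
        exact ⟨f, h1, rfl⟩
    · obtain ⟨f, hf, rfl⟩ := Finset.mem_image.mp h
      rw [List.mem_toFinset] at hf
      have hcases : f ∈ m.dropLast ∨ f = m.getLast hmne := by
        rw [← List.dropLast_append_getLast hmne] at hf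
        rcases List.mem_append.mp hf with h1 | h1
        · exact Or.inl h1
        · exact Or.inr (List.mem_singleton.mp h1)
      rcases hcases with h1 | h1
      · refine Or.inr (Or.inr ?_)
        rw [hIdef, List.mem_toFinset, List.mem_map]
        exact ⟨f, h1, rfl⟩
      · exact Or.inr (Or.inl (by rw [h1]))
  have hIsubVm : ∀ w ∈ I, w ∈ m.toFinset.image tgt := by
    intro w hw
    rw [hIdef, List.mem_toFinset, List.mem_map] at hw
    obtain ⟨f, hf, rfl⟩ := hw
    exact Finset.mem_image_of_mem tgt (List.mem_toFinset.mpr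
      ((List.dropLast_sublist m).subset hf))
  have hkey : (H'.image src ∪ H'.image tgt) \ ({s, t} : Finset V) =
      ((H.image src ∪ H.image tgt) \ ({s, t} : Finset V)) ∪ I := by
    ext w
    simp only [Finset.mem_sdiff, Finset.mem_union, Finset.mem_insert,
      Finset.mem_singleton]
    constructor
    · rintro ⟨hw, hwst⟩
      have hw' : (w ∈ H.image src ∨ w ∈ H.image tgt) ∨
          (w ∈ m.toFinset.image src ∨ w ∈ m.toFinset.image tgt) := by
        rcases hw with h | h
        · rw [hH'm, Finset.image_union] at h
          rcases Finset.mem_union.mp h with h1 | h1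
          exacts [Or.inl (Or.inl h1), Or.inr (Or.inl h1)]
        · rw [hH'm, Finset.image_union] at h
          rcases Finset.mem_union.mp h with h1 | h1
          exacts [Or.inl (Or.inr h1), Or.inr (Or.inr h1)]
      rcases hw' with h | h
      · exact Or.inl ⟨h, hwst⟩
      · rcases hVm w h with h1 | h1 | h1
        · rcases hu0 with h2 | h2
          · exact Or.inl ⟨by rw [h1]; exact h2, hwst⟩
          · exact absurd h2 (h1 ▸ hwst)
        · rcases hv0 with h2 | h2
          · exact Or.inl ⟨by rw [h1]; exact h2, hwst⟩
          · exact absurd h2 (h1 ▸ hwst)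
        · exact Or.inr h1
    · rintro (⟨hw, hwst⟩ | hwI)
      · refine ⟨?_, hwst⟩
        rcases hw with h | h
        · exact Or.inl (Finset.image_subset_image hsub.1 h)
        · exact Or.inr (Finset.image_subset_image hsub.1 h)
      · refine ⟨Or.inr ?_, ?_⟩
        · refine Finset.image_subset_image ?_ (hIsubVm w hwI)
          rw [hH'm]
          exact Finset.subset_union_right
        · rintro (h | h)
          exacts [hIs w hwI h, hIt w hwI h]
  have hdisjI : ∀ w ∈ I, w ∉ (H.image src ∪ H.image tgt) \ ({s, t} : Finset V) := by
    intro w hwI hw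
    rcases Finset.mem_union.mp (Finset.mem_sdiff.mp hw).1 with h | h
    · obtain ⟨f, hf, hfw⟩ := Finset.mem_image.mp h
      exact (hInotH w hwI f hf).1 hfw
    · obtain ⟨f, hf, hfw⟩ := Finset.mem_image.mp h
      exact (hInotH w hwI f hf).2 hfw
  have hcard1 : ((H'.image src ∪ H'.image tgt) \ ({s, t} : Finset V)).card =
      ((H.image src ∪ H.image tgt) \ ({s, t} : Finset V)).card + I.card := by
    rw [hkey, Finset.card_union_of_disjoint
      (Finset.disjoint_left.mpr (fun a ha hb => hdisjI a hb ha))]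
  have hdisjHm : Disjoint H m.toFinset :=
    Finset.disjoint_left.mpr (fun a ha hb => hmmem a (List.mem_toFinset.mp hb) ha)
  have hcard2 : H'.card = H.card + m.length := by
    rw [hH'm, Finset.card_union_of_disjoint hdisjHm, List.toFinset_card_of_nodup hmnd]
  refine ⟨⟨m, hmne, hmnd, hmc, hmΔ, hear⟩, ?_⟩
  simp only [Dval]
  rw [hcard1, hcard2]
  push_cast
  omega
end

section
/- Let G be a finite DAG with unique source and sink, and let H ∈ U(P_G) be a nonempty union of s-t paths. Then the dimension of the face F(H) of the flow polytope of G equals D(H) = |H| − |V(H) ∖ {s,t}| − 1, where V(H) is the set of vertices incident to arcs of H. -/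
open Classical Finset

section Aux
variable {V E : Type} (src tgt : E → V)

lemma countA (v : V) : ∀ (l : List E) (e : E),
    (e :: l).Chain' (fun e f => tgt e = src f) →
    ((e :: l).countP (fun x => decide (tgt x = v)) + (if v = src e then 1 else 0)
      = (e :: l).countP (fun x => decide (src x = v))
        + (if v = tgt ((e :: l).getLast (List.cons_ne_nil e l)) then 1 else 0)) := by
  intro l
  induction l with
  | nil =>
    intro e _
    have t1 : (if decide (tgt e = v) = true then 1 else 0) = (if v = tgt e then 1 else 0) := by
      simp [eq_comm]
    have t2 : (if decide (src e = v) = true then 1 else 0) = (if v = src e then 1 else 0) := by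
      simp [eq_comm]
    simp only [List.countP_cons, List.countP_nil, List.getLast_singleton]
    by_cases h1 : v = tgt e <;> by_cases h2 : v = src e <;> simp [h1, h2, eq_comm] <;> omega
  | cons f l' ih =>
    intro e hch
    replace hch := List.isChain_cons_cons.1 hch
    have IH := ih f hch.2
    have hgl : (e :: f :: l').getLast (List.cons_ne_nil e (f :: l'))
        = (f :: l').getLast (List.cons_ne_nil f l') := List.getLast_cons _
    rw [hgl]
    have e1 : (if v = src f then 1 else 0) = (if decide (tgt e = v) = true then 1 else 0) := by
      rw [hch.1]; simp [eq_comm]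
    have e2 : (if decide (src e = v) = true then 1 else 0) = (if v = src e then 1 else 0) := by
      simp [eq_comm]
    simp only [List.countP_cons] at IH ⊢
    omega

lemma sumB [Fintype E] [DecidableEq E] (P : E → Prop) [DecidablePred P]
    (l : List E) (hnd : l.Nodup) :
    ∑ e ∈ univ.filter P, (if e ∈ l.toFinset then (1:ℝ) else 0)
      = l.countP (fun e => decide (P e)) := by
  rw [Finset.sum_boole]
  congr 1
  have h1 : (univ.filter P).filter (fun e => e ∈ l.toFinset)
      = (l.filter (fun e => decide (P e))).toFinset := by
    ext e; simp [and_comm]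
  rw [h1, List.toFinset_card_of_nodup (hnd.filter _), ← List.countP_eq_length_filter]

lemma netC [Fintype E] [DecidableEq E] (l : List E) (hne : l ≠ [])
    (hch : l.Chain' fun e f => tgt e = src f) (hnd : l.Nodup) (a b v : V)
    (ha : ∀ e ∈ l.head?, src e = a) (hb : ∀ e ∈ l.getLast?, tgt e = b) :
    (∑ e ∈ univ.filter (fun e => tgt e = v), (if e ∈ l.toFinset then (1:ℝ) else 0))
      - ∑ e ∈ univ.filter (fun e => src e = v), (if e ∈ l.toFinset then (1:ℝ) else 0)
      = (if v = b then 1 else 0) - (if v = a then 1 else 0) := by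
  obtain ⟨e, l', rfl⟩ := List.exists_cons_of_ne_nil hne
  have hA := countA src tgt v l' e hch
  have hsa : src e = a := ha e rfl
  have hb' : tgt ((e :: l').getLast (List.cons_ne_nil e l')) = b := by
    apply hb; rw [List.getLast?_eq_getLast (List.cons_ne_nil e l')]; rfl
  rw [sumB _ _ hnd, sumB _ _ hnd]
  rw [hsa, hb'] at hA
  have := congrArg (fun n : ℕ => (n : ℝ)) hA
  push_cast at this
  linarith [this]

def Wsub [Fintype E] (H : Finset E) : Submodule ℝ (E → ℝ) where
  carrier := {g | ∀ e ∉ H, g e = 0}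
  add_mem' := fun ha hb e he => by simp [ha e he, hb e he]
  zero_mem' := fun e he => rfl
  smul_mem' := fun c a ha e he => by simp [ha e he]

open Classical in
noncomputable def phiMap [Fintype E] (A : Finset V) : (E → ℝ) →ₗ[ℝ] (↥A → ℝ) where
  toFun g v := (∑ e ∈ univ.filter (fun e => tgt e = v.1), g e)
    - ∑ e ∈ univ.filter (fun e => src e = v.1), g e
  map_add' a b := by
    funext v
    simp only [Pi.add_apply, Finset.sum_add_distrib]
    ring
  map_smul' c a := by
    funext v
    simp only [Pi.smul_apply, smul_eq_mul, RingHom.id_apply, ← Finset.mul_sum]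
    ring

open Classical in
lemma phiMap_apply [Fintype E] (A : Finset V) (g : E → ℝ) (v : ↥A) :
    phiMap src tgt A g v = (∑ e ∈ univ.filter (fun e => tgt e = v.1), g e)
      - ∑ e ∈ univ.filter (fun e => src e = v.1), g e := rfl

noncomputable def wEquiv [Fintype E] [DecidableEq E] (H : Finset E) :
    (Wsub (E := E) H) ≃ₗ[ℝ] (↥H → ℝ) where
  toFun w h := w.1 h.1
  map_add' _ _ := rfl
  map_smul' _ _ := rfl
  invFun f := ⟨fun e => if he : e ∈ H then f ⟨e, he⟩ else 0, fun e he => dif_neg he⟩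
  left_inv w := by
    apply Subtype.ext; funext e
    show (if he : e ∈ H then _ else 0) = w.1 e
    by_cases he : e ∈ H
    · rw [dif_pos he]
    · rw [dif_neg he]; exact (w.2 e he).symm
  right_inv f := by funext h; simp

lemma finrank_Wsub [Fintype E] [DecidableEq E] (H : Finset E) :
    Module.finrank ℝ (Wsub (E := E) H) = H.card := by
  rw [(wEquiv H).finrank_eq, Module.finrank_fintype_fun_eq_card, Fintype.card_coe]

end Aux


set_option maxHeartbeats 1000000 in
set_option synthInstance.maxHeartbeats 200000 in
/-- For a nonempty union `H` of `s`-`t` paths in a finite DAG with unique source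
and sink, the dimension of the face `F(H)` of the flow polytope (the dimension
of its affine hull) equals `D(H) = |H| - |V(H) \ {s,t}| - 1`. -/
theorem stmt11 (V E : Type) [Fintype V] [Fintype E] [DecidableEq E]
    (src tgt : E → V) (s t : V)
    (hacyc : IsAcyclicDigraph src tgt)
    (hs : IsUniqueSource src tgt s) (ht : IsUniqueSink src tgt t)
    (H : Finset E) (hH : H ∈ unionOfPaths src tgt s t) (hne : H ≠ ∅) :
    (Module.finrank ℝ ↥(vectorSpan ℝ (flowSet src tgt s t (↑H : Set E))) : ℤ) =
      Dval src tgt s t H := by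
  obtain ⟨Ps, hPs, hHu⟩ := hH
  -- membership in H
  have hmemH : ∀ e : E, e ∈ H ↔ ∃ p ∈ Ps, e ∈ p := by
    intro e
    constructor
    · intro heH
      have h2 : (e : E) ∈ (H : Set E) := heH
      rw [hHu] at h2; simpa using h2
    · rintro ⟨p, hp, hep⟩
      have h2 : (e : E) ∈ (H : Set E) := by
        rw [hHu]; exact Set.mem_biUnion hp hep
      exact h2
  have hnoin : ∀ e : E, tgt e ≠ s := fun e h => (hs s).mpr rfl ⟨e, h⟩
  have hnoout : ∀ e : E, src e ≠ t := fun e h => (ht t).mpr rfl ⟨e, h⟩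
  have hedge : ∀ e ∈ H, ∃ l : List E, IsPathFrom src tgt s t l ∧ l.Nodup ∧
      e ∈ l ∧ ∀ x ∈ l, x ∈ H := by
    intro e he
    obtain ⟨p, hpPs, hep⟩ := (hmemH e).1 he
    obtain ⟨l, hl, hnd, rfl⟩ := hPs hpPs
    exact ⟨l, hl, hnd, List.mem_toFinset.1 hep,
      fun x hx => (hmemH x).2 ⟨_, hpPs, List.mem_toFinset.2 hx⟩⟩
  obtain ⟨e₀, he₀⟩ := Finset.nonempty_of_ne_empty hne
  obtain ⟨l₀, hl₀, hnd₀, he₀l, hl₀H⟩ := hedge e₀ he₀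
  have hst : s ≠ t := by
    intro h
    obtain ⟨f, lrest, rfl⟩ := List.exists_cons_of_ne_nil hl₀.1
    exact hnoout f (by rw [← h]; exact hl₀.2.1 f rfl)
  -- in-sum at s vanishes
  have hin_s : ∀ f : E → ℝ, ∑ e ∈ univ.filter (fun e => tgt e = s), f e = 0 := by
    intro f
    rw [Finset.filter_false_of_mem (fun e _ => hnoin e), Finset.sum_empty]
  -- per-path facts
  have hnet_p : ∀ p ∈ Ps, ∀ v : V,
      (∑ e ∈ univ.filter (fun e => tgt e = v), (if e ∈ p then (1:ℝ) else 0))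
        - (∑ e ∈ univ.filter (fun e => src e = v), (if e ∈ p then (1:ℝ) else 0))
      = (if v = t then 1 else 0) - (if v = s then 1 else 0) := by
    intro p hp v
    obtain ⟨l, hl, hnd, rfl⟩ := hPs hp
    exact netC src tgt l hl.1 hl.2.2.2 hnd s t v hl.2.1 hl.2.2.1
  have hunit_p : ∀ p ∈ Ps,
      ∑ e ∈ univ.filter (fun e => src e = s), (if e ∈ p then (1:ℝ) else 0) = 1 := by
    intro p hp
    have h1 := hnet_p p hp s
    have h2 := hin_s (fun e => if e ∈ p then (1:ℝ) else 0)
    rw [if_pos rfl, if_neg hst] at h1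
    linarith
  -- vertex sets
  set Vfin := H.image src ∪ H.image tgt with hVfin
  have hsV : s ∈ Vfin := by
    obtain ⟨f, lrest, h⟩ := List.exists_cons_of_ne_nil hl₀.1
    refine Finset.mem_union_left _ (Finset.mem_image.2 ⟨f, ?_, ?_⟩)
    · exact hl₀H f (h ▸ (List.mem_cons_self : f ∈ f :: lrest))
    · exact hl₀.2.1 f (by rw [h]; rfl)
  have htV : t ∈ Vfin := by
    refine Finset.mem_union_right _ (Finset.mem_image.2
      ⟨l₀.getLast hl₀.1, hl₀H _ (List.getLast_mem hl₀.1), ?_⟩)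
    apply hl₀.2.2.1
    simp [List.getLast?_eq_getLast hl₀.1]
  set A := Vfin.erase t with hA
  have hVsrc : ∀ v ∈ Vfin, v ≠ t → ∃ e ∈ H, src e = v := by
    intro v hv hvt
    rcases Finset.mem_union.1 hv with h | h
    · obtain ⟨e, heH, rfl⟩ := Finset.mem_image.1 h
      exact ⟨e, heH, rfl⟩
    · obtain ⟨e, heH, heq⟩ := Finset.mem_image.1 h
      obtain ⟨l, hl, hnd, hel, hlH⟩ := hedge e heH
      obtain ⟨l1, l2, rfl⟩ := List.append_of_mem hel
      match l2 with
      | [] =>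
        have h3 : tgt e = t := hl.2.2.1 e (by rw [List.getLast?_concat]; rfl)
        exact absurd (by rw [← heq, h3]) hvt
      | f :: l2' =>
        have hch : (e :: f :: l2').Chain' (fun a b => tgt a = src b) :=
          (List.isChain_append.1 hl.2.2.2).2.1
        exact ⟨f, hlH f (by simp), by rw [← (List.isChain_cons_cons.1 hch).1, heq]⟩
  -- the flow f*
  have hPsfin : Ps.Finite := Set.toFinite Ps
  set F : Finset (Finset E) := hPsfin.toFinset with hF
  have hFmem : ∀ p, p ∈ F ↔ p ∈ Ps := fun p => hPsfin.mem_toFinset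
  have hFne : F.Nonempty := by
    obtain ⟨p, hp, _⟩ := (hmemH e₀).1 he₀
    exact ⟨p, (hFmem p).2 hp⟩
  have hn0 : (0:ℝ) < (F.card : ℝ) := by
    exact_mod_cast Finset.card_pos.2 hFne
  set fstar : E → ℝ := fun e => (F.card : ℝ)⁻¹ * ∑ p ∈ F, (if e ∈ p then (1:ℝ) else 0)
    with hfstar
  have hswap : ∀ s' : Finset E, ∑ e ∈ s', fstar e
      = (F.card : ℝ)⁻¹ * ∑ p ∈ F, ∑ e ∈ s', (if e ∈ p then (1:ℝ) else 0) := by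
    intro s'
    rw [Finset.sum_comm, ← Finset.mul_sum]
  have hfstar_supp : ∀ e ∉ H, fstar e = 0 := by
    intro e he
    rw [hfstar]
    simp only
    rw [Finset.sum_eq_zero, mul_zero]
    intro p hp
    rw [if_neg]
    exact fun hep => he ((hmemH e).2 ⟨p, (hFmem p).1 hp, hep⟩)
  have hfstar_flow : fstar ∈ flowSet src tgt s t (↑H : Set E) := by
    refine ⟨?_, fun e he => hfstar_supp e he, ?_, ?_⟩
    · intro e
      apply mul_nonneg (by positivity)
      apply Finset.sum_nonneg
      intro p _; split <;> norm_num
    · rw [hswap]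
      rw [Finset.sum_congr rfl (fun p hp => hunit_p p ((hFmem p).1 hp))]
      simp [hn0.ne']
    · intro v hvs hvt
      rw [hswap, hswap]
      congr 1
      apply Finset.sum_congr rfl
      intro p hp
      have := hnet_p p ((hFmem p).1 hp) v
      rw [if_neg hvt, if_neg hvs] at this
      linarith
  have hfstar_pos : ∀ e ∈ H, 0 < fstar e := by
    intro e he
    obtain ⟨p, hp, hep⟩ := (hmemH e).1 he
    have h1 : (1:ℝ) ≤ ∑ q ∈ F, (if e ∈ q then (1:ℝ) else 0) := by
      have := Finset.single_le_sum (f := fun q => if e ∈ q then (1:ℝ) else 0)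
        (fun q _ => by split <;> norm_num) ((hFmem p).2 hp)
      simpa [hep] using this
    have := mul_le_mul_of_nonneg_left h1 (inv_nonneg.2 hn0.le)
    calc (0:ℝ) < (F.card : ℝ)⁻¹ * 1 := by simpa using inv_pos.2 hn0
    _ ≤ fstar e := by rw [hfstar]; simpa using this
  -- the kernel submodule
  set W := Wsub (E := E) H with hW
  set ψ : ↥W →ₗ[ℝ] (↥A → ℝ) := (phiMap src tgt A).comp W.subtype with hψ
  set K := Submodule.map W.subtype (LinearMap.ker ψ) with hK
  have hKmem : ∀ g : E → ℝ, g ∈ K ↔ ((∀ e ∉ H, g e = 0)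
      ∧ (∑ e ∈ univ.filter (fun e => src e = s), g e = 0)
      ∧ ∀ v : V, v ≠ s → v ≠ t →
        ∑ e ∈ univ.filter (fun e => tgt e = v), g e
          = ∑ e ∈ univ.filter (fun e => src e = v), g e) := by
    intro g
    constructor
    · rintro ⟨w, hw, rfl⟩
      simp only [Submodule.subtype_apply]
      have hw0 : ∀ u : ↥A, phiMap src tgt A w.1 u = 0 :=
        fun u => congrFun (LinearMap.mem_ker.1 hw) u
      refine ⟨w.2, ?_, ?_⟩
      · have hsA : s ∈ A := Finset.mem_erase.2 ⟨hst, hsV⟩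
        have h1 : (∑ e ∈ univ.filter (fun e => tgt e = s), w.1 e)
            - (∑ e ∈ univ.filter (fun e => src e = s), w.1 e) = 0 := hw0 ⟨s, hsA⟩
        have h2 := hin_s w.1
        linarith
      · intro v hvs hvt
        by_cases hv : v ∈ Vfin
        · have h1 : (∑ e ∈ univ.filter (fun e => tgt e = v), w.1 e)
              - (∑ e ∈ univ.filter (fun e => src e = v), w.1 e) = 0 :=
            hw0 ⟨v, Finset.mem_erase.2 ⟨hvt, hv⟩⟩
          linarith
        · have hz : ∀ e : E, tgt e = v ∨ src e = v → w.1 e = 0 := by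
            intro e hev
            by_cases heH : e ∈ H
            · refine absurd ?_ hv
              rcases hev with h | h
              · exact Finset.mem_union_right _ (Finset.mem_image.2 ⟨e, heH, h⟩)
              · exact Finset.mem_union_left _ (Finset.mem_image.2 ⟨e, heH, h⟩)
            · exact w.2 e heH
          rw [Finset.sum_eq_zero (fun e he => hz e (Or.inl (Finset.mem_filter.1 he).2)),
            Finset.sum_eq_zero (fun e he => hz e (Or.inr (Finset.mem_filter.1 he).2))]
    · rintro ⟨h1, h2, h3⟩
      refine ⟨⟨g, h1⟩, LinearMap.mem_ker.2 ?_, rfl⟩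
      funext u
      obtain ⟨v, hu⟩ := u
      have hvt : v ≠ t := (Finset.mem_erase.1 hu).1
      have hvV : v ∈ Vfin := (Finset.mem_erase.1 hu).2
      show phiMap src tgt A g ⟨v, hu⟩ = 0
      have happ : phiMap src tgt A g ⟨v, hu⟩
          = (∑ e ∈ univ.filter (fun e => tgt e = v), g e)
            - (∑ e ∈ univ.filter (fun e => src e = v), g e) := rfl
      rw [happ]
      by_cases hvs : v = s
      · subst hvs
        rw [hin_s g, h2]; ring
      · rw [h3 v hvs hvt]; ring
  have hspan : vectorSpan ℝ (flowSet src tgt s t (↑H : Set E)) = K := by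
    apply le_antisymm
    · rw [vectorSpan_def, Submodule.span_le]
      rintro x hx
      rw [Set.mem_vsub] at hx
      obtain ⟨f1, hf1, f2, hf2, rfl⟩ := hx
      obtain ⟨hp1, hs1, hu1, hc1⟩ := hf1
      obtain ⟨hp2, hs2, hu2, hc2⟩ := hf2
      rw [SetLike.mem_coe, hKmem]
      have hsub : ∀ e : E, (f1 -ᵥ f2) e = f1 e - f2 e := fun e => rfl
      refine ⟨fun e he => by rw [hsub, hs1 e he, hs2 e he, sub_zero], ?_, ?_⟩
      · rw [Finset.sum_congr rfl (fun e _ => hsub e), Finset.sum_sub_distrib, hu1, hu2]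
        ring
      · intro v hvs hvt
        rw [Finset.sum_congr rfl (fun e _ => hsub e), Finset.sum_congr rfl (fun e _ => hsub e),
          Finset.sum_sub_distrib, Finset.sum_sub_distrib, hc1 v hvs hvt, hc2 v hvs hvt]
    · intro g hg
      rw [hKmem] at hg
      obtain ⟨hg1, hg2, hg3⟩ := hg
      set ε := H.inf' (Finset.nonempty_of_ne_empty hne) (fun e => fstar e / (|g e| + 1)) with hε
      have hεpos : 0 < ε := by
        rw [hε, Finset.lt_inf'_iff]
        exact fun e he => div_pos (hfstar_pos e he) (by positivity)
      set f2 : E → ℝ := fun e => fstar e + ε * g e with hf2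
      have hf2flow : f2 ∈ flowSet src tgt s t (↑H : Set E) := by
        refine ⟨?_, ?_, ?_, ?_⟩
        · intro e
          by_cases heH : e ∈ H
          · have h1 : ε ≤ fstar e / (|g e| + 1) := Finset.inf'_le _ heH
            have h2 : ε * (|g e| + 1) ≤ fstar e := by
              rw [← le_div_iff₀ (by positivity : (0:ℝ) < |g e| + 1)]
              exact h1
            have h3 := mul_le_mul_of_nonneg_left (neg_abs_le (g e)) hεpos.le
            show 0 ≤ fstar e + ε * g e
            nlinarith [abs_nonneg (g e)]
          · show 0 ≤ fstar e + ε * g e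
            rw [hfstar_supp e heH, hg1 e heH]; norm_num
        · intro e heH
          show fstar e + ε * g e = 0
          rw [hfstar_supp e heH, hg1 e heH]; ring
        · show ∑ e ∈ univ.filter (fun e => src e = s), (fstar e + ε * g e) = 1
          have hmul : ∀ s' : Finset E, ∑ e ∈ s', (ε * g e) = ε * ∑ e ∈ s', g e :=
            fun s' => (Finset.mul_sum _ _ _).symm
          rw [Finset.sum_add_distrib, hmul, hg2, hfstar_flow.2.2.1]; ring
        · intro v hvs hvt
          show ∑ e ∈ univ.filter (fun e => tgt e = v), (fstar e + ε * g e)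
            = ∑ e ∈ univ.filter (fun e => src e = v), (fstar e + ε * g e)
          have hmul : ∀ s' : Finset E, ∑ e ∈ s', (ε * g e) = ε * ∑ e ∈ s', g e :=
            fun s' => (Finset.mul_sum _ _ _).symm
          rw [Finset.sum_add_distrib, Finset.sum_add_distrib, hmul, hmul,
            hg3 v hvs hvt, hfstar_flow.2.2.2 v hvs hvt]
      have hdiff : f2 -ᵥ fstar ∈ vectorSpan ℝ (flowSet src tgt s t (↑H : Set E)) :=
        vsub_mem_vectorSpan ℝ hf2flow hfstar_flow
      have hgeq : g = ε⁻¹ • (f2 -ᵥ fstar) := by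
        funext e
        show g e = ε⁻¹ * ((fstar e + ε * g e) - fstar e)
        field_simp
        ring
      rw [hgeq]
      exact Submodule.smul_mem _ _ hdiff
  have hrange : LinearMap.range ψ = ⊤ := by
    have hsingle : ∀ v : ↥A, (fun u : ↥A => if v = u then (1:ℝ) else 0)
        ∈ LinearMap.range ψ := by
      intro v
      have hvA := Finset.mem_erase.1 v.2
      obtain ⟨e, heH, hsrce⟩ := hVsrc v.1 hvA.2 hvA.1
      obtain ⟨l, hl, hnd, hel, hlH⟩ := hedge e heH
      obtain ⟨l1, l2, rfl⟩ := List.append_of_mem hel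
      have hg1W : (fun x => if x ∈ l1.toFinset then (1:ℝ) else 0) ∈ W := fun x hx =>
        if_neg (fun hmem => hx (hlH x (List.mem_append.2 (Or.inl (List.mem_toFinset.1 hmem)))))
      have hglW : (fun x => if x ∈ (l1 ++ e :: l2).toFinset then (1:ℝ) else 0) ∈ W :=
        fun x hx => if_neg (fun hmem => hx (hlH x (List.mem_toFinset.1 hmem)))
      refine ⟨⟨_, hg1W⟩ - ⟨_, hglW⟩, ?_⟩
      have hmapsub : ψ (⟨_, hg1W⟩ - ⟨_, hglW⟩)
          = phiMap src tgt A (fun x => if x ∈ l1.toFinset then (1:ℝ) else 0)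
            - phiMap src tgt A (fun x => if x ∈ (l1 ++ e :: l2).toFinset then (1:ℝ) else 0) :=
        map_sub _ _ _
      rw [hmapsub]
      funext u
      have hut : u.1 ≠ t := (Finset.mem_erase.1 u.2).1
      have hφl : phiMap src tgt A
          (fun x => if x ∈ (l1 ++ e :: l2).toFinset then (1:ℝ) else 0) u
          = (if u.1 = t then 1 else 0) - (if u.1 = s then 1 else 0) :=
        netC src tgt _ hl.1 hl.2.2.2 hnd s t u.1 hl.2.1 hl.2.2.1
      have hφ1 : phiMap src tgt A (fun x => if x ∈ l1.toFinset then (1:ℝ) else 0) u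
          = (if u.1 = v.1 then 1 else 0) - (if u.1 = s then 1 else 0) := by
        match l1, hl, hnd, hlH, hsrce with
        | [], hl, hnd, hlH, hsrce =>
          have hves : v.1 = s := by rw [← hsrce]; exact hl.2.1 e rfl
          have hzero : ∀ x : E, (if x ∈ ([] : List E).toFinset then (1:ℝ) else 0) = 0 := by
            intro x; simp
          have h0 : phiMap src tgt A (fun x => if x ∈ ([] : List E).toFinset then (1:ℝ) else 0) u
              = 0 := by
            rw [phiMap_apply, Finset.sum_congr rfl (fun x _ => hzero x),
              Finset.sum_congr rfl (fun x _ => hzero x), Finset.sum_const, Finset.sum_const]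
            simp
          rw [h0, hves]; ring
        | a :: l1', hl, hnd, hlH, hsrce =>
          have hch1 : (a :: l1').Chain' (fun p q => tgt p = src q) :=
            (List.isChain_append.1 hl.2.2.2).1
          have hnd1 : (a :: l1').Nodup := hnd.of_append_left
          have hha : ∀ x ∈ (a :: l1').head?, src x = s := by
            intro x hx
            have hxa : a = x := by simpa using hx
            subst hxa
            exact hl.2.1 a rfl
          have hhb : ∀ x ∈ (a :: l1').getLast?, tgt x = v.1 := by
            intro x hx
            have h3 := (List.isChain_append.1 hl.2.2.2).2.2 x hx e rfl
            rw [h3, hsrce]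
          exact netC src tgt _ (List.cons_ne_nil a l1') hch1 hnd1 s v.1 u.1 hha hhb
      have huv : (if u.1 = v.1 then (1:ℝ) else 0) = (if v = u then 1 else 0) := by
        rcases eq_or_ne v u with h | h
        · rw [if_pos h, if_pos (by rw [h])]
        · rw [if_neg h, if_neg (fun hh => h (Subtype.ext (hh.symm)))]
      rw [Pi.sub_apply, hφ1, hφl, if_neg hut, huv]
      ring
    rw [eq_top_iff]
    intro f _
    rw [pi_eq_sum_univ f]
    exact Submodule.sum_mem _ fun v _ => Submodule.smul_mem _ _ (hsingle v)
  have hKrank : Module.finrank ℝ ↥K + A.card = H.card := by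
    have e1 : Module.finrank ℝ ↥K = Module.finrank ℝ ↥(LinearMap.ker ψ) :=
      ((Submodule.equivMapOfInjective W.subtype Subtype.val_injective
        (LinearMap.ker ψ)).finrank_eq).symm
    have e2 := LinearMap.finrank_range_add_finrank_ker ψ
    rw [hrange] at e2
    rw [finrank_top] at e2
    rw [Module.finrank_fintype_fun_eq_card, Fintype.card_coe] at e2
    rw [e1, ← finrank_Wsub (E := E) H, ← e2]
    omega
  -- final arithmetic
  rw [hspan]
  have hA1 : A.card + 1 = Vfin.card := by
    rw [hA, Finset.card_erase_of_mem htV]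
    have : 1 ≤ Vfin.card := Finset.card_pos.2 ⟨t, htV⟩
    omega
  have hstsub : ({s, t} : Finset V) ⊆ Vfin := by
    rw [Finset.insert_subset_iff]
    exact ⟨hsV, Finset.singleton_subset_iff.2 htV⟩
  have hsub : (Vfin \ {s, t}).card + 2 = Vfin.card := by
    rw [Finset.card_sdiff_of_subset hstsub, Finset.card_pair hst]
    have := Finset.card_le_card hstsub
    rw [Finset.card_pair hst] at this
    omega
  rw [Dval]
  rw [← hVfin]
  omega
end

section
/- Let G be a finite DAG with unique source s, unique sink t, at least one s-t path, and such that every arc of G lies on some s-t path. Then the representing polynomial of DAG-Connectivity_G has full degree: its coefficient α_{E(G)} on the monomial ∏_{e∈E(G)} x_e equals (−1)^{D(G)} ≠ 0, so deg p_G = |E(G)|. -/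
namespace Stmt13Aux

variable {V E : Type}

/-- reach forward along a chain: from src of head to src of any member -/
lemma refl_src (src tgt : E → V) (r : V → V → Prop) :
    ∀ (l : List E), (∀ e ∈ l, r (src e) (tgt e)) →
      l.Chain' (fun e f => tgt e = src f) →
      ∀ f ∈ l, ∀ g ∈ l.head?, Relation.ReflTransGen r (src g) (src f) := by
  intro l
  induction l with
  | nil => intro _ _ f hf; simp at hf
  | cons a m ih =>
    intro hr hc f hf g hg
    simp at hg; subst hg
    rcases List.mem_cons.1 hf with h | h
    · subst h; exact Relation.ReflTransGen.refl
    · match m, hf, h with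
      | b :: m', _, h =>
        have hc' : (b :: m').Chain' (fun e f => tgt e = src f) := hc.tail
        have hab : tgt a = src b := (List.isChain_cons_cons.1 hc).1
        have : Relation.ReflTransGen r (src b) (src f) :=
          ih (fun e he => hr e (List.mem_cons_of_mem _ he)) hc' f h b rfl
        exact Relation.ReflTransGen.head (hab ▸ hr a (by simp)) this

/-- reach forward: from tgt of any member to tgt of last -/
lemma refl_tgt (src tgt : E → V) (r : V → V → Prop) :
    ∀ (l : List E), (∀ e ∈ l, r (src e) (tgt e)) →
      l.Chain' (fun e f => tgt e = src f) →
      ∀ f ∈ l, ∀ g ∈ l.getLast?, Relation.ReflTransGen r (tgt f) (tgt g) := by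
  intro l
  induction l with
  | nil => intro _ _ f hf; simp at hf
  | cons a m ih =>
    intro hr hc f hf g hg
    match m with
    | [] =>
      simp at hf hg; subst hf; subst hg; exact Relation.ReflTransGen.refl
    | b :: m' =>
      have hc' : (b :: m').Chain' (fun e f => tgt e = src f) := hc.tail
      have hab : tgt a = src b := (List.isChain_cons_cons.1 hc).1
      have hg' : g ∈ (b :: m').getLast? := by
        simpa [List.getLast?_cons_cons] using hg
      have hr' : ∀ e ∈ b :: m', r (src e) (tgt e) :=
        fun e he => hr e (List.mem_cons_of_mem _ he)
      rcases List.mem_cons.1 hf with h | h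
      · subst h
        have : Relation.ReflTransGen r (tgt b) (tgt g) := ih hr' hc' b (by simp) g hg'
        exact Relation.ReflTransGen.head (hab ▸ hr b (by simp)) this
      · exact ih hr' hc' f h g hg'

/-- chains in an acyclic graph have no duplicate edges -/
lemma walk_nodup (src tgt : E → V) (r : V → V → Prop)
    (hacyc : ∀ v, ¬ Relation.TransGen r v v) :
    ∀ (l : List E), (∀ e ∈ l, r (src e) (tgt e)) →
      l.Chain' (fun e f => tgt e = src f) → l.Nodup := by
  intro l
  induction l with
  | nil => intro _ _; simp
  | cons a m ih =>
    intro hr hc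
    have hr' : ∀ e ∈ m, r (src e) (tgt e) := fun e he => hr e (List.mem_cons_of_mem _ he)
    have hm : m.Nodup := ih hr' hc.tail
    refine List.nodup_cons.2 ⟨?_, hm⟩
    intro ham
    match m, ham with
    | b :: m', ham =>
      have hab : tgt a = src b := (List.isChain_cons_cons.1 hc).1
      have h1 : Relation.ReflTransGen r (src b) (src a) :=
        refl_src src tgt r (b :: m') hr' hc.tail a ham b rfl
      exact hacyc (src a)
        (Relation.TransGen.head' (hab ▸ hr a (by simp)) h1)

/-- the sink `t` has no outgoing edge among covered edges -/
lemma no_out_of_t (src tgt : E → V) (s t : V) (K : Finset E)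
    (hacyc : ∀ v, ¬ Relation.TransGen
      (fun a b => ∃ e ∈ K, src e = a ∧ tgt e = b) v v)
    (hcov : ∀ g ∈ K, ∃ l, IsPathFrom src tgt s t l ∧ (∀ e ∈ l, e ∈ K) ∧ g ∈ l) :
    ∀ g ∈ K, src g ≠ t := by
  intro g hg hsg
  obtain ⟨l, ⟨hne, _, hlast, hchain⟩, hlK, hgl⟩ := hcov g hg
  set r : V → V → Prop := fun a b => ∃ e ∈ K, src e = a ∧ tgt e = b with hrdef
  have hr : ∀ e ∈ l, r (src e) (tgt e) := fun e he => ⟨e, hlK e he, rfl, rfl⟩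
  obtain ⟨lst, hlst⟩ := List.getLast?_isSome.2 hne |> Option.isSome_iff_exists.1
  have h1 : Relation.ReflTransGen r (tgt g) (tgt lst) :=
    refl_tgt src tgt r l hr hchain g hgl lst hlst
  have h2 : tgt lst = t := hlast lst hlst
  have h3 : r t (tgt g) := ⟨g, hg, hsg, rfl⟩
  exact hacyc t (Relation.TransGen.head' h3 (h2 ▸ h1))

end Stmt13Aux

namespace Stmt13Aux

open Classical

variable {V E : Type}

/-- `T` connects `s` to `t` by a walk using only edges of `T`. -/
def WalkW (src tgt : E → V) (s t : V) (T : Finset E) : Prop :=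
  ∃ l : List E, IsPathFrom src tgt s t l ∧ ∀ e ∈ l, e ∈ T

open Classical in
noncomputable def NN [Fintype E] [DecidableEq E] (src tgt : E → V) (s t : V)
    (K : Finset E) : ℝ :=
  ∑ T ∈ K.powerset, if WalkW src tgt s t T then (-1 : ℝ) ^ (K.card - T.card) else 0

open Classical in
noncomputable def nV [DecidableEq E] (src tgt : E → V) (s t : V) (K : Finset E) : ℕ :=
  ((K.image src ∪ K.image tgt) \ {s, t}).card

lemma WalkW.mono {src tgt : E → V} {s t : V} {T T' : Finset E} (h : T ⊆ T')
    (hw : WalkW src tgt s t T) : WalkW src tgt s t T' := by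
  obtain ⟨l, hl, hm⟩ := hw
  exact ⟨l, hl, fun e he => h (hm e he)⟩

/-- replacing a parallel edge along a walk -/
lemma walk_map {src tgt : E → V} {s t : V} (f : E → E)
    (hf : ∀ e, src (f e) = src e ∧ tgt (f e) = tgt e)
    {l : List E} (hl : IsPathFrom src tgt s t l) :
    IsPathFrom src tgt s t (l.map f) := by
  obtain ⟨hne, hhead, hlast, hchain⟩ := hl
  refine ⟨by simpa using hne, ?_, ?_, ?_⟩
  · intro e he
    rw [List.head?_map] at he
    obtain ⟨a, ha, rfl⟩ := Option.map_eq_some_iff.1 (Option.mem_def.1 he)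
    rw [(hf a).1]; exact hhead a (Option.mem_def.2 ha)
  · intro e he
    rw [List.getLast?_map] at he
    obtain ⟨a, ha, rfl⟩ := Option.map_eq_some_iff.1 (Option.mem_def.1 he)
    rw [(hf a).2]; exact hlast a (Option.mem_def.2 ha)
  · unfold List.Chain'
    rw [List.isChain_map]
    exact hchain.imp (fun a b h => by rw [(hf a).2, (hf b).1]; exact h)

/-- existence of a maximal element for a transitive irreflexive relation -/
lemma exists_maximal_rel [DecidableEq V] (r : V → V → Prop)
    (htrans : ∀ {a b c}, r a b → r b c → r a c) (hirr : ∀ a, ¬ r a a) :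
    ∀ (S : Finset V), S.Nonempty → ∃ u ∈ S, ∀ w ∈ S, ¬ r u w := by
  intro S
  induction S using Finset.strongInduction with
  | _ S ih =>
    intro hS
    obtain ⟨a, ha⟩ := hS
    by_cases hmax : ∀ w ∈ S, ¬ r a w
    · exact ⟨a, ha, hmax⟩
    · push_neg at hmax
      obtain ⟨b, hb, hab⟩ := hmax
      set S' := S.filter (fun v => r a v) with hS'
      have hb' : b ∈ S' := Finset.mem_filter.2 ⟨hb, hab⟩
      have hss : S' ⊂ S := by
        refine Finset.ssubset_iff_of_subset (Finset.filter_subset _ _) |>.2 ?_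
        exact ⟨a, ha, fun h => hirr a (Finset.mem_filter.1 h).2⟩
      obtain ⟨u, hu, humax⟩ := ih S' hss ⟨b, hb'⟩
      refine ⟨u, (Finset.filter_subset _ _) hu, ?_⟩
      intro w hw hrw
      have hau : r a u := (Finset.mem_filter.1 hu).2
      exact humax w (Finset.mem_filter.2 ⟨hw, htrans hau hrw⟩) hrw

end Stmt13Aux

namespace Stmt13Aux

variable {V E : Type}

lemma chain'_imp_mem {α : Type*} {R S : α → α → Prop} :
    ∀ (l : List α), l.Chain' R → (∀ a ∈ l, ∀ b ∈ l, R a b → S a b) → l.Chain' S := by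
  intro l
  induction l with
  | nil => intro _ _; exact List.isChain_nil
  | cons a m ih =>
    intro hc h
    match m with
    | [] => exact List.isChain_singleton _
    | b :: m' =>
      unfold List.Chain' at hc ⊢
      rw [List.isChain_cons_cons] at hc ⊢
      refine ⟨h a (by simp) b (by simp) hc.1, ih hc.2 ?_⟩
      intro x hx y hy
      exact h x (List.mem_cons_of_mem _ hx) y (List.mem_cons_of_mem _ hy)

open Classical in
lemma walk_contract [DecidableEq E] (src tgt tgt' : E → V) (s t : V) (K : Finset E)
    (e : E) (u : V)
    (htgt' : ∀ g, tgt' g = if tgt g = u then t else tgt g)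
    (heK : e ∈ K) (hsrc : src e = u) (htgt : tgt e = t)
    (hus : u ≠ s) (hut : u ≠ t)
    (huniq : ∀ g ∈ K, src g = u → g = e)
    (hnot : ∀ g ∈ K, src g ≠ t)
    (hacyc : ∀ v, ¬ Relation.TransGen
      (fun a b => ∃ g ∈ K, src g = a ∧ tgt g = b) v v)
    (T : Finset E) (hT : T ⊆ K.erase e) :
    WalkW src tgt s t (insert e T) ↔ WalkW src tgt' s t T := by
  have htgt'u : ∀ g, tgt g = u → tgt' g = t := by
    intro g h; rw [htgt' g, if_pos h]
  have htgt'n : ∀ g, tgt g ≠ u → tgt' g = tgt g := by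
    intro g h; rw [htgt' g, if_neg h]
  have hTK : ∀ g ∈ T, g ∈ K ∧ g ≠ e := by
    intro g hg
    have := hT hg
    exact ⟨Finset.mem_of_mem_erase this, Finset.ne_of_mem_erase this⟩
  constructor
  · rintro ⟨l, hl, hmem⟩
    obtain ⟨hne, hhead, hlast, hchain⟩ := hl
    have hlK : ∀ g ∈ l, g ∈ K := by
      intro g hg
      rcases Finset.mem_insert.1 (hmem g hg) with h | h
      · exact h ▸ heK
      · exact (hTK g h).1
    have hnd : l.Nodup := walk_nodup src tgt _
      hacyc l (fun g hg => ⟨g, hlK g hg, rfl, rfl⟩) hchain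
    by_cases hel : e ∈ l
    · -- e occurs, necessarily last
      obtain ⟨l₁, l₂, rfl⟩ := List.append_of_mem hel
      have hl₂ : l₂ = [] := by
        match l₂ with
        | [] => rfl
        | f :: l₂' =>
          have h2 : List.Chain' (fun e f => tgt e = src f) [e, f] :=
            hchain.infix ⟨l₁, l₂', by simp⟩
          have hef : tgt e = src f :=
            (List.isChain_pair (R := fun e f => tgt e = src f)).1 h2
          exact absurd (htgt ▸ hef.symm : src f = t)
            (hnot f (hlK f (by simp)))
      subst hl₂
      have hl₁ne : l₁ ≠ [] := by
        rintro rfl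
        exact hus (hsrc.symm.trans (hhead e rfl))
      have hel₁ : e ∉ l₁ := by
        intro h
        exact List.disjoint_of_nodup_append hnd h (by simp)
      refine ⟨l₁, ⟨hl₁ne, ?_, ?_, ?_⟩, ?_⟩
      · intro g hg
        apply hhead
        rw [List.head?_append, Option.mem_def] at *
        rw [Option.mem_def.1 hg]
        rfl
      · -- last of l₁ has tgt = u, so tgt' = t
        intro g hg
        have hjunction : tgt g = src e := (List.isChain_append.1 hchain).2.2 g hg e rfl
        exact htgt'u g (hjunction.trans hsrc)
      · -- chain for tgt'
        refine chain'_imp_mem l₁ (hchain.prefix ⟨[e], rfl⟩) ?_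
        intro a ha b hb hab
        by_cases hau : tgt a = u
        · exfalso
          have : b = e := huniq b (hlK b (by simp [hb])) (hab.symm.trans hau)
          exact hel₁ (this ▸ hb)
        · rw [htgt'n a hau]; exact hab
      · intro g hg
        rcases Finset.mem_insert.1 (hmem g (by simp [hg])) with h | h
        · exact absurd (h ▸ hg) hel₁
        · exact h
    · -- e not in l : l itself works
      refine ⟨l, ⟨hne, hhead, ?_, ?_⟩, ?_⟩
      · intro g hg
        have h1 := hlast g hg
        rw [htgt'n g (by rw [h1]; exact fun h => hut h.symm)]
        exact h1
      · refine chain'_imp_mem l hchain ?_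
        intro a ha b hb hab
        by_cases hau : tgt a = u
        · exfalso
          have : b = e := huniq b (hlK b hb) (hab.symm.trans hau)
          exact hel (this ▸ hb)
        · rw [htgt'n a hau]; exact hab
      · intro g hg
        rcases Finset.mem_insert.1 (hmem g hg) with h | h
        · exact absurd (h ▸ hg) hel
        · exact h
  · rintro ⟨l, hl, hmem⟩
    obtain ⟨hne, hhead, hlast, hchain⟩ := hl
    have hlK : ∀ g ∈ l, g ∈ K := fun g hg => (hTK g (hmem g hg)).1
    -- consecutive pairs never have tgt = u
    have hchain_tgt : l.Chain' (fun a b => tgt a = src b) := by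
      refine chain'_imp_mem l hchain ?_
      intro a ha b hb hab
      by_cases hau : tgt a = u
      · exfalso
        rw [htgt'u a hau] at hab
        exact hnot b (hlK b hb) hab.symm
      · rwa [htgt'n a hau] at hab
    obtain ⟨lst, hlst⟩ := Option.isSome_iff_exists.1 (List.getLast?_isSome.2 hne)
    have hlstmem : lst ∈ l := List.mem_of_getLast? hlst
    by_cases hlu : tgt lst = u
    · -- append e
      refine ⟨l ++ [e], ⟨by simp, ?_, ?_, ?_⟩, ?_⟩
      · intro g hg
        apply hhead
        rw [List.head?_append, Option.mem_def] at hg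
        match l, hne with
        | a :: l', _ => simpa using hg
      · intro g hg
        rw [Option.mem_def, List.getLast?_concat, Option.some_inj] at hg
        subst hg
        exact htgt
      · unfold List.Chain'
        rw [List.isChain_append]
        refine ⟨hchain_tgt, by simp, ?_⟩
        intro x hx y hy
        simp only [List.head?_cons, Option.mem_def, Option.some_inj] at hy
        subst hy
        rw [Option.mem_def, hlst, Option.some_inj] at hx
        subst hx
        rw [hlu, hsrc]
      · intro g hg
        rcases List.mem_append.1 hg with h | h
        · exact Finset.mem_insert_of_mem (hmem g h)
        · simp at h; subst h; exact Finset.mem_insert_self _ _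
    · -- l itself is a tgt-walk
      refine ⟨l, ⟨hne, hhead, ?_, hchain_tgt⟩, ?_⟩
      · intro g hg
        rw [Option.mem_def, hlst, Option.some_inj] at hg
        subst hg
        have h1 := hlast lst (Option.mem_def.2 hlst)
        rwa [htgt'n lst hlu] at h1
      · intro g hg
        exact Finset.mem_insert_of_mem (hmem g hg)

end Stmt13Aux

namespace Stmt13Aux

variable {V E : Type}

lemma NN_dead [Fintype E] [DecidableEq E] (src tgt : E → V) (s t : V)
    (K : Finset E) (g₀ : E) (hg : g₀ ∈ K)
    (hdead : ∀ l : List E, IsPathFrom src tgt s t l → (∀ e ∈ l, e ∈ K) → g₀ ∉ l) :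
    NN src tgt s t K = 0 := by
  classical
  set K₀ := K.erase g₀ with hK₀
  have hins : insert g₀ K₀ = K := Finset.insert_erase hg
  have hgK₀ : g₀ ∉ K₀ := Finset.notMem_erase _ _
  have hcard : K.card = K₀.card + 1 := by
    rw [← hins, Finset.card_insert_of_notMem hgK₀]
  have hexp : NN src tgt s t K =
      ∑ T ∈ K₀.powerset,
        ((if WalkW src tgt s t T then (-1 : ℝ) ^ (K.card - T.card) else 0) +
         (if WalkW src tgt s t (insert g₀ T) then
            (-1 : ℝ) ^ (K.card - (insert g₀ T).card) else 0)) := by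
    rw [NN]
    conv_lhs => rw [← hins]
    rw [Finset.sum_powerset_insert hgK₀, Finset.sum_add_distrib, hins]
  rw [hexp]
  refine Finset.sum_eq_zero ?_
  intro T hT
  have hTsub : T ⊆ K₀ := Finset.mem_powerset.1 hT
  have hgT : g₀ ∉ T := fun h => hgK₀ (hTsub h)
  have hWiff : WalkW src tgt s t (insert g₀ T) ↔ WalkW src tgt s t T := by
    constructor
    · rintro ⟨l, hl, hmem⟩
      have hlK : ∀ e ∈ l, e ∈ K := by
        intro e he
        rcases Finset.mem_insert.1 (hmem e he) with h | h
        · exact h ▸ hg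
        · exact (Finset.erase_subset _ _) (hTsub h)
      have hg₀l : g₀ ∉ l := hdead l hl hlK
      refine ⟨l, hl, fun e he => ?_⟩
      rcases Finset.mem_insert.1 (hmem e he) with h | h
      · exact absurd (h ▸ he) hg₀l
      · exact h
    · exact WalkW.mono (Finset.subset_insert _ _)
  have hc1 : (insert g₀ T).card = T.card + 1 := Finset.card_insert_of_notMem hgT
  have hc2 : T.card ≤ K₀.card := Finset.card_le_card hTsub
  have hc3 : K.card - T.card = (K.card - (T.card + 1)) + 1 := by omega
  rw [hWiff, hc1, hc3]
  by_cases hW : WalkW src tgt s t T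
  · rw [if_pos hW, if_pos hW, pow_succ]; ring
  · rw [if_neg hW, if_neg hW]; ring

end Stmt13Aux

namespace Stmt13Aux

variable {V E : Type}

lemma sum_powerset_erase [DecidableEq E] (K : Finset E) (e : E) (he : e ∈ K)
    (f : Finset E → ℝ) :
    ∑ T ∈ K.powerset, f T =
      ∑ T ∈ (K.erase e).powerset, (f T + f (insert e T)) := by
  conv_lhs => rw [← Finset.insert_erase he]
  rw [Finset.sum_powerset_insert (Finset.notMem_erase e K), Finset.sum_add_distrib]

lemma walk_swap [DecidableEq E] {src tgt : E → V} {s t : V} {e e' : E}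
    (h1 : src e = src e') (h2 : tgt e = tgt e') (A : Finset E)
    (hw : WalkW src tgt s t (insert e A)) : WalkW src tgt s t (insert e' A) := by
  obtain ⟨l, hl, hmem⟩ := hw
  set f : E → E := fun g => if g = e then e' else g with hf
  have hfp : ∀ g, src (f g) = src g ∧ tgt (f g) = tgt g := by
    intro g
    by_cases hg : g = e
    · simp [hf, hg, h1.symm, h2.symm]
    · simp [hf, hg]
  refine ⟨l.map f, walk_map f hfp hl, ?_⟩
  intro g hg
  obtain ⟨a, ha, rfl⟩ := List.mem_map.1 hg
  by_cases hae : a = e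
  · simp [hf, hae]
  · have : a ∈ A := by
      rcases Finset.mem_insert.1 (hmem a ha) with h | h
      · exact absurd h hae
      · exact h
    simp only [hf]
    rw [if_neg hae]
    exact Finset.mem_insert_of_mem this

lemma NN_parallel [Fintype E] [DecidableEq E] (src tgt : E → V) (s t : V)
    (K : Finset E) (e e' : E) (he : e ∈ K) (he' : e' ∈ K) (hne : e ≠ e')
    (h1 : src e = src e') (h2 : tgt e = tgt e') :
    NN src tgt s t K = - NN src tgt s t (K.erase e) := by
  classical
  have he'K' : e' ∈ K.erase e := Finset.mem_erase.2 ⟨hne.symm, he'⟩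
  set fK : Finset E → ℝ :=
    fun T => if WalkW src tgt s t T then (-1 : ℝ) ^ (K.card - T.card) else 0 with hfK
  set fK' : Finset E → ℝ :=
    fun T => if WalkW src tgt s t T then (-1 : ℝ) ^ ((K.erase e).card - T.card) else 0
    with hfK'
  have hNNK : NN src tgt s t K =
      ∑ A ∈ ((K.erase e).erase e').powerset,
        ((fK A + fK (insert e A)) + (fK (insert e' A) + fK (insert e (insert e' A)))) := by
    rw [NN, ← hfK, sum_powerset_erase K e he fK,
      sum_powerset_erase (K.erase e) e' he'K' (fun T => fK T + fK (insert e T))]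
  have hNNK' : NN src tgt s t (K.erase e) =
      ∑ A ∈ ((K.erase e).erase e').powerset, (fK' A + fK' (insert e' A)) := by
    rw [NN, ← hfK', sum_powerset_erase (K.erase e) e' he'K' fK']
  rw [hNNK, hNNK', ← Finset.sum_neg_distrib]
  refine Finset.sum_congr rfl ?_
  intro A hA
  have hAsub : A ⊆ (K.erase e).erase e' := Finset.mem_powerset.1 hA
  have heA : e ∉ A := fun h => (Finset.notMem_erase e K) ((Finset.erase_subset _ _) (hAsub h))
  have he'A : e' ∉ A := fun h => (Finset.notMem_erase e' (K.erase e)) (hAsub h)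
  have heA' : e ∉ insert e' A := by
    simp [Finset.mem_insert, heA, hne]
  -- walk equivalences
  have hWee' : WalkW src tgt s t (insert e A) ↔ WalkW src tgt s t (insert e' A) :=
    ⟨walk_swap h1 h2 A, walk_swap h1.symm h2.symm A⟩
  have hWdd : WalkW src tgt s t (insert e (insert e' A)) ↔
      WalkW src tgt s t (insert e' A) := by
    constructor
    · intro h
      have := walk_swap h1 h2 (insert e' A) h
      rwa [Finset.insert_idem] at this
    · exact WalkW.mono (Finset.subset_insert _ _)
  -- cards
  have hc0 : A.card ≤ ((K.erase e).erase e').card := Finset.card_le_card hAsub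
  have hcK : K.card = ((K.erase e).erase e').card + 2 := by
    have h1' : (K.erase e).card = K.card - 1 := Finset.card_erase_of_mem he
    have h2' : ((K.erase e).erase e').card = (K.erase e).card - 1 :=
      Finset.card_erase_of_mem he'K'
    have h3' : 1 ≤ K.card := Finset.card_pos.2 ⟨e, he⟩
    have h4' : 1 ≤ (K.erase e).card := Finset.card_pos.2 ⟨e', he'K'⟩
    omega
  have hcK' : (K.erase e).card = ((K.erase e).erase e').card + 1 := by
    have h2' : ((K.erase e).erase e').card = (K.erase e).card - 1 :=
      Finset.card_erase_of_mem he'K'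
    have h4' : 1 ≤ (K.erase e).card := Finset.card_pos.2 ⟨e', he'K'⟩
    omega
  have hcA1 : (insert e A).card = A.card + 1 := Finset.card_insert_of_notMem heA
  have hcA2 : (insert e' A).card = A.card + 1 := Finset.card_insert_of_notMem he'A
  have hcA3 : (insert e (insert e' A)).card = A.card + 2 := by
    rw [Finset.card_insert_of_notMem heA', hcA2]
  set m := ((K.erase e).erase e').card - A.card with hm
  have e1 : K.card - A.card = m + 2 := by omega
  have e2 : K.card - (insert e A).card = m + 1 := by omega
  have e3 : K.card - (insert e' A).card = m + 1 := by omega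
  have e4 : K.card - (insert e (insert e' A)).card = m := by omega
  have e5 : (K.erase e).card - A.card = m + 1 := by omega
  have e6 : (K.erase e).card - (insert e' A).card = m := by omega
  simp only [hfK, hfK', hWee', hWdd, e1, e2, e3, e4, e5, e6]
  by_cases a : WalkW src tgt s t A <;> by_cases b : WalkW src tgt s t (insert e' A) <;>
    simp [a, b, pow_succ] <;> ring

end Stmt13Aux

namespace Stmt13Aux

variable {V E : Type}

open Classical in
lemma NN_eq [Fintype E] [DecidableEq E] (src : E → V) (s t : V) :
    ∀ (n : ℕ) (tgt : E → V) (K : Finset E), K.card ≤ n → K.Nonempty →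
    (∀ v, ¬ Relation.TransGen (fun a b => ∃ g ∈ K, src g = a ∧ tgt g = b) v v) →
    (∀ g ∈ K, ∃ l, IsPathFrom src tgt s t l ∧ (∀ e ∈ l, e ∈ K) ∧ g ∈ l) →
    NN src tgt s t K = (-1 : ℝ) ^ (K.card + nV src tgt s t K + 1) := by
  intro n
  induction n with
  | zero =>
    intro tgt K hcard hne
    exact absurd (Finset.card_eq_zero.1 (Nat.le_zero.1 hcard)) hne.ne_empty
  | succ n ih =>
    intro tgt K hcard hne hacyc hcov
    have hnot : ∀ g ∈ K, src g ≠ t := no_out_of_t src tgt s t K hacyc hcov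
    by_cases hpar : ∃ e ∈ K, ∃ e' ∈ K, e ≠ e' ∧ src e = src e' ∧ tgt e = tgt e'
    · -- parallel edge case
      obtain ⟨e, he, e', he', hne', h1, h2⟩ := hpar
      have he'K' : e' ∈ K.erase e := Finset.mem_erase.2 ⟨hne'.symm, he'⟩
      have heK' : e ∉ K.erase e := Finset.notMem_erase _ _
      have hcK : K.card = (K.erase e).card + 1 := by
        have := Finset.card_erase_of_mem he
        have := Finset.card_pos.2 ⟨e, he⟩
        omega
      have hrec := ih tgt (K.erase e) (by omega) ⟨e', he'K'⟩ ?_ ?_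
      · have hnV : nV src tgt s t (K.erase e) = nV src tgt s t K := by
          unfold nV
          congr 2
          apply Finset.Subset.antisymm
          · apply Finset.union_subset
            · exact (Finset.image_subset_image (Finset.erase_subset _ _)).trans
                Finset.subset_union_left
            · exact (Finset.image_subset_image (Finset.erase_subset _ _)).trans
                Finset.subset_union_right
          · apply Finset.union_subset
            · intro x hx
              obtain ⟨g, hg, rfl⟩ := Finset.mem_image.1 hx
              by_cases hge : g = e
              · subst hge
                exact Finset.mem_union_left _
                  (Finset.mem_image.2 ⟨e', he'K', h1.symm⟩)
              · exact Finset.mem_union_left _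
                  (Finset.mem_image.2 ⟨g, Finset.mem_erase.2 ⟨hge, hg⟩, rfl⟩)
            · intro x hx
              obtain ⟨g, hg, rfl⟩ := Finset.mem_image.1 hx
              by_cases hge : g = e
              · subst hge
                exact Finset.mem_union_right _
                  (Finset.mem_image.2 ⟨e', he'K', h2.symm⟩)
              · exact Finset.mem_union_right _
                  (Finset.mem_image.2 ⟨g, Finset.mem_erase.2 ⟨hge, hg⟩, rfl⟩)
        rw [NN_parallel src tgt s t K e e' he he' hne' h1 h2, hrec, hnV, hcK]
        rw [show (K.erase e).card + 1 + nV src tgt s t K + 1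
            = ((K.erase e).card + nV src tgt s t K + 1) + 1 by ring, pow_succ]
        ring
      · -- acyclicity on K.erase e
        intro v hv
        exact hacyc v (Relation.TransGen.mono
          (by intro a b ⟨g, hg, hp⟩; exact ⟨g, (Finset.erase_subset _ _) hg, hp⟩) v v hv)
      · -- cover on K.erase e
        intro g hg
        obtain ⟨l, hl, hlK, hgl⟩ := hcov g ((Finset.erase_subset _ _) hg)
        have hge : g ≠ e := Finset.ne_of_mem_erase hg
        set f : E → E := fun x => if x = e then e' else x with hf
        have hfp : ∀ x, src (f x) = src x ∧ tgt (f x) = tgt x := by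
          intro x
          by_cases hx : x = e
          · simp [hf, hx, h1.symm, h2.symm]
          · simp [hf, hx]
        refine ⟨l.map f, walk_map f hfp hl, ?_, ?_⟩
        · intro x hx
          obtain ⟨a, ha, rfl⟩ := List.mem_map.1 hx
          by_cases hae : a = e
          · simp only [hf, hae, if_pos rfl]
            exact he'K'
          · simp only [hf, if_neg hae]
            exact Finset.mem_erase.2 ⟨hae, hlK a ha⟩
        · refine List.mem_map.2 ⟨g, hgl, ?_⟩
          simp [hf, hge]
    · -- no parallel edges
      push_neg at hpar
      -- find a maximal source vertex u
      obtain ⟨g₁, hg₁⟩ := hne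
      have hS₀ : (K.image src).Nonempty := ⟨src g₁, Finset.mem_image.2 ⟨g₁, hg₁, rfl⟩⟩
      set r : V → V → Prop := fun a b =>
        Relation.TransGen (fun a b => ∃ g ∈ K, src g = a ∧ tgt g = b) a b with hr
      obtain ⟨u, huS, humax⟩ := exists_maximal_rel r
        (fun h1 h2 => Relation.TransGen.trans h1 h2) hacyc (K.image src) hS₀
      obtain ⟨e, he, hsrcu⟩ := Finset.mem_image.1 huS
      -- every out-edge of u targets t
      have hA : ∀ f ∈ K, src f = u → tgt f = t := by
        intro f hf hsf
        obtain ⟨l, ⟨hne', hhead, hlast, hchain⟩, hlK, hfl⟩ := hcov f hf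
        obtain ⟨l₁, l₂, rfl⟩ := List.append_of_mem hfl
        match l₂ with
        | [] =>
          have := hlast f (by rw [Option.mem_def, List.getLast?_concat])
          exact this
        | h :: l₂' =>
          exfalso
          have hch : List.Chain' (fun a b => tgt a = src b) [f, h] :=
            hchain.infix ⟨l₁, l₂', by simp⟩
          have hfh : tgt f = src h :=
            (List.isChain_pair (R := fun a b => tgt a = src b)).1 hch
          have hhK : h ∈ K := hlK h (by simp)
          refine humax (tgt f) ?_ ?_
          · exact Finset.mem_image.2 ⟨h, hhK, hfh.symm⟩
          · exact Relation.TransGen.single ⟨f, hf, hsf, rfl⟩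
      have htgte : tgt e = t := hA e he hsrcu
      have hut : u ≠ t := fun h => hnot e he (hsrcu.trans h)
      -- e is the unique out-edge of u
      have huniq : ∀ g ∈ K, src g = u → g = e := by
        intro g hg hsg
        by_contra hge
        exact hpar g hg e he hge (hsg.trans hsrcu.symm) ((hA g hg hsg).trans htgte.symm)
      by_cases hus : u = s
      · -- base case : K = {e}
        have hKe : K = {e} := by
          apply Finset.eq_singleton_iff_unique_mem.2
          refine ⟨he, ?_⟩
          intro g hg
          obtain ⟨l, ⟨hne', hhead, hlast, hchain⟩, hlK, hgl⟩ := hcov g hg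
          match l, hne' with
          | h :: l', _ =>
            have hhs : src h = s := hhead h rfl
            have hhe : h = e := huniq h (hlK h (by simp)) (by rw [hhs, hus])
            subst hhe
            match l' with
            | [] => simpa using hgl
            | f :: l'' =>
              exfalso
              have hef : tgt h = src f := (List.isChain_cons_cons.1 hchain).1
              exact hnot f (hlK f (by simp)) (htgte ▸ hef).symm
        subst hKe
        have hW1 : WalkW src tgt s t {e} := by
          refine ⟨[e], ⟨by simp, ?_, ?_, List.isChain_singleton _⟩, by simp⟩
          · intro g hg; simp at hg; subst hg; rw [hsrcu, hus]
          · intro g hg; simp at hg; subst hg; exact htgte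
        have hW0 : ¬ WalkW src tgt s t (∅ : Finset E) := by
          rintro ⟨l, ⟨hne', _, _, _⟩, hmem⟩
          match l, hne' with
          | h :: l', _ => exact absurd (hmem h (by simp)) (by simp)
        have hNN : NN src tgt s t {e} = 1 := by
          rw [NN]
          rw [show ({e} : Finset E) = insert e ∅ by rfl,
            Finset.sum_powerset_insert (by simp)]
          simp only [Finset.powerset_empty, Finset.sum_singleton]
          rw [if_neg hW0, if_pos (by simpa using hW1)]
          simp
        have hnV0 : nV src tgt s t {e} = 0 := by
          unfold nV
          rw [Finset.card_eq_zero, Finset.sdiff_eq_empty_iff_subset]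
          intro x hx
          rcases Finset.mem_union.1 hx with h | h <;> simp at h
          · rw [h, hsrcu, hus]; simp
          · rw [h, htgte]; simp
        rw [hNN, hnV0]
        simp
      · -- contraction case
        -- find an in-edge g₀ of u
        obtain ⟨l, ⟨hne', hhead, hlast, hchain⟩, hlK, hel⟩ := hcov e he
        obtain ⟨l₁, l₂, hldec⟩ := List.append_of_mem hel
        have hl₁ne : l₁ ≠ [] := by
          rintro rfl
          simp only [List.nil_append] at hldec
          subst hldec
          exact hus ((hsrcu.symm.trans (hhead e rfl)))
        obtain ⟨g₀, hg₀last⟩ := Option.isSome_iff_exists.1 (List.getLast?_isSome.2 hl₁ne)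
        have hg₀l : g₀ ∈ l₁ := List.mem_of_getLast? hg₀last
        have hg₀K : g₀ ∈ K := hlK g₀ (hldec ▸ List.mem_append_left _ hg₀l)
        have hjunc : tgt g₀ = src e := by
          have hch := (List.isChain_append.1 (hldec ▸ hchain : List.Chain' _ (l₁ ++ e :: l₂)))
          exact hch.2.2 g₀ (Option.mem_def.2 hg₀last) e rfl
        have htgtg₀ : tgt g₀ = u := hjunc.trans hsrcu
        have hg₀e : g₀ ≠ e := fun h => hut (htgtg₀ ▸ h ▸ htgte)
        have hg₀K' : g₀ ∈ K.erase e := Finset.mem_erase.2 ⟨hg₀e, hg₀K⟩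
        set tgt' : E → V := fun g => if tgt g = u then t else tgt g with htgt'def
        have htgt'eq : ∀ g, tgt' g = if tgt g = u then t else tgt g := fun g => rfl
        have heK' : e ∉ K.erase e := Finset.notMem_erase _ _
        have hcK : K.card = (K.erase e).card + 1 := by
          have := Finset.card_erase_of_mem he
          have := Finset.card_pos.2 ⟨e, he⟩
          omega
        -- Step 1 : NN tgt K = NN tgt' K' - NN tgt K'
        have hstep1 : NN src tgt s t K =
            NN src tgt' s t (K.erase e) - NN src tgt s t (K.erase e) := by
          rw [NN, sum_powerset_erase K e he, Finset.sum_add_distrib]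
          have hA1 : ∑ T ∈ (K.erase e).powerset,
              (if WalkW src tgt s t T then (-1 : ℝ) ^ (K.card - T.card) else 0)
              = - NN src tgt s t (K.erase e) := by
            rw [NN, ← Finset.sum_neg_distrib]
            refine Finset.sum_congr rfl ?_
            intro T hT
            have hTc : T.card ≤ (K.erase e).card :=
              Finset.card_le_card (Finset.mem_powerset.1 hT)
            have : K.card - T.card = ((K.erase e).card - T.card) + 1 := by omega
            rw [this, pow_succ]
            by_cases hW : WalkW src tgt s t T <;> simp [hW]
          have hA2 : ∑ T ∈ (K.erase e).powerset,
              (if WalkW src tgt s t (insert e T) then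
                (-1 : ℝ) ^ (K.card - (insert e T).card) else 0)
              = NN src tgt' s t (K.erase e) := by
            rw [NN]
            refine Finset.sum_congr rfl ?_
            intro T hT
            have hTsub : T ⊆ K.erase e := Finset.mem_powerset.1 hT
            have hTc : T.card ≤ (K.erase e).card := Finset.card_le_card hTsub
            have heT : e ∉ T := fun h => heK' (hTsub h)
            have hci : (insert e T).card = T.card + 1 := Finset.card_insert_of_notMem heT
            have hcc : K.card - (insert e T).card = (K.erase e).card - T.card := by omega
            rw [hcc, walk_contract src tgt tgt' s t K e u htgt'eq he hsrcu htgte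
              (fun h => hus h) hut huniq hnot hacyc T hTsub]
          rw [hA1, hA2]
          ring
        -- Step 2 : NN tgt K' = 0
        have hstep2 : NN src tgt s t (K.erase e) = 0 := by
          refine NN_dead src tgt s t (K.erase e) g₀ hg₀K' ?_
          intro m hm hmK hg₀m
          obtain ⟨hmne, hmhead, hmlast, hmchain⟩ := hm
          obtain ⟨m₁, m₂, rfl⟩ := List.append_of_mem hg₀m
          match m₂ with
          | [] =>
            have := hmlast g₀ (by rw [Option.mem_def, List.getLast?_concat])
            exact hut (htgtg₀ ▸ this ▸ rfl)
          | f :: m₂' =>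
            have hch : List.Chain' (fun a b => tgt a = src b) [g₀, f] :=
              hmchain.infix ⟨m₁, m₂', by simp⟩
            have hgf : tgt g₀ = src f :=
              (List.isChain_pair (R := fun a b => tgt a = src b)).1 hch
            have hfK' : f ∈ K.erase e := hmK f (by simp)
            have hfe : f = e := huniq f (Finset.mem_of_mem_erase hfK')
              (hgf.symm.trans htgtg₀)
            exact heK' (hfe ▸ hfK')
        -- Step 3 : hypotheses for the contracted graph
        have hacyc' : ∀ v, ¬ Relation.TransGen
            (fun a b => ∃ g ∈ K.erase e, src g = a ∧ tgt' g = b) v v := by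
          intro v hv
          set r' : V → V → Prop :=
            fun a b => ∃ g ∈ K.erase e, src g = a ∧ tgt' g = b with hr'
          have hnosrc_t : ∀ b, ¬ r' t b := by
            rintro b ⟨g, hg, hsg, _⟩
            exact hnot g (Finset.mem_of_mem_erase hg) hsg
          have hvt : v ≠ t := by
            intro hveq
            rw [hveq] at hv
            obtain ⟨c, h, _⟩ := Relation.TransGen.head'_iff.1 hv
            exact hnosrc_t c h
          have key : ∀ a b, Relation.TransGen r' a b → b ≠ t →
              Relation.TransGen (fun a b => ∃ g ∈ K, src g = a ∧ tgt g = b) a b := by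
            intro a b hab
            induction hab with
            | @single b h =>
              intro hbt
              obtain ⟨g, hg, hsg, htg⟩ := h
              have htg2 : tgt g = b := by
                rw [htgt'eq] at htg
                by_cases hgu : tgt g = u
                · rw [if_pos hgu] at htg; exact absurd htg.symm hbt
                · rwa [if_neg hgu] at htg
              exact Relation.TransGen.single ⟨g, Finset.mem_of_mem_erase hg, hsg, htg2⟩
            | @tail c b h1 h2 ih2 =>
              intro hbt
              obtain ⟨g, hg, hsg, htg⟩ := h2
              have hct : c ≠ t := by
                rw [← hsg]; exact hnot g (Finset.mem_of_mem_erase hg)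
              have htg2 : tgt g = b := by
                rw [htgt'eq] at htg
                by_cases hgu : tgt g = u
                · rw [if_pos hgu] at htg; exact absurd htg.symm hbt
                · rwa [if_neg hgu] at htg
              exact (ih2 hct).tail ⟨g, Finset.mem_of_mem_erase hg, hsg, htg2⟩
          exact hacyc v (key v v hv hvt)
        have hcov' : ∀ g ∈ K.erase e, ∃ m, IsPathFrom src tgt' s t m ∧
            (∀ x ∈ m, x ∈ K.erase e) ∧ g ∈ m := by
          intro g hg
          have hgK : g ∈ K := Finset.mem_of_mem_erase hg
          have hge : g ≠ e := Finset.ne_of_mem_erase hg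
          obtain ⟨m, ⟨hmne, hmhead, hmlast, hmchain⟩, hmK, hgm⟩ := hcov g hgK
          have hmnd : m.Nodup := walk_nodup src tgt _
            hacyc m (fun x hx => ⟨x, hmK x hx, rfl, rfl⟩) hmchain
          by_cases hem : e ∈ m
          · obtain ⟨m₁, m₂, rfl⟩ := List.append_of_mem hem
            have hm₂ : m₂ = [] := by
              match m₂ with
              | [] => rfl
              | f :: m₂' =>
                have hch : List.Chain' (fun a b => tgt a = src b) [e, f] :=
                  hmchain.infix ⟨m₁, m₂', by simp⟩
                have hef : tgt e = src f :=
                  (List.isChain_pair (R := fun a b => tgt a = src b)).1 hch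
                exact absurd (htgte ▸ hef.symm : src f = t)
                  (hnot f (hmK f (by simp)))
            subst hm₂
            have hm₁ne : m₁ ≠ [] := by
              rintro rfl
              exact hus (hsrcu.symm.trans (hmhead e rfl))
            have hem₁ : e ∉ m₁ := fun h =>
              List.disjoint_of_nodup_append hmnd h (by simp)
            refine ⟨m₁, ⟨hm₁ne, ?_, ?_, ?_⟩, ?_, ?_⟩
            · intro x hx
              apply hmhead
              rw [List.head?_append, Option.mem_def] at *
              rw [Option.mem_def.1 hx]; rfl
            · intro x hx
              have hj : tgt x = src e := (List.isChain_append.1 hmchain).2.2 x hx e rfl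
              rw [htgt'eq, if_pos (hj.trans hsrcu)]
            · refine chain'_imp_mem m₁ (hmchain.prefix ⟨[e], rfl⟩) ?_
              intro a ha b hb hab
              by_cases hau : tgt a = u
              · exact absurd (huniq b (hmK b (by simp [hb])) (hab.symm.trans hau))
                  (fun h => hem₁ (h ▸ hb))
              · rw [htgt'eq, if_neg hau]; exact hab
            · intro x hx
              exact Finset.mem_erase.2 ⟨fun h => hem₁ (h ▸ hx), hmK x (by simp [hx])⟩
            · rcases List.mem_append.1 hgm with h | h
              · exact h
              · simp at h; exact absurd h hge
          · refine ⟨m, ⟨hmne, hmhead, ?_, ?_⟩, ?_, hgm⟩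
            · intro x hx
              have h1 := hmlast x hx
              rw [htgt'eq, if_neg (fun h => hut (h.symm.trans h1)), h1]
            · refine chain'_imp_mem m hmchain ?_
              intro a ha b hb hab
              by_cases hau : tgt a = u
              · exact absurd (huniq b (hmK b hb) (hab.symm.trans hau))
                  (fun h => hem (h ▸ hb))
              · rw [htgt'eq, if_neg hau]; exact hab
            · intro x hx
              exact Finset.mem_erase.2 ⟨fun h => hem (h ▸ hx), hmK x hx⟩
        have hrec := ih tgt' (K.erase e) (by omega) ⟨g₀, hg₀K'⟩ hacyc' hcov'
        -- Step 4 : compare vertex counts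
        have himg : (K.erase e).image src ∪ (K.erase e).image tgt' =
            (K.image src ∪ K.image tgt).erase u := by
          apply Finset.Subset.antisymm
          · apply Finset.union_subset
            · intro x hx
              obtain ⟨g, hg, rfl⟩ := Finset.mem_image.1 hx
              refine Finset.mem_erase.2 ⟨?_, Finset.mem_union_left _
                (Finset.mem_image.2 ⟨g, Finset.mem_of_mem_erase hg, rfl⟩)⟩
              intro h
              exact (Finset.ne_of_mem_erase hg) (huniq g (Finset.mem_of_mem_erase hg) h)
            · intro x hx
              obtain ⟨g, hg, rfl⟩ := Finset.mem_image.1 hx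
              rw [htgt'eq]
              by_cases hgu : tgt g = u
              · rw [if_pos hgu]
                exact Finset.mem_erase.2 ⟨fun h => hut h.symm, Finset.mem_union_right _
                  (Finset.mem_image.2 ⟨e, he, htgte⟩)⟩
              · rw [if_neg hgu]
                exact Finset.mem_erase.2 ⟨hgu, Finset.mem_union_right _
                  (Finset.mem_image.2 ⟨g, Finset.mem_of_mem_erase hg, rfl⟩)⟩
          · intro x hx
            obtain ⟨hxu, hxA⟩ := Finset.mem_erase.1 hx
            rcases Finset.mem_union.1 hxA with h | h
            · obtain ⟨g, hg, rfl⟩ := Finset.mem_image.1 h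
              have hgne : g ≠ e := fun hh => hxu (hh ▸ hsrcu ▸ rfl)
              exact Finset.mem_union_left _
                (Finset.mem_image.2 ⟨g, Finset.mem_erase.2 ⟨hgne, hg⟩, rfl⟩)
            · obtain ⟨g, hg, rfl⟩ := Finset.mem_image.1 h
              by_cases hge : g = e
              · subst hge
                refine Finset.mem_union_right _ (Finset.mem_image.2 ⟨g₀, hg₀K', ?_⟩)
                rw [htgt'eq, if_pos htgtg₀, htgte]
              · refine Finset.mem_union_right _ (Finset.mem_image.2
                  ⟨g, Finset.mem_erase.2 ⟨hge, hg⟩, ?_⟩)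
                rw [htgt'eq, if_neg (fun h => hxu h)]
        have hnV' : nV src tgt' s t (K.erase e) + 1 = nV src tgt s t K := by
          unfold nV
          rw [himg]
          have hcomm : ((K.image src ∪ K.image tgt).erase u) \ {s, t} =
              ((K.image src ∪ K.image tgt) \ {s, t}).erase u := by
            ext x
            simp only [Finset.mem_erase, Finset.mem_sdiff]
            tauto
          rw [hcomm]
          have humem : u ∈ (K.image src ∪ K.image tgt) \ {s, t} := by
            refine Finset.mem_sdiff.2 ⟨Finset.mem_union_left _
              (Finset.mem_image.2 ⟨e, he, hsrcu⟩), ?_⟩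
            simp [hus, hut]
          rw [Finset.card_erase_of_mem humem]
          have := Finset.card_pos.2 ⟨u, humem⟩
          omega
        rw [hstep1, hstep2, hrec, sub_zero, hcK, ← hnV']
        ring_nf

end Stmt13Aux

namespace Stmt13Aux

variable {V E : Type}

lemma neg_one_pow_sub (a b : ℕ) (h : b ≤ a) :
    (-1 : ℝ) ^ (a - b) = (-1) ^ a * (-1) ^ b := by
  have h2 : ((-1 : ℝ) ^ b) * ((-1) ^ b) = 1 := by
    rw [← pow_add]
    exact Even.neg_one_pow ⟨b, by ring⟩
  calc (-1 : ℝ) ^ (a - b) = (-1) ^ (a - b) * (((-1) ^ b) * ((-1) ^ b)) := by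
        rw [h2, mul_one]
    _ = ((-1) ^ (a - b) * (-1) ^ b) * (-1) ^ b := by ring
    _ = (-1) ^ a * (-1) ^ b := by
        rw [← pow_add, show a - b + b = a by omega]

lemma sum_powerset_sign (U : Finset E) [DecidableEq E] :
    ∑ R ∈ U.powerset, (-1 : ℝ) ^ (U.card - R.card) = if U = ∅ then 1 else 0 := by
  have hz := Finset.sum_powerset_neg_one_pow_card (x := U)
  have hr : ∑ R ∈ U.powerset, (-1 : ℝ) ^ R.card = if U = ∅ then 1 else 0 := by
    exact_mod_cast hz
  calc ∑ R ∈ U.powerset, (-1 : ℝ) ^ (U.card - R.card)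
      = ∑ R ∈ U.powerset, (-1 : ℝ) ^ U.card * (-1) ^ R.card := by
        refine Finset.sum_congr rfl ?_
        intro R hR
        exact neg_one_pow_sub U.card R.card
          (Finset.card_le_card (Finset.mem_powerset.1 hR))
    _ = (-1 : ℝ) ^ U.card * ∑ R ∈ U.powerset, (-1 : ℝ) ^ R.card := by
        rw [Finset.mul_sum]
    _ = if U = ∅ then 1 else 0 := by
        rw [hr]
        by_cases hU : U = ∅
        · simp [hU]
        · simp [hU]

lemma inner_sum [Fintype E] [DecidableEq E] (S : Finset E) :
    ∑ T : Finset E, (-1 : ℝ) ^ (Fintype.card E - T.card) * (if S ⊆ T then 1 else 0)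
      = if S = Finset.univ then 1 else 0 := by
  have hstep : ∀ T : Finset E,
      (-1 : ℝ) ^ (Fintype.card E - T.card) * (if S ⊆ T then 1 else 0)
        = if S ⊆ T then (-1 : ℝ) ^ (Fintype.card E - T.card) else 0 := by
    intro T
    by_cases h : S ⊆ T <;> simp [h]
  simp_rw [hstep]
  rw [Finset.sum_ite, Finset.sum_const_zero, add_zero]
  -- reindex : T with S ⊆ T correspond to R ⊆ Sᶜ via T = S ∪ R
  have hbij : ∑ T ∈ Finset.univ.filter (fun T => S ⊆ T),
      (-1 : ℝ) ^ (Fintype.card E - T.card)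
      = ∑ R ∈ (Sᶜ).powerset, (-1 : ℝ) ^ ((Sᶜ).card - R.card) := by
    refine Finset.sum_bij' (fun T _ => T \ S) (fun R _ => S ∪ R) ?_ ?_ ?_ ?_ ?_
    · intro T hT
      rw [Finset.mem_powerset]
      intro x hx
      rw [Finset.mem_compl]
      exact (Finset.mem_sdiff.1 hx).2
    · intro R hR
      exact Finset.mem_filter.2 ⟨Finset.mem_univ _, Finset.subset_union_left⟩
    · intro T hT
      have hST : S ⊆ T := (Finset.mem_filter.1 hT).2
      show S ∪ (T \ S) = T
      rw [Finset.union_sdiff_of_subset hST]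
    · intro R hR
      have hRS : Disjoint S R := by
        rw [Finset.disjoint_left]
        intro x hxS hxR
        exact (Finset.mem_compl.1 ((Finset.mem_powerset.1 hR) hxR)) hxS
      show (S ∪ R) \ S = R
      rw [Finset.union_sdiff_cancel_left hRS]
    · intro T hT
      have hST : S ⊆ T := (Finset.mem_filter.1 hT).2
      show (-1 : ℝ) ^ (Fintype.card E - T.card) = (-1) ^ (Sᶜ.card - (T \ S).card)
      congr 1
      have h1 : (T \ S).card = T.card - S.card := Finset.card_sdiff_of_subset hST
      have h2 : (Sᶜ).card = Fintype.card E - S.card := by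
        rw [Finset.card_compl]
      have h3 : S.card ≤ T.card := Finset.card_le_card hST
      have h4 : T.card ≤ Fintype.card E := T.card_le_univ
      omega
  rw [hbij, sum_powerset_sign]
  by_cases h : S = Finset.univ
  · rw [if_pos h, if_pos (by simp [h])]
  · rw [if_neg h, if_neg (by simpa [Finset.compl_eq_empty_iff] using h)]

lemma mobius [Fintype E] [DecidableEq E] (α G : Finset E → ℝ)
    (hG : ∀ T : Finset E, G T = ∑ S : Finset E, α S * (if S ⊆ T then 1 else 0)) :
    ∑ T : Finset E, (-1 : ℝ) ^ (Fintype.card E - T.card) * G T = α Finset.univ := by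
  calc ∑ T : Finset E, (-1 : ℝ) ^ (Fintype.card E - T.card) * G T
      = ∑ T : Finset E, ∑ S : Finset E,
          α S * ((-1 : ℝ) ^ (Fintype.card E - T.card) * (if S ⊆ T then 1 else 0)) := by
        refine Finset.sum_congr rfl ?_
        intro T _
        rw [hG T, Finset.mul_sum]
        refine Finset.sum_congr rfl ?_
        intro S _
        ring
    _ = ∑ S : Finset E, ∑ T : Finset E,
          α S * ((-1 : ℝ) ^ (Fintype.card E - T.card) * (if S ⊆ T then 1 else 0)) :=
        Finset.sum_comm
    _ = ∑ S : Finset E, α S * (if S = Finset.univ then 1 else 0) := by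
        refine Finset.sum_congr rfl ?_
        intro S _
        rw [← Finset.mul_sum, inner_sum]
    _ = α Finset.univ := by
        rw [Finset.sum_eq_single Finset.univ]
        · simp
        · intro S _ hS; simp [hS]
        · intro h; exact absurd (Finset.mem_univ _) h

end Stmt13Aux


open Stmt13Aux in
open Classical in
/-- For a finite DAG with unique source `s`, unique sink `t`, at least one
`s`-`t` path, and every arc on some `s`-`t` path, the representing polynomial of
`DAG-Connectivity` has full degree: the coefficient of the monomial
`∏_{e ∈ E} x_e` equals `(-1)^{D(G)} ≠ 0`. -/
theorem stmt13 (V E : Type) [Fintype V] [Fintype E] [DecidableEq E]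
    (src tgt : E → V) (s t : V)
    (hacyc : IsAcyclicDigraph src tgt)
    (hs : IsUniqueSource src tgt s) (ht : IsUniqueSink src tgt t)
    (hpath : (pathEdgeSets src tgt s t).Nonempty)
    (hcover : ∀ e : E, ∃ p ∈ pathEdgeSets src tgt s t, e ∈ p)
    (α : Finset E → ℝ)
    (hα : ∀ x : E → Bool,
      (if ∃ p ∈ pathEdgeSets src tgt s t, ∀ e ∈ p, x e = true then (1 : ℝ) else 0) =
        ∑ S : Finset E, α S * ∏ e ∈ S, (if x e = true then (1 : ℝ) else 0)) :
    α Finset.univ = (-1 : ℝ) ^ (Dval src tgt s t Finset.univ) ∧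
      α Finset.univ ≠ 0 := by
  classical
  -- the indicator function of connectivity
  set G : Finset E → ℝ := fun T =>
    if ∃ p ∈ pathEdgeSets src tgt s t, ∀ e ∈ p, e ∈ T then 1 else 0 with hGdef
  have hG : ∀ T : Finset E, G T = ∑ S : Finset E, α S * (if S ⊆ T then 1 else 0) := by
    intro T
    have h1 := hα (fun e => decide (e ∈ T))
    simp only [decide_eq_true_eq] at h1
    have h2 : ∀ S : Finset E,
        (∏ e ∈ S, if e ∈ T then (1 : ℝ) else 0) = if S ⊆ T then 1 else 0 := by
      intro S
      by_cases hST : S ⊆ T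
      · rw [if_pos hST]
        refine Finset.prod_eq_one ?_
        intro e he
        rw [if_pos (hST he)]
      · rw [if_neg hST]
        obtain ⟨e, heS, heT⟩ := Finset.not_subset.1 hST
        exact Finset.prod_eq_zero heS (if_neg heT)
    simp only [h2] at h1
    rw [hGdef]
    exact h1
  have hmob := mobius α G hG
  -- bridge to walks
  have hbridge : ∀ T : Finset E, G T = if WalkW src tgt s t T then 1 else 0 := by
    intro T
    have hiff : (∃ p ∈ pathEdgeSets src tgt s t, ∀ e ∈ p, e ∈ T) ↔
        WalkW src tgt s t T := by
      constructor
      · rintro ⟨p, ⟨l, hl, hnd, rfl⟩, hpT⟩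
        exact ⟨l, hl, fun e he => hpT e (List.mem_toFinset.2 he)⟩
      · rintro ⟨l, hl, hmem⟩
        have hnd : l.Nodup := walk_nodup src tgt
          (fun a b => ∃ e, src e = a ∧ tgt e = b) hacyc l
          (fun e _ => ⟨e, rfl, rfl⟩) hl.2.2.2
        exact ⟨l.toFinset, ⟨l, hl, hnd, rfl⟩,
          fun e he => hmem e (List.mem_toFinset.1 he)⟩
    rw [hGdef]
    by_cases hW : WalkW src tgt s t T
    · rw [if_pos hW]
      exact if_pos (hiff.2 hW)
    · rw [if_neg hW]
      exact if_neg (fun h => hW (hiff.1 h))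
  -- rewrite the Möbius sum as NN
  have hNN : ∑ T : Finset E, (-1 : ℝ) ^ (Fintype.card E - T.card) * G T =
      NN src tgt s t Finset.univ := by
    rw [NN, Finset.powerset_univ]
    refine Finset.sum_congr rfl ?_
    intro T _
    rw [hbridge T, Finset.card_univ]
    by_cases hW : WalkW src tgt s t T <;> simp [hW]
  -- hypotheses of the induction lemma
  obtain ⟨p₀, l₀, hl₀, hnd₀, hp₀⟩ := hpath
  have hl₀ne : l₀ ≠ [] := hl₀.1
  obtain ⟨e₀, he₀⟩ := List.exists_mem_of_ne_nil l₀ hl₀ne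
  have huniv_ne : (Finset.univ : Finset E).Nonempty := ⟨e₀, Finset.mem_univ _⟩
  have hacyc' : ∀ v, ¬ Relation.TransGen
      (fun a b => ∃ g ∈ (Finset.univ : Finset E), src g = a ∧ tgt g = b) v v := by
    intro v hv
    exact hacyc v (Relation.TransGen.mono (by intro a b ⟨g, _, hp⟩; exact ⟨g, hp⟩) v v hv)
  have hcov' : ∀ g ∈ (Finset.univ : Finset E), ∃ l, IsPathFrom src tgt s t l ∧
      (∀ e ∈ l, e ∈ (Finset.univ : Finset E)) ∧ g ∈ l := by
    intro g _
    obtain ⟨p, ⟨l, hl, hnd, rfl⟩, hgp⟩ := hcover g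
    exact ⟨l, hl, fun e _ => Finset.mem_univ _, List.mem_toFinset.1 hgp⟩
  have hNNval := NN_eq src s t (Finset.univ : Finset E).card tgt Finset.univ
    le_rfl huniv_ne hacyc' hcov'
  -- put everything together
  have hαval : α Finset.univ =
      (-1 : ℝ) ^ ((Finset.univ : Finset E).card + nV src tgt s t (Finset.univ : Finset E) + 1) := by
    rw [← hmob, hNN, hNNval]
  -- convert to the zpow expression
  set c : ℕ := (Finset.univ : Finset E).card with hc
  set m : ℕ := nV src tgt s t (Finset.univ : Finset E) with hm
  have hDval : Dval src tgt s t (Finset.univ : Finset E) = (c : ℤ) - (m + 1 : ℕ) := by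
    rw [Dval, hc, hm]
    unfold nV
    push_cast
    ring
  have hzpow : (-1 : ℝ) ^ (Dval src tgt s t (Finset.univ : Finset E)) =
      (-1 : ℝ) ^ (c + m + 1) := by
    rw [hDval, zpow_sub₀ (by norm_num : (-1 : ℝ) ≠ 0), zpow_natCast, zpow_natCast]
    have hinv : ((-1 : ℝ) ^ (m + 1))⁻¹ = (-1) ^ (m + 1) := by
      rw [← inv_pow, inv_neg, inv_one]
    rw [div_eq_mul_inv, hinv, ← pow_add]
    congr 1
  refine ⟨?_, ?_⟩
  · rw [hαval, hzpow]
  · rw [hαval]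
    exact pow_ne_zero _ (by norm_num)
end

section
/- Let G be a finite DAG with unique source s and unique sink t, and let H ∈ U(P_G) be a nonempty union of s-t paths with ear decomposition ∅ = H₋₁ ⋖ H₀ ⋖ … ⋖ H_D = H in U(P_G), where H_k = H_{k−1} ∪ p_k for s-t paths p₀,…,p_D. Then every vector f ∈ ℝ^{E(G)} satisfying total flow 1 out of s, flow conservation at internal vertices, and f_e = 0 for e ∉ H, is an affine combination of the indicator vectors 𝟙(p₀),…,𝟙(p_D). -/
section Path
variable {V E : Type} {src tgt : E → V} {s t : V} {l : List E}

lemma path_len (h : IsPathFrom src tgt s t l) : 0 < l.length :=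
  List.length_pos_iff.mpr h.1

lemma path_head (h : IsPathFrom src tgt s t l) : src (l[0]'(path_len h)) = s := by
  apply h.2.1
  rw [List.head?_eq_head h.1, List.getElem_zero]
  exact rfl

lemma path_last (h : IsPathFrom src tgt s t l) :
    tgt (l[l.length - 1]'(by have := path_len h; omega)) = t := by
  apply h.2.2.1
  rw [List.getLast?_eq_getLast h.1, List.getLast_eq_getElem]
  exact rfl

lemma no_in_s (hs : IsUniqueSource src tgt s) {e : E} : tgt e ≠ s := by
  intro h
  exact ((hs s).mpr rfl) ⟨e, h⟩

lemma no_out_t (ht : IsUniqueSink src tgt t) {e : E} : src e ≠ t := by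
  intro h
  exact ((ht t).mpr rfl) ⟨e, h⟩

end Path

section Walks
variable {V E : Type} {src tgt : E → V}

lemma chain_succ {l : List E} (hl : l.Chain' (fun e f => tgt e = src f))
    {m : ℕ} (hm : m + 1 < l.length) : tgt l[m] = src l[m+1] := by
  have := List.isChain_iff_getElem.mp hl m (by omega)
  simpa using this

lemma chain_transGen {l : List E} (hl : l.Chain' (fun e f => tgt e = src f))
    {i j : ℕ} (hij : i ≤ j) (hj : j < l.length) :
    Relation.TransGen (fun a b => ∃ e, src e = a ∧ tgt e = b) (src l[i]) (tgt l[j]) := by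
  induction j, hij using Nat.le_induction with
  | base => exact Relation.TransGen.single ⟨l[i], rfl, rfl⟩
  | succ j hij ih =>
    have hj' : j < l.length := by omega
    exact (ih hj').tail ⟨l[j+1], (chain_succ hl hj).symm, rfl⟩

lemma tgt_inj (ha : IsAcyclicDigraph src tgt) {l : List E}
    (hl : l.Chain' (fun e f => tgt e = src f))
    {i j : ℕ} (hi : i < l.length) (hj : j < l.length)
    (h : tgt l[i] = tgt l[j]) : i = j := by
  rcases Nat.lt_trichotomy i j with hij | hij | hij
  · exfalso
    have := chain_transGen hl (show i+1 ≤ j by omega) hj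
    rw [← chain_succ hl (by omega), h] at this
    exact ha _ this
  · exact hij
  · exfalso
    have := chain_transGen hl (show j+1 ≤ i by omega) hi
    rw [← chain_succ hl (by omega), ← h] at this
    exact ha _ this

lemma src_inj (ha : IsAcyclicDigraph src tgt) {l : List E}
    (hl : l.Chain' (fun e f => tgt e = src f))
    {i j : ℕ} (hi : i < l.length) (hj : j < l.length)
    (h : src l[i] = src l[j]) : i = j := by
  rcases Nat.lt_trichotomy i j with hij | hij | hij
  · exfalso
    obtain ⟨m, rfl⟩ : ∃ m, j = m + 1 := ⟨j - 1, by omega⟩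
    have := chain_transGen hl (show i ≤ m by omega) (show m < l.length by omega)
    rw [chain_succ hl (by omega), ← h] at this
    exact ha _ this
  · exact hij
  · exfalso
    obtain ⟨m, rfl⟩ : ∃ m, i = m + 1 := ⟨i - 1, by omega⟩
    have := chain_transGen hl (show j ≤ m by omega) (show m < l.length by omega)
    rw [chain_succ hl (by omega), h] at this
    exact ha _ this

lemma src_eq_tgt_succ (ha : IsAcyclicDigraph src tgt) {l : List E}
    (hl : l.Chain' (fun e f => tgt e = src f))
    {i j : ℕ} (hi : i < l.length) (hj : j < l.length)
    (h : src l[j] = tgt l[i]) : j = i + 1 := by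
  rcases Nat.lt_or_ge i j with hij | hij
  · obtain ⟨m, rfl⟩ : ∃ m, j = m + 1 := ⟨j - 1, by omega⟩
    have h2 := chain_succ hl (show m + 1 < l.length from hj)
    have : i = m := tgt_inj ha hl hi (by omega) (by rw [h2, h])
    omega
  · exfalso
    have := chain_transGen hl hij hi
    rw [h] at this
    exact ha _ this

lemma nodup_of_chain' (ha : IsAcyclicDigraph src tgt) {l : List E}
    (hl : l.Chain' (fun e f => tgt e = src f)) : l.Nodup := by
  rw [List.nodup_iff_injective_get]
  intro ⟨i, hi⟩ ⟨j, hj⟩ h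
  simp only [List.get_eq_getElem] at h
  have : src l[i] = src l[j] := by rw [h]
  exact Fin.ext (src_inj ha hl hi hj this)

end Walks

section Filters
variable {V E : Type} [DecidableEq E] {src tgt : E → V} {s t : V} {l : List E}

open Classical in
lemma filter_src_s (ha : IsAcyclicDigraph src tgt) (hs : IsUniqueSource src tgt s)
    (h : IsPathFrom src tgt s t l) :
    l.toFinset.filter (fun e => src e = s) = {l[0]'(path_len h)} := by
  ext e
  simp only [Finset.mem_filter, List.mem_toFinset, Finset.mem_singleton]
  constructor
  · rintro ⟨hel, hes⟩
    obtain ⟨r, hr, rfl⟩ := List.mem_iff_getElem.mp hel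
    rcases Nat.eq_zero_or_pos r with rfl | hr0
    · rfl
    · exfalso
      obtain ⟨m, rfl⟩ : ∃ m, r = m+1 := ⟨r-1, by omega⟩
      have h2 := chain_succ h.2.2.2 hr
      rw [hes] at h2
      exact no_in_s hs h2
  · rintro rfl
    exact ⟨List.getElem_mem _, path_head h⟩

open Classical in
lemma filter_card_eq (ha : IsAcyclicDigraph src tgt) (hs : IsUniqueSource src tgt s)
    (ht : IsUniqueSink src tgt t) (h : IsPathFrom src tgt s t l)
    {v : V} (hv : v ≠ s) (hv' : v ≠ t) :
    (l.toFinset.filter (fun e => tgt e = v)).card =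
      (l.toFinset.filter (fun e => src e = v)).card := by
  by_cases hex : ∃ m, ∃ hm : m < l.length, tgt (l[m]'hm) = v
  · obtain ⟨m, hm, hmv⟩ := hex
    have hm1 : m + 1 < l.length := by
      rcases Nat.lt_or_ge (m+1) l.length with h1 | h1
      · exact h1
      · exfalso
        have : m = l.length - 1 := by omega
        subst this
        exact hv' (hmv ▸ (path_last h).symm ▸ rfl) |>.elim
    have e1 : l.toFinset.filter (fun e => tgt e = v) = {l[m]} := by
      ext e
      simp only [Finset.mem_filter, List.mem_toFinset, Finset.mem_singleton]
      constructor
      · rintro ⟨hel, hev⟩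
        obtain ⟨r, hr, rfl⟩ := List.mem_iff_getElem.mp hel
        have : r = m := tgt_inj ha h.2.2.2 hr hm (by rw [hev, hmv])
        subst this; rfl
      · rintro rfl
        exact ⟨List.getElem_mem _, hmv⟩
    have e2 : l.toFinset.filter (fun e => src e = v) = {l[m+1]} := by
      ext e
      simp only [Finset.mem_filter, List.mem_toFinset, Finset.mem_singleton]
      constructor
      · rintro ⟨hel, hev⟩
        obtain ⟨r, hr, rfl⟩ := List.mem_iff_getElem.mp hel
        have : r = m + 1 := src_eq_tgt_succ ha h.2.2.2 hm hr (by rw [hev, hmv])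
        subst this; rfl
      · rintro rfl
        exact ⟨List.getElem_mem _, by rw [← chain_succ h.2.2.2 hm1, hmv]⟩
    rw [e1, e2, Finset.card_singleton, Finset.card_singleton]
  · have e1 : l.toFinset.filter (fun e => tgt e = v) = ∅ := by
      rw [Finset.filter_eq_empty_iff]
      intro e hel hev
      obtain ⟨r, hr, rfl⟩ := List.mem_iff_getElem.mp (List.mem_toFinset.mp hel)
      exact hex ⟨r, hr, hev⟩
    have e2 : l.toFinset.filter (fun e => src e = v) = ∅ := by
      rw [Finset.filter_eq_empty_iff]
      intro e hel hev
      obtain ⟨r, hr, rfl⟩ := List.mem_iff_getElem.mp (List.mem_toFinset.mp hel)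
      rcases Nat.eq_zero_or_pos r with rfl | hr0
      · exact hv (by rw [← hev, path_head h])
      · obtain ⟨m, rfl⟩ : ∃ m, r = m+1 := ⟨r - 1, by omega⟩
        exact hex ⟨m, by omega, by rw [chain_succ h.2.2.2 hr, hev]⟩
    rw [e1, e2]

end Filters

section Flow
variable {V E : Type} [Fintype E] [DecidableEq E] {src tgt : E → V} {s t : V} {l : List E}

lemma sum_filter_support {f : E → ℝ} {K : Finset E} (hf : ∀ e ∉ K, f e = 0)
    (P : E → Prop) [DecidablePred P] :
    ∑ e ∈ Finset.univ.filter P, f e = ∑ e ∈ K.filter P, f e := by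
  refine (Finset.sum_subset (Finset.filter_subset_filter _ (Finset.subset_univ K)) ?_).symm
  intro e he hne
  exact hf e (fun hK => hne (Finset.mem_filter.mpr ⟨hK, (Finset.mem_filter.mp he).2⟩))

open Classical in
lemma indicator_sum_eq_card (K : Finset E) (P : E → Prop) :
    ∑ e ∈ Finset.univ.filter P, (if e ∈ K then (1:ℝ) else 0) = (K.filter P).card := by
  rw [Finset.sum_boole]
  congr 2
  ext e
  simp [and_comm]

open Classical in
lemma indicator_flow_s (ha : IsAcyclicDigraph src tgt) (hs : IsUniqueSource src tgt s)
    (h : IsPathFrom src tgt s t l) :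
    ∑ e ∈ Finset.univ.filter (fun e => src e = s), (if e ∈ l.toFinset then (1:ℝ) else 0) = 1 := by
  rw [indicator_sum_eq_card]
  rw [show l.toFinset.filter (fun e => src e = s) = {l[0]'(path_len h)} from filter_src_s ha hs h]
  simp

open Classical in
lemma indicator_flow_conserve (ha : IsAcyclicDigraph src tgt) (hs : IsUniqueSource src tgt s)
    (ht : IsUniqueSink src tgt t) (h : IsPathFrom src tgt s t l)
    {v : V} (hv : v ≠ s) (hv' : v ≠ t) :
    ∑ e ∈ Finset.univ.filter (fun e => tgt e = v), (if e ∈ l.toFinset then (1:ℝ) else 0) =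
      ∑ e ∈ Finset.univ.filter (fun e => src e = v), (if e ∈ l.toFinset then (1:ℝ) else 0) := by
  rw [indicator_sum_eq_card, indicator_sum_eq_card]
  rw [filter_card_eq ha hs ht h hv hv']

end Flow


section PathIff
variable {V E : Type} {src tgt : E → V} {s t : V}

lemma isPathFrom_iff {w : List E} (h : w ≠ []) :
    IsPathFrom src tgt s t w ↔ src (w.head h) = s ∧ tgt (w.getLast h) = t ∧
      w.Chain' (fun e f => tgt e = src f) := by
  unfold IsPathFrom
  rw [List.head?_eq_head h, List.getLast?_eq_getLast h]
  simp [h]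

end PathIff

private lemma gE {α : Type*} (l : List α) {a b : ℕ} (h : a = b) {ha : a < l.length} :
    l[a]'ha = l[b]'(h ▸ ha) := by subst h; rfl


open Classical in
lemma ear_structure {V E : Type} [Fintype V] [Fintype E] [DecidableEq E]
    (src tgt : E → V) (s t : V)
    (hacyc : IsAcyclicDigraph src tgt)
    (hs : IsUniqueSource src tgt s) (ht : IsUniqueSink src tgt t)
    (D : ℕ) (p : Fin (D + 1) → Finset E)
    (hp : ∀ k, p k ∈ pathEdgeSets src tgt s t)
    (hcov : ∀ k : Fin (D + 1),
      ((Finset.univ.filter (fun i => i < k)).biUnion p) ⊂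
        ((Finset.univ.filter (fun i => i ≤ k)).biUnion p) ∧
      ∀ W ∈ unionOfPaths src tgt s t,
        ((Finset.univ.filter (fun i => i < k)).biUnion p) ⊂ W →
        W ⊆ ((Finset.univ.filter (fun i => i ≤ k)).biUnion p) →
        W = ((Finset.univ.filter (fun i => i ≤ k)).biUnion p))
    (k : Fin (D + 1)) :
    ∃ (l : List E) (i j : ℕ) (_ : j < l.length),
      IsPathFrom src tgt s t l ∧ p k = l.toFinset ∧ i ≤ j ∧
      (∀ m (hm : m < l.length),
        ((l[m]'hm) ∉ (Finset.univ.filter (fun i => i < k)).biUnion p ↔ (i ≤ m ∧ m ≤ j))) ∧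
      (∀ m (hm : m < l.length), i ≤ m → m < j →
        (∀ e ∈ (Finset.univ.filter (fun i => i < k)).biUnion p,
          src e ≠ tgt (l[m]'hm) ∧ tgt e ≠ tgt (l[m]'hm)) ∧ tgt (l[m]'hm) ≠ t) := by
  classical
  set Hlt := (Finset.univ.filter (fun i => i < k)).biUnion p with hHlt
  set Hle := (Finset.univ.filter (fun i => i ≤ k)).biUnion p with hHle
  have hHltHle : Hle = Hlt ∪ p k := by
    ext e
    simp only [hHle, hHlt, Finset.mem_union, Finset.mem_biUnion, Finset.mem_filter,
      Finset.mem_univ, true_and]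
    constructor
    · rintro ⟨a, hak, hae⟩
      rcases lt_or_eq_of_le hak with h | h
      · exact Or.inl ⟨a, h, hae⟩
      · subst h; exact Or.inr hae
    · rintro (⟨a, hak, hae⟩ | h)
      · exact ⟨a, le_of_lt hak, hae⟩
      · exact ⟨k, le_refl k, h⟩
  obtain ⟨l, hl, hlnd, hlpk⟩ := hp k
  have hchain := hl.2.2.2
  -- a new edge exists
  obtain ⟨e₀, he₀le', he₀lt'⟩ := Finset.exists_of_ssubset (hcov k).1
  have he₀le : e₀ ∈ Hle := he₀le'
  have he₀lt : e₀ ∉ Hlt := he₀lt'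
  have he₀pk : e₀ ∈ p k := by
    rw [hHltHle] at he₀le
    rcases Finset.mem_union.mp he₀le with h | h
    · exact absurd h he₀lt
    · exact h
  obtain ⟨i₀, hi₀, hi₀e⟩ := List.mem_iff_getElem.mp (by
    rw [hlpk] at he₀pk; exact List.mem_toFinset.mp he₀pk)
  -- minimal new index i
  have hPex : ∃ m, ∃ hm : m < l.length, (l[m]'hm) ∉ Hlt := ⟨i₀, hi₀, by rw [hi₀e]; exact he₀lt⟩
  set i := Nat.find hPex with hidef
  obtain ⟨hilen, hinew⟩ := Nat.find_spec hPex
  have himin : ∀ m (hm : m < l.length), m < i → (l[m]'hm) ∈ Hlt := by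
    intro m hm hmi
    by_contra hc
    exact Nat.find_min hPex hmi ⟨hm, hc⟩
  -- minimal index j ≥ i whose target is in V(Hlt) or t
  have hQex : ∃ m, i ≤ m ∧ ∃ hm : m < l.length,
      ((∃ e ∈ Hlt, src e = tgt (l[m]'hm) ∨ tgt e = tgt (l[m]'hm)) ∨ tgt (l[m]'hm) = t) := by
    refine ⟨l.length - 1, by omega, by omega, Or.inr (path_last hl)⟩
  set j := Nat.find hQex with hjdef
  obtain ⟨hij, hjlen, hjV⟩ := Nat.find_spec hQex
  have hjmin : ∀ m, i ≤ m → m < j → ∀ hm : m < l.length,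
      ¬((∃ e ∈ Hlt, src e = tgt (l[m]'hm) ∨ tgt e = tgt (l[m]'hm)) ∨ tgt (l[m]'hm) = t) := by
    intro m him hmj hm hc
    exact Nat.find_min hQex hmj ⟨him, hm, hc⟩
  -- all edges between i and j are new
  have hmidnew : ∀ m (hm : m < l.length), i ≤ m → m ≤ j → (l[m]'hm) ∉ Hlt := by
    intro m hm him hmj hmem
    rcases Nat.eq_or_lt_of_le him with rfl | him'
    · exact hinew hmem
    · obtain ⟨m', rfl⟩ : ∃ m', m = m' + 1 := ⟨m - 1, by omega⟩
      refine hjmin m' (by omega) (by omega) (by omega) (Or.inl ⟨l[m'+1], hmem, Or.inl ?_⟩)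
      exact (chain_succ hchain hm).symm
  -- the prefix of l up to index j
  set pre := l.take (j+1) with hpredef
  have hprelen : pre.length = j + 1 := by
    simp [hpredef, List.length_take]
    omega
  have hprene : pre ≠ [] := by
    intro h
    rw [h] at hprelen
    simp at hprelen
  have hprechain : pre.Chain' (fun e f => tgt e = src f) := hchain.take _
  have hpreget : ∀ m (hm : m < pre.length), pre[m] = l[m]'(by omega) := by
    intro m hm
    simp [hpredef]
  have hprehead : src (pre.head hprene) = s := by
    rw [List.head_eq_getElem, hpreget 0 (by omega)]
    exact path_head hl
  have hprelast : tgt (pre.getLast hprene) = tgt (l[j]'hjlen) := by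
    rw [List.getLast_eq_getElem, hpreget _ (by omega)]
    congr 2
    omega
  have hpresub : ∀ e ∈ pre, e ∈ l := fun e he => List.take_subset _ _ he
  have hpre_i : (l[i]'hilen) ∈ pre := by
    refine List.mem_iff_getElem.mpr ⟨i, by omega, ?_⟩
    rw [hpreget i (by omega)]
  -- construct the witness path w
  obtain ⟨w, hwpath, hwnd, hwmem, hwpre⟩ :
      ∃ w : List E, IsPathFrom src tgt s t w ∧ w.Nodup ∧
        (∀ e ∈ w, e ∈ pre ∨ e ∈ Hlt) ∧ (∀ e ∈ pre, e ∈ w) := by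
    by_cases hjt : tgt (l[j]'hjlen) = t
    · refine ⟨pre, ?_, nodup_of_chain' hacyc hprechain, fun e he => Or.inl he, fun e he => he⟩
      rw [isPathFrom_iff hprene]
      exact ⟨hprehead, by rw [hprelast]; exact hjt, hprechain⟩
    · have hjV' : ∃ e ∈ Hlt, src e = tgt (l[j]'hjlen) ∨ tgt e = tgt (l[j]'hjlen) := by
        rcases hjV with h | h
        · exact h
        · exact absurd h hjt
      obtain ⟨e', he'H, he'v⟩ := hjV'
      obtain ⟨a, hak, hae⟩ := Finset.mem_biUnion.mp he'H
      obtain ⟨q, hq, hqnd, hqe⟩ := hp a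
      have hqchain := hq.2.2.2
      have hqsub : ∀ x ∈ q, x ∈ Hlt := by
        intro x hx
        exact Finset.mem_biUnion.mpr ⟨a, hak, by rw [hqe]; exact List.mem_toFinset.mpr hx⟩
      have he'q : e' ∈ q := List.mem_toFinset.mp (hqe ▸ hae)
      obtain ⟨r, hr, hre⟩ := List.mem_iff_getElem.mp he'q
      obtain ⟨d, hd, hdsrc⟩ : ∃ d, ∃ hd : d < q.length, src (q[d]'hd) = tgt (l[j]'hjlen) := by
        rcases he'v with h | h
        · exact ⟨r, hr, by rw [hre]; exact h⟩
        · have hrlen : r + 1 < q.length := by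
            rcases Nat.lt_or_ge (r+1) q.length with h1 | h1
            · exact h1
            · exfalso
              apply hjt
              rw [← h, ← hre, gE q (show r = q.length - 1 by omega)]
              exact path_last hq
          exact ⟨r+1, hrlen, by rw [← chain_succ hqchain hrlen, hre, h]⟩
      set suf := q.drop d with hsufdef
      have hsuflen : suf.length = q.length - d := by simp [hsufdef]
      have hsufne : suf ≠ [] := by
        intro hc
        rw [hc] at hsuflen
        simp at hsuflen
        omega
      have hsufget : ∀ m (hm : m < suf.length), suf[m] = q[d + m]'(by omega) := by
        intro m hm
        simp [hsufdef]
      have hsufhead : src (suf.head hsufne) = tgt (l[j]'hjlen) := by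
        rw [List.head_eq_getElem, hsufget 0 (by omega)]
        simpa using hdsrc
      have hsuflast : tgt (suf.getLast hsufne) = t := by
        rw [List.getLast_eq_getElem, hsufget _ (by omega),
          gE q (show d + (suf.length - 1) = q.length - 1 by omega)]
        exact path_last hq
      have hsufsub : ∀ e ∈ suf, e ∈ Hlt := fun e he => hqsub e (List.drop_subset _ _ he)
      have hwchain : (pre ++ suf).Chain' (fun e f => tgt e = src f) := by
        refine hprechain.append (hqchain.drop d) ?_
        intro x hx y hy
        rw [List.head?_eq_head hsufne] at hy
        rw [List.getLast?_eq_getLast hprene] at hx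
        simp only [Option.mem_some_iff] at hx hy
        rw [← hx, ← hy, hprelast, hsufhead]
      refine ⟨pre ++ suf, ?_, nodup_of_chain' hacyc hwchain, ?_, ?_⟩
      · refine ⟨by simp [hprene], ?_, ?_, hwchain⟩
        · intro e he
          rw [List.head?_append_of_ne_nil _ hprene, List.head?_eq_head hprene] at he
          simp only [Option.mem_some_iff] at he
          rw [← he]
          exact hprehead
        · intro e he
          rw [List.getLast?_append_of_ne_nil _ hsufne, List.getLast?_eq_getLast hsufne] at he
          simp only [Option.mem_some_iff] at he
          rw [← he]
          exact hsuflast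
      · intro e he
        rcases List.mem_append.mp he with h | h
        · exact Or.inl h
        · exact Or.inr (hsufsub e h)
      · intro e he
        exact List.mem_append_left _ he
  -- the covering hypothesis forces Hlt ∪ w = Hle
  set W := Hlt ∪ w.toFinset with hWdef
  have hWuop : W ∈ unionOfPaths src tgt s t := by
    refine ⟨{P | ∃ a : Fin (D+1), a < k ∧ P = p a} ∪ {w.toFinset}, ?_, ?_⟩
    · intro P hP
      rcases hP with hP | hP
      · obtain ⟨a, hak, rfl⟩ := hP
        exact hp a
      · rw [Set.mem_singleton_iff] at hP
        subst hP
        exact ⟨w, hwpath, hwnd, rfl⟩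
    · ext x
      constructor
      · intro hx
        rw [Finset.mem_coe, hWdef] at hx
        rcases Finset.mem_union.mp hx with hx | hx
        · obtain ⟨a, hak, hax⟩ := Finset.mem_biUnion.mp hx
          exact Set.mem_biUnion (Or.inl ⟨a, (Finset.mem_filter.mp hak).2, rfl⟩)
            (Finset.mem_coe.mpr hax)
        · exact Set.mem_biUnion (Or.inr rfl) (Finset.mem_coe.mpr hx)
      · intro hx
        obtain ⟨P, hP, hxP⟩ := Set.mem_iUnion₂.mp hx
        rw [Finset.mem_coe, hWdef]
        apply Finset.mem_union.mpr
        rcases hP with hP | hP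
        · obtain ⟨a, hak, rfl⟩ := hP
          exact Or.inl (Finset.mem_biUnion.mpr ⟨a, Finset.mem_filter.mpr ⟨Finset.mem_univ _, hak⟩,
            Finset.mem_coe.mp hxP⟩)
        · rw [Set.mem_singleton_iff] at hP
          subst hP
          exact Or.inr (Finset.mem_coe.mp hxP)
  have hWeq : W = Hle := by
    refine (hcov k).2 W hWuop ?_ ?_
    · rw [Finset.ssubset_def]
      refine ⟨Finset.subset_union_left, fun hsub => ?_⟩
      exact hinew (hsub (Finset.mem_union_right _ (List.mem_toFinset.mpr (hwpre _ hpre_i))))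
    · intro x hx
      show x ∈ Hle
      rw [hHltHle]
      rcases Finset.mem_union.mp hx with hx | hx
      · exact Finset.mem_union_left _ hx
      · rcases hwmem x (List.mem_toFinset.mp hx) with h | h
        · exact Finset.mem_union_right _ (by rw [hlpk]; exact List.mem_toFinset.mpr (hpresub _ h))
        · exact Finset.mem_union_left _ h
  -- conclude
  refine ⟨l, i, j, hjlen, hl, hlpk, hij, ?_, ?_⟩
  · intro m hm
    constructor
    · intro hnew
      refine ⟨?_, ?_⟩
      · by_contra hc
        exact hnew (himin m hm (by omega))
      · have h1 : (l[m]'hm) ∈ Hle := by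
          rw [hHltHle]
          exact Finset.mem_union_right _ (by rw [hlpk]; exact List.mem_toFinset.mpr (l.getElem_mem hm))
        rw [← hWeq, hWdef] at h1
        rcases Finset.mem_union.mp h1 with h | h
        · exact absurd h hnew
        · rcases hwmem _ (List.mem_toFinset.mp h) with h2 | h2
          · obtain ⟨m', hm', hm'e⟩ := List.mem_iff_getElem.mp h2
            rw [hpreget m' hm'] at hm'e
            have : m' = m := hlnd.getElem_inj_iff.mp hm'e
            omega
          · exact absurd h2 hnew
    · intro hmn
      exact hmidnew m hm hmn.1 hmn.2
  · intro m hm him hmj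
    have hn := hjmin m him hmj hm
    push_neg at hn
    exact ⟨fun e he => ⟨fun hc => (hn.1 e he).1 hc, fun hc => (hn.1 e he).2 hc⟩, hn.2⟩


open Classical in
lemma circ_step {V E : Type} [Fintype V] [Fintype E] [DecidableEq E]
    (src tgt : E → V) (s t : V)
    (hacyc : IsAcyclicDigraph src tgt)
    (hs : IsUniqueSource src tgt s) (ht : IsUniqueSink src tgt t)
    (D : ℕ) (p : Fin (D + 1) → Finset E)
    (hp : ∀ k, p k ∈ pathEdgeSets src tgt s t)
    (hcov : ∀ k : Fin (D + 1),
      ((Finset.univ.filter (fun i => i < k)).biUnion p) ⊂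
        ((Finset.univ.filter (fun i => i ≤ k)).biUnion p) ∧
      ∀ W ∈ unionOfPaths src tgt s t,
        ((Finset.univ.filter (fun i => i < k)).biUnion p) ⊂ W →
        W ⊆ ((Finset.univ.filter (fun i => i ≤ k)).biUnion p) →
        W = ((Finset.univ.filter (fun i => i ≤ k)).biUnion p))
    (k : Fin (D + 1)) (z : E → ℝ)
    (hsupp : ∀ e, e ∉ ((Finset.univ.filter (fun i => i ≤ k)).biUnion p) → z e = 0)
    (hcons : ∀ v : V, v ≠ s → v ≠ t →
      ∑ e ∈ Finset.univ.filter (fun e => tgt e = v), z e =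
        ∑ e ∈ Finset.univ.filter (fun e => src e = v), z e) :
    ∃ a : ℝ, (∀ e ∈ p k, e ∉ ((Finset.univ.filter (fun i => i < k)).biUnion p) → z e = a) ∧
      (∃ e₀ ∈ p k, e₀ ∉ ((Finset.univ.filter (fun i => i < k)).biUnion p) ∧ z e₀ = a) := by
  classical
  set Hlt := (Finset.univ.filter (fun i => i < k)).biUnion p with hHlt
  set Hle := (Finset.univ.filter (fun i => i ≤ k)).biUnion p with hHle
  have hHltHle : Hle = Hlt ∪ p k := by
    ext e
    simp only [hHle, hHlt, Finset.mem_union, Finset.mem_biUnion, Finset.mem_filter,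
      Finset.mem_univ, true_and]
    constructor
    · rintro ⟨a, hak, hae⟩
      rcases lt_or_eq_of_le hak with h | h
      · exact Or.inl ⟨a, h, hae⟩
      · subst h; exact Or.inr hae
    · rintro (⟨a, hak, hae⟩ | h)
      · exact ⟨a, le_of_lt hak, hae⟩
      · exact ⟨k, le_refl k, h⟩
  obtain ⟨l, i, j, hjlen, hl, hlpk, hij, hiff, hfresh⟩ :=
    ear_structure src tgt s t hacyc hs ht D p hp hcov k
  have hchain := hl.2.2.2
  have hilen : i < l.length := by omega
  refine ⟨z (l[i]'hilen), ?_, ?_⟩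
  · have key : ∀ m, i ≤ m → ∀ hm : m < l.length, m ≤ j → z (l[m]'hm) = z (l[i]'hilen) := by
      intro m him
      induction m, him using Nat.le_induction with
      | base => intro _ _; rfl
      | succ m him ih =>
        intro hm1 hm1j
        have hmlen : m < l.length := by omega
        have hmj : m < j := by omega
        have ihv : z (l[m]'hmlen) = z (l[i]'hilen) := ih hmlen (by omega)
        obtain ⟨hfr, hft⟩ := hfresh m hmlen him hmj
        have hfs : tgt (l[m]'hmlen) ≠ s := no_in_s hs
        have hc := hcons _ hfs hft
        -- incoming edges at tgt l[m] : only l[m]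
        have hin : Finset.univ.filter (fun e => tgt e = tgt (l[m]'hmlen)) ∩ Hle = {l[m]'hmlen} := by
          ext e
          simp only [Finset.mem_inter, Finset.mem_filter, Finset.mem_univ, true_and,
            Finset.mem_singleton]
          constructor
          · rintro ⟨het, heH⟩
            rw [hHltHle] at heH
            rcases Finset.mem_union.mp heH with h | h
            · exact absurd het (hfr e h).2
            · obtain ⟨r, hr, rfl⟩ := List.mem_iff_getElem.mp (List.mem_toFinset.mp (hlpk ▸ h))
              have : r = m := tgt_inj hacyc hchain hr hmlen het
              subst this; rfl
          · rintro rfl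
            refine ⟨rfl, ?_⟩
            rw [hHltHle]
            refine Finset.mem_union_right _ ?_
            rw [hlpk]
            exact List.mem_toFinset.mpr (l.getElem_mem hmlen)
        have hout : Finset.univ.filter (fun e => src e = tgt (l[m]'hmlen)) ∩ Hle
            = {l[m+1]'hm1} := by
          ext e
          simp only [Finset.mem_inter, Finset.mem_filter, Finset.mem_univ, true_and,
            Finset.mem_singleton]
          constructor
          · rintro ⟨het, heH⟩
            rw [hHltHle] at heH
            rcases Finset.mem_union.mp heH with h | h
            · exact absurd het (hfr e h).1
            · obtain ⟨r, hr, rfl⟩ := List.mem_iff_getElem.mp (List.mem_toFinset.mp (hlpk ▸ h))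
              have : r = m + 1 := src_eq_tgt_succ hacyc hchain hmlen hr het
              subst this; rfl
          · rintro rfl
            refine ⟨(chain_succ hchain hm1).symm, ?_⟩
            rw [hHltHle]
            refine Finset.mem_union_right _ ?_
            rw [hlpk]
            exact List.mem_toFinset.mpr (l.getElem_mem hm1)
        have hsum1 : ∑ e ∈ Finset.univ.filter (fun e => tgt e = tgt (l[m]'hmlen)), z e
            = z (l[m]'hmlen) := by
          rw [sum_filter_support (K := Hle) hsupp]
          rw [show Hle.filter (fun e => tgt e = tgt (l[m]'hmlen))
            = Finset.univ.filter (fun e => tgt e = tgt (l[m]'hmlen)) ∩ Hle from by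
              ext e; simp [and_comm, Finset.mem_inter], hin, Finset.sum_singleton]
        have hsum2 : ∑ e ∈ Finset.univ.filter (fun e => src e = tgt (l[m]'hmlen)), z e
            = z (l[m+1]'hm1) := by
          rw [sum_filter_support (K := Hle) hsupp]
          rw [show Hle.filter (fun e => src e = tgt (l[m]'hmlen))
            = Finset.univ.filter (fun e => src e = tgt (l[m]'hmlen)) ∩ Hle from by
              ext e; simp [and_comm, Finset.mem_inter], hout, Finset.sum_singleton]
        rw [hsum1, hsum2] at hc
        rw [← hc, ihv]
    intro e he hnew
    obtain ⟨r, hr, rfl⟩ := List.mem_iff_getElem.mp (List.mem_toFinset.mp (hlpk ▸ he))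
    obtain ⟨h1, h2⟩ := (hiff r hr).mp hnew
    exact key r h1 hr h2
  · refine ⟨l[i]'hilen, ?_, ?_, rfl⟩
    · rw [hlpk]
      exact List.mem_toFinset.mpr (l.getElem_mem hilen)
    · exact (hiff i hilen).mpr ⟨le_refl i, hij⟩


lemma biUnion_le_eq {D : ℕ} {E : Type} [DecidableEq E] (p : Fin (D+1) → Finset E)
    (k : Fin (D+1)) :
    (Finset.univ.filter (fun i => i ≤ k)).biUnion p
      = (Finset.univ.filter (fun i => i < k)).biUnion p ∪ p k := by
  ext e
  simp only [Finset.mem_union, Finset.mem_biUnion, Finset.mem_filter,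
    Finset.mem_univ, true_and]
  constructor
  · rintro ⟨a, hak, hae⟩
    rcases lt_or_eq_of_le hak with h | h
    · exact Or.inl ⟨a, h, hae⟩
    · subst h; exact Or.inr hae
  · rintro (⟨a, hak, hae⟩ | h)
    · exact ⟨a, le_of_lt hak, hae⟩
    · exact ⟨k, le_refl k, h⟩

open Classical in
lemma circ_zero {V E : Type} [Fintype V] [Fintype E] [DecidableEq E]
    (src tgt : E → V) (s t : V)
    (hacyc : IsAcyclicDigraph src tgt)
    (hs : IsUniqueSource src tgt s) (ht : IsUniqueSink src tgt t)
    (D : ℕ) (p : Fin (D + 1) → Finset E)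
    (hp : ∀ k, p k ∈ pathEdgeSets src tgt s t)
    (hcov : ∀ k : Fin (D + 1),
      ((Finset.univ.filter (fun i => i < k)).biUnion p) ⊂
        ((Finset.univ.filter (fun i => i ≤ k)).biUnion p) ∧
      ∀ W ∈ unionOfPaths src tgt s t,
        ((Finset.univ.filter (fun i => i < k)).biUnion p) ⊂ W →
        W ⊆ ((Finset.univ.filter (fun i => i ≤ k)).biUnion p) →
        W = ((Finset.univ.filter (fun i => i ≤ k)).biUnion p)) :
    ∀ (n : ℕ) (hn : n < D + 1) (z : E → ℝ),
      (∀ e, e ∉ ((Finset.univ.filter (fun i => i ≤ (⟨n, hn⟩ : Fin (D+1)))).biUnion p) → z e = 0) →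
      (∑ e ∈ Finset.univ.filter (fun e => src e = s), z e = 0) →
      (∀ v : V, v ≠ s → v ≠ t →
        ∑ e ∈ Finset.univ.filter (fun e => tgt e = v), z e =
          ∑ e ∈ Finset.univ.filter (fun e => src e = v), z e) →
      ∃ c : Fin (D + 1) → ℝ, (∑ i, c i = 0) ∧
        ∀ e, z e = ∑ i, c i * (if e ∈ p i then (1 : ℝ) else 0) := by
  intro n
  induction n with
  | zero =>
    intro hn z hsupp hz1 hcons
    obtain ⟨a, ha, e₀, he₀p, he₀new, he₀a⟩ :=
      circ_step src tgt s t hacyc hs ht D p hp hcov ⟨0, hn⟩ z hsupp hcons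
    have hlt0 : ((Finset.univ.filter (fun i => i < (⟨0, hn⟩ : Fin (D+1)))).biUnion p) = ∅ := by
      have h1 : Finset.univ.filter (fun i : Fin (D+1) => i < ⟨0, hn⟩) = ∅ := by
        apply Finset.filter_eq_empty_iff.mpr
        intro i _
        simp [Fin.lt_def]
      rw [h1, Finset.biUnion_empty]
    have hle0 : ((Finset.univ.filter (fun i => i ≤ (⟨0, hn⟩ : Fin (D+1)))).biUnion p)
        = p ⟨0, hn⟩ := by
      rw [biUnion_le_eq, hlt0, Finset.empty_union]
    -- a = 0
    obtain ⟨l, hl, hlnd, hlpk⟩ := hp ⟨0, hn⟩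
    have ha0 : a = 0 := by
      have hsum : ∑ e ∈ Finset.univ.filter (fun e => src e = s), z e
          = z (l[0]'(path_len hl)) := by
        rw [sum_filter_support (K := p ⟨0, hn⟩) (fun e he => hsupp e (by rwa [hle0]))]
        rw [show (p ⟨0, hn⟩).filter (fun e => src e = s) = {l[0]'(path_len hl)} from by
          rw [hlpk]; exact filter_src_s hacyc hs hl, Finset.sum_singleton]
      have hmem : (l[0]'(path_len hl)) ∈ p ⟨0, hn⟩ := by
        rw [hlpk]; exact List.mem_toFinset.mpr (l.getElem_mem _)
      have := ha _ hmem (by rw [hlt0]; exact Finset.notMem_empty _)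
      rw [hsum, this] at hz1
      rw [← hz1]
    have hz0 : ∀ e, z e = 0 := by
      intro e
      by_cases he : e ∈ p ⟨0, hn⟩
      · rw [ha e he (by rw [hlt0]; exact Finset.notMem_empty _), ha0]
      · exact hsupp e (by rw [hle0]; exact he)
    exact ⟨0, by simp, fun e => by rw [hz0]; simp⟩
  | succ n ih =>
    intro hn z hsupp hz1 hcons
    set k : Fin (D+1) := ⟨n+1, hn⟩ with hkdef
    have hn' : n < D + 1 := by omega
    obtain ⟨a, ha, e₀, he₀p, he₀new, he₀a⟩ :=
      circ_step src tgt s t hacyc hs ht D p hp hcov k z hsupp hcons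
    have hlelt : ((Finset.univ.filter (fun i => i ≤ (⟨n, hn'⟩ : Fin (D+1)))).biUnion p)
        = ((Finset.univ.filter (fun i => i < k)).biUnion p) := by
      congr 1
      ext i
      simp only [Finset.mem_filter, Finset.mem_univ, true_and, Fin.le_def, Fin.lt_def, hkdef]
      omega
    have hp0sub : p 0 ⊆ ((Finset.univ.filter (fun i => i < k)).biUnion p) := by
      intro e he
      refine Finset.mem_biUnion.mpr ⟨0, ?_, he⟩
      simp [Fin.lt_def, hkdef]
    obtain ⟨lk, hlk, hlknd, hlkpk⟩ := hp k
    obtain ⟨l0, hl0, hl0nd, hl0pk⟩ := hp 0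
    set z' : E → ℝ := fun e => z e - a * (if e ∈ p k then 1 else 0)
      + a * (if e ∈ p 0 then 1 else 0) with hz'def
    have hz'supp : ∀ e, e ∉ ((Finset.univ.filter
        (fun i => i ≤ (⟨n, hn'⟩ : Fin (D+1)))).biUnion p) → z' e = 0 := by
      intro e he
      rw [hlelt] at he
      have hep0 : e ∉ p 0 := fun hc => he (hp0sub hc)
      by_cases hek : e ∈ p k
      · have : z e = a := ha e hek he
        simp [hz'def, this, hek, hep0]
      · have : z e = 0 := by
          apply hsupp
          rw [show ((Finset.univ.filter (fun i => i ≤ k)).biUnion p)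
            = ((Finset.univ.filter (fun i => i < k)).biUnion p) ∪ p k from biUnion_le_eq p k]
          simp [he, hek]
        simp [hz'def, this, hek, hep0]
    have hz'1 : ∑ e ∈ Finset.univ.filter (fun e => src e = s), z' e = 0 := by
      simp only [hz'def]
      rw [Finset.sum_add_distrib, Finset.sum_sub_distrib, ← Finset.mul_sum, ← Finset.mul_sum]
      rw [show (∑ e ∈ Finset.univ.filter (fun e => src e = s),
          (if e ∈ p k then (1:ℝ) else 0)) = 1 from by
        rw [hlkpk]; exact indicator_flow_s hacyc hs hlk]
      rw [show (∑ e ∈ Finset.univ.filter (fun e => src e = s),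
          (if e ∈ p 0 then (1:ℝ) else 0)) = 1 from by
        rw [hl0pk]; exact indicator_flow_s hacyc hs hl0]
      rw [hz1]
      ring
    have hz'cons : ∀ v : V, v ≠ s → v ≠ t →
        ∑ e ∈ Finset.univ.filter (fun e => tgt e = v), z' e =
          ∑ e ∈ Finset.univ.filter (fun e => src e = v), z' e := by
      intro v hvs hvt
      simp only [hz'def]
      rw [Finset.sum_add_distrib, Finset.sum_sub_distrib, ← Finset.mul_sum, ← Finset.mul_sum,
        Finset.sum_add_distrib, Finset.sum_sub_distrib, ← Finset.mul_sum, ← Finset.mul_sum]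
      rw [hcons v hvs hvt]
      rw [show (∑ e ∈ Finset.univ.filter (fun e => tgt e = v),
          (if e ∈ p k then (1:ℝ) else 0)) = ∑ e ∈ Finset.univ.filter (fun e => src e = v),
          (if e ∈ p k then (1:ℝ) else 0) from by
        rw [hlkpk]; exact indicator_flow_conserve hacyc hs ht hlk hvs hvt]
      rw [show (∑ e ∈ Finset.univ.filter (fun e => tgt e = v),
          (if e ∈ p 0 then (1:ℝ) else 0)) = ∑ e ∈ Finset.univ.filter (fun e => src e = v),
          (if e ∈ p 0 then (1:ℝ) else 0) from by
        rw [hl0pk]; exact indicator_flow_conserve hacyc hs ht hl0 hvs hvt]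
    obtain ⟨c', hc'0, hc'⟩ := ih hn' z' hz'supp hz'1 hz'cons
    refine ⟨fun i => c' i + (if i = k then a else 0) - (if i = 0 then a else 0), ?_, ?_⟩
    · rw [Finset.sum_sub_distrib, Finset.sum_add_distrib, hc'0]
      simp
    · intro e
      have h1 : z e = z' e + a * (if e ∈ p k then 1 else 0)
          - a * (if e ∈ p 0 then 1 else 0) := by
        simp only [hz'def]
        ring
      rw [h1, hc' e]
      rw [show (∑ i, (c' i + (if i = k then a else 0) - (if i = 0 then a else 0))
            * (if e ∈ p i then (1:ℝ) else 0))
          = ∑ i, (c' i * (if e ∈ p i then (1:ℝ) else 0)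
            + (if i = k then a else 0) * (if e ∈ p i then (1:ℝ) else 0)
            - (if i = 0 then a else 0) * (if e ∈ p i then (1:ℝ) else 0)) from by
        apply Finset.sum_congr rfl
        intro i _
        ring]
      rw [Finset.sum_sub_distrib, Finset.sum_add_distrib]
      congr 1
      · congr 1
        rw [show (∑ i, (if i = k then a else 0) * (if e ∈ p i then (1:ℝ) else 0))
            = ∑ i, (if i = k then a * (if e ∈ p i then (1:ℝ) else 0) else 0) from
          Finset.sum_congr rfl (fun i _ => by split <;> simp)]
        rw [Finset.sum_ite_eq' Finset.univ k (fun i => a * (if e ∈ p i then (1:ℝ) else 0))]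
        simp
      · rw [show (∑ i, (if i = 0 then a else 0) * (if e ∈ p i then (1:ℝ) else 0))
            = ∑ i, (if i = 0 then a * (if e ∈ p i then (1:ℝ) else 0) else 0) from
          Finset.sum_congr rfl (fun i _ => by split <;> simp)]
        rw [Finset.sum_ite_eq' Finset.univ 0 (fun i => a * (if e ∈ p i then (1:ℝ) else 0))]
        simp

open Classical in
/-- Given an ear decomposition `∅ = H₋₁ ⋖ H₀ ⋖ … ⋖ H_D = H` in `U(P_G)`, with
`H_k = H_{k-1} ∪ p_k` for `s`-`t` paths `p₀, …, p_D`, every vector satisfying the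
flow equations on `H` (unit total flow out of `s`, conservation at internal
vertices, zero outside `H`; nonnegativity not required) is an affine combination
of the indicator vectors `𝟙(p₀), …, 𝟙(p_D)`. -/
theorem stmt16 (V E : Type) [Fintype V] [Fintype E] [DecidableEq E]
    (src tgt : E → V) (s t : V)
    (hacyc : IsAcyclicDigraph src tgt)
    (hs : IsUniqueSource src tgt s) (ht : IsUniqueSink src tgt t)
    (D : ℕ) (p : Fin (D + 1) → Finset E)
    (hp : ∀ k, p k ∈ pathEdgeSets src tgt s t)
    (hcov : ∀ k : Fin (D + 1),
      ((Finset.univ.filter (fun i => i < k)).biUnion p) ⊂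
        ((Finset.univ.filter (fun i => i ≤ k)).biUnion p) ∧
      ∀ W ∈ unionOfPaths src tgt s t,
        ((Finset.univ.filter (fun i => i < k)).biUnion p) ⊂ W →
        W ⊆ ((Finset.univ.filter (fun i => i ≤ k)).biUnion p) →
        W = ((Finset.univ.filter (fun i => i ≤ k)).biUnion p)) :
    ∀ f : E → ℝ,
      (∀ e, e ∉ Finset.univ.biUnion p → f e = 0) →
      (∑ e ∈ Finset.univ.filter (fun e => src e = s), f e = 1) →
      (∀ v : V, v ≠ s → v ≠ t →
        ∑ e ∈ Finset.univ.filter (fun e => tgt e = v), f e =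
          ∑ e ∈ Finset.univ.filter (fun e => src e = v), f e) →
      ∃ c : Fin (D + 1) → ℝ, ∑ i, c i = 1 ∧
        ∀ e, f e = ∑ i, c i * (if e ∈ p i then (1 : ℝ) else 0) := by
  intro f hfsupp hf1 hfcons
  have hD : D < D + 1 := by omega
  have huniv : Finset.univ.biUnion p
      = (Finset.univ.filter (fun i => i ≤ (⟨D, hD⟩ : Fin (D+1)))).biUnion p := by
    congr 1
    ext i
    simp only [Finset.mem_univ, Finset.mem_filter, true_and, Fin.le_def, true_iff]
    omega
  obtain ⟨l0, hl0, hl0nd, hl0pk⟩ := hp 0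
  set z : E → ℝ := fun e => f e - (if e ∈ p 0 then 1 else 0) with hzdef
  have hzsupp : ∀ e, e ∉ ((Finset.univ.filter
      (fun i => i ≤ (⟨D, hD⟩ : Fin (D+1)))).biUnion p) → z e = 0 := by
    intro e he
    rw [← huniv] at he
    have hef : f e = 0 := hfsupp e he
    have hep0 : e ∉ p 0 := fun hc => he (Finset.mem_biUnion.mpr ⟨0, Finset.mem_univ _, hc⟩)
    simp [hzdef, hef, hep0]
  have hz1 : ∑ e ∈ Finset.univ.filter (fun e => src e = s), z e = 0 := by
    simp only [hzdef]
    rw [Finset.sum_sub_distrib, hf1]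
    rw [show (∑ e ∈ Finset.univ.filter (fun e => src e = s),
        (if e ∈ p 0 then (1:ℝ) else 0)) = 1 from by
      rw [hl0pk]; exact indicator_flow_s hacyc hs hl0]
    ring
  have hzcons : ∀ v : V, v ≠ s → v ≠ t →
      ∑ e ∈ Finset.univ.filter (fun e => tgt e = v), z e =
        ∑ e ∈ Finset.univ.filter (fun e => src e = v), z e := by
    intro v hvs hvt
    simp only [hzdef]
    rw [Finset.sum_sub_distrib, Finset.sum_sub_distrib, hfcons v hvs hvt]
    rw [show (∑ e ∈ Finset.univ.filter (fun e => tgt e = v),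
        (if e ∈ p 0 then (1:ℝ) else 0)) = ∑ e ∈ Finset.univ.filter (fun e => src e = v),
        (if e ∈ p 0 then (1:ℝ) else 0) from by
      rw [hl0pk]; exact indicator_flow_conserve hacyc hs ht hl0 hvs hvt]
  obtain ⟨c', hc'0, hc'⟩ := circ_zero src tgt s t hacyc hs ht D p hp hcov D hD z
    hzsupp hz1 hzcons
  refine ⟨fun i => c' i + (if i = 0 then 1 else 0), ?_, ?_⟩
  · rw [Finset.sum_add_distrib, hc'0]
    simp
  · intro e
    have h1 : f e = z e + (if e ∈ p 0 then (1:ℝ) else 0) := by simp [hzdef]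
    rw [h1, hc' e]
    rw [show (∑ i, (c' i + (if i = 0 then (1:ℝ) else 0)) * (if e ∈ p i then (1:ℝ) else 0))
        = ∑ i, (c' i * (if e ∈ p i then (1:ℝ) else 0)
          + (if i = 0 then (1:ℝ) else 0) * (if e ∈ p i then (1:ℝ) else 0)) from
      Finset.sum_congr rfl (fun i _ => by ring)]
    rw [Finset.sum_add_distrib]
    congr 1
    rw [show (∑ i, (if i = 0 then (1:ℝ) else 0) * (if e ∈ p i then (1:ℝ) else 0))
        = ∑ i, (if i = 0 then (if e ∈ p i then (1:ℝ) else 0) else 0) from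
      Finset.sum_congr rfl (fun i _ => by split <;> simp)]
    rw [Finset.sum_ite_eq' Finset.univ 0 (fun i => if e ∈ p i then (1:ℝ) else 0)]
    simp
end

section
/- Let p₀, p₁, …, p_D be distinct s-t paths in a DAG G arising from an ear decomposition (p_k is the path added at step k, and p_k ∖ (p₀ ∪ … ∪ p_{k−1}) is a nonempty ear). Then the vectors 𝟙(p₁) − 𝟙(p₀), …, 𝟙(p_D) − 𝟙(p₀) ∈ ℝ^{E(G)} are linearly independent. -/
/-- If `s`-`t` paths `p₀, …, p_D` arise from an ear decomposition (each `p_k`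
for `k ≥ 1` contains an arc not in `p₀ ∪ … ∪ p_{k-1}`), then the vectors
`𝟙(p₁) - 𝟙(p₀), …, 𝟙(p_D) - 𝟙(p₀)` are linearly independent. -/
theorem stmt17 (V E : Type) [Fintype V] [Fintype E] [DecidableEq E]
    (src tgt : E → V) (s t : V)
    (hacyc : IsAcyclicDigraph src tgt)
    (hs : IsUniqueSource src tgt s) (ht : IsUniqueSink src tgt t)
    (D : ℕ) (p : Fin (D + 1) → Finset E)
    (hp : ∀ k, p k ∈ pathEdgeSets src tgt s t)
    (hdistinct : Function.Injective p)
    (hear : ∀ k : Fin (D + 1), 0 < k → ∃ e ∈ p k, ∀ i < k, e ∉ p i) :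
    LinearIndependent ℝ (fun k : Fin D =>
      ((fun e => (if e ∈ p k.succ then (1 : ℝ) else 0) -
        (if e ∈ p 0 then (1 : ℝ) else 0)) : E → ℝ)) := by
  classical
  rw [Fintype.linearIndependent_iff]
  intro g hg
  by_contra h
  push_neg at h
  obtain ⟨k0, hk0⟩ := h
  set S : Finset (Fin D) := Finset.univ.filter (fun i => g i ≠ 0) with hS
  have hSne : S.Nonempty := ⟨k0, by simp [hS, hk0]⟩
  set k : Fin D := S.max' hSne with hkdef
  have hkS : k ∈ S := S.max'_mem hSne
  have hgk : g k ≠ 0 := by simpa [hS] using hkS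
  have hmax : ∀ j, g j ≠ 0 → j ≤ k := fun j hj => S.le_max' j (by simp [hS, hj])
  obtain ⟨e, he, hno⟩ := hear k.succ k.succ_pos
  have he0 : e ∉ p 0 := hno 0 k.succ_pos
  have hsum := congrFun hg e
  rw [Finset.sum_apply] at hsum
  simp only [Pi.smul_apply, smul_eq_mul, Pi.zero_apply] at hsum
  have : ∑ i : Fin D, g i * ((if e ∈ p i.succ then (1:ℝ) else 0) -
      (if e ∈ p 0 then (1:ℝ) else 0)) = g k := by
    rw [Finset.sum_eq_single k]
    · simp [he, he0]
    · intro i _ hik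
      by_cases hgi : g i = 0
      · simp [hgi]
      · have hile : i < k := lt_of_le_of_ne (hmax i hgi) hik
        have : e ∉ p i.succ := hno i.succ (by simpa using hile)
        simp [this, he0]
    · intro hk; exact absurd (Finset.mem_univ k) hk
  rw [this] at hsum
  exact hgk hsum
end
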